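/- arXiv:1903.12112 — 8 statements merged into one kernel-verified Lean document; each statement's English description precedes it below -/
import Mathlib

section
/- Let n be a positive integer and let F be a 2-regular graph on the vertex set Z_{2n} ∪ {∞} such that the multiset of differences ΔF = {x − y : {x,y} an edge of F with x,y ≠ ∞} contains every nonzero element of Z_{2n}, and such that F + n = F (where F + g is obtained by adding g to every vertex other than ∞). Then the family {F + g : g ∈ Z_{2n}} is an edge-decomposition of the complete graph K_{2n+1} on Z_{2n} ∪ {∞} into 2n copies of F; in particular every edge of K_{2n+1} lies in exactly one translate F + g. -/
def obTranslate {m : ℕ} (F : SimpleGraph (Option (ZMod m))) (g : ZMod m) :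
    SimpleGraph (Option (ZMod m)) :=
  F.map (Equiv.optionCongr (Equiv.addRight g)).toEmbedding

lemma obAdj {m : ℕ} (F : SimpleGraph (Option (ZMod m))) (g : ZMod m)
    (u v : Option (ZMod m)) :
    (obTranslate F g).Adj u v ↔ F.Adj (u.map (· - g)) (v.map (· - g)) := by
  constructor
  · rintro ⟨-, a, b, h, rfl, rfl⟩
    cases a <;> cases b <;> simpa using h
  · intro h
    refine ⟨fun e => F.ne_of_adj h (by rw [e]), u.map (· - g), v.map (· - g), h, ?_, ?_⟩ <;>
      · cases u <;> cases v <;> simp [sub_add_cancel]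

lemma obTranslate_add {m : ℕ} (F : SimpleGraph (Option (ZMod m))) (a b : ZMod m) :
    obTranslate (obTranslate F a) b = obTranslate F (a + b) := by
  ext u v
  rw [obAdj, obAdj, obAdj]
  cases u <;> cases v <;> simp [sub_sub, add_comm a b]

section
variable (n : ℕ) (hn : 0 < n) (F : SimpleGraph (Option (ZMod (2 * n))))

open Finset in
lemma obKey (hn : 0 < n)
    (hreg : ∀ v, (F.neighborSet v).ncard = 2)
    (hdiff : ∀ d : ZMod (2 * n), d ≠ 0 →
      ∃ x y : ZMod (2 * n), F.Adj (some x) (some y) ∧ x - y = d)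
    (hinv : obTranslate F (n : ZMod (2 * n)) = F) :
    ∀ (u v : Option (ZMod (2 * n))) (h : ZMod (2 * n)), F.Adj u v →
      F.Adj (u.map (· - h)) (v.map (· - h)) → h = 0 ∨ h = (n : ZMod (2 * n)) := by
  classical
  haveI : NeZero (2 * n) := ⟨by omega⟩
  -- basic facts about (n : ZMod (2 * n))
  have hnn : (n : ZMod (2 * n)) + n = 0 := by
    rw [← Nat.cast_add, show n + n = 2 * n by ring, ZMod.natCast_self]
  have hn0 : (n : ZMod (2 * n)) ≠ 0 := by
    intro h
    rw [ZMod.natCast_eq_zero_iff] at h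
    exact absurd (Nat.le_of_dvd hn h) (by omega)
  have hne : ∀ a : ZMod (2 * n), a ≠ a + n := fun a h => hn0 (by linear_combination -h)
  -- shifting by n preserves adjacency
  have hup : ∀ u v : Option (ZMod (2 * n)), F.Adj u v →
      F.Adj (u.map (· + (n : ZMod (2 * n)))) (v.map (· + (n : ZMod (2 * n)))) := by
    intro u v h
    have h2 : (obTranslate F (n : ZMod (2 * n))).Adj (u.map (· + (n : ZMod (2 * n)))) (v.map (· + (n : ZMod (2 * n)))) := by
      rw [obAdj]; cases u <;> cases v <;> simpa using h
    rwa [hinv] at h2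
  -- degree as a finset card
  have hdeg : ∀ v, (univ.filter (F.Adj v ·)).card = 2 := by
    intro v
    have h1 : (F.neighborSet v).toFinset = univ.filter (F.Adj v ·) := by
      ext w; simp only [Set.mem_toFinset, SimpleGraph.mem_neighborSet, Finset.mem_filter, Finset.mem_univ, true_and]
    have := hreg v
    rwa [Set.ncard_eq_toFinset_card', h1] at this
  -- some-neighbors count
  have hBcard : ∀ v : Option (ZMod (2 * n)),
      (univ.filter fun y : ZMod (2 * n) => F.Adj v (some y)).card
        + (if F.Adj v none then 1 else 0) = 2 := by
    intro v
    have hmap : (univ.filter fun y : ZMod (2 * n) => F.Adj v (some y)).map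
        ⟨some, Option.some_injective _⟩ = (univ.filter (F.Adj v ·)).erase none := by
      ext w; cases w <;> simp
    have hc : (univ.filter fun y : ZMod (2 * n) => F.Adj v (some y)).card
        = ((univ.filter (F.Adj v ·)).erase none).card := by
      rw [← hmap, Finset.card_map]
    by_cases h : F.Adj v none
    · rw [if_pos h, hc, Finset.card_erase_add_one (by simp [h]), hdeg]
    · rw [if_neg h, add_zero, hc, Finset.erase_eq_of_notMem (by simp [h]), hdeg]
  set T : Finset (ZMod (2 * n) × ZMod (2 * n)) :=
    univ.filter (fun p => F.Adj (some p.1) (some p.2)) with hTdef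
  have hT1 : T.card + 2 = 4 * n := by
    have hs : T.card = ∑ x : ZMod (2 * n),
        (univ.filter fun y : ZMod (2 * n) => F.Adj (some x) (some y)).card := by
      rw [hTdef, Finset.card_filter, Fintype.sum_prod_type]
      exact Finset.sum_congr rfl fun x _ => (Finset.card_filter _ _).symm
    have hind : (∑ x : ZMod (2 * n), if F.Adj (some x) none then 1 else 0) = 2 := by
      rw [← Finset.sum_filter, Finset.sum_const, smul_eq_mul, mul_one]
      have h2 := hBcard none
      rw [if_neg (F.irrefl), add_zero] at h2
      have h3 : (univ.filter fun x : ZMod (2 * n) => F.Adj (some x) none)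
          = (univ.filter fun y : ZMod (2 * n) => F.Adj none (some y)) := by
        ext x; simp [SimpleGraph.adj_comm]
      rw [h3, h2]
    have hsum2 : (∑ x : ZMod (2 * n),
        ((univ.filter fun y : ZMod (2 * n) => F.Adj (some x) (some y)).card
          + (if F.Adj (some x) none then 1 else 0))) = 2 * (2 * n) := by
      rw [Finset.sum_congr rfl (fun x _ => hBcard (some x)), Finset.sum_const,
        Finset.card_univ, ZMod.card, smul_eq_mul]
      ring
    rw [Finset.sum_add_distrib, hind, ← hs] at hsum2
    omega
  set fib : ZMod (2 * n) → Finset (ZMod (2 * n) × ZMod (2 * n)) :=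
    fun d => T.filter (fun p => p.1 - p.2 = d) with hfibdef
  have hfib_mem : ∀ p ∈ T, p.1 - p.2 ∈ (univ.erase (0 : ZMod (2 * n))) := by
    intro p hp
    rw [hTdef, Finset.mem_filter] at hp
    rw [Finset.mem_erase]
    refine ⟨sub_ne_zero.mpr fun e => F.ne_of_adj hp.2 (by rw [e]), Finset.mem_univ _⟩
  have hsum : ∑ d ∈ univ.erase (0 : ZMod (2 * n)), (fib d).card = T.card :=
    (Finset.card_eq_sum_card_fiberwise hfib_mem).symm
  have hge : ∀ d ∈ univ.erase (0 : ZMod (2 * n)), 2 ≤ (fib d).card := by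
    intro d hd
    obtain ⟨x, y, hxy, hd'⟩ := hdiff d (Finset.mem_erase.mp hd).1
    have h1 : (x, y) ∈ fib d :=
      Finset.mem_filter.mpr ⟨Finset.mem_filter.mpr ⟨Finset.mem_univ _, hxy⟩, hd'⟩
    have h2 : (x + n, y + n) ∈ fib d := by
      have hup2 := hup (some x) (some y) hxy
      simp only [Option.map_some] at hup2
      exact Finset.mem_filter.mpr ⟨Finset.mem_filter.mpr ⟨Finset.mem_univ _, hup2⟩,
        by linear_combination hd'⟩
    exact Finset.one_lt_card.mpr ⟨_, h1, _, h2, by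
      simp only [ne_eq, Prod.mk.injEq, not_and]
      intro hx; exact absurd hx (hne x)⟩
  have herase : (univ.erase (0 : ZMod (2 * n))).card = 2 * n - 1 := by
    rw [Finset.card_erase_of_mem (Finset.mem_univ _), Finset.card_univ, ZMod.card]
  have hall : ∀ d ∈ univ.erase (0 : ZMod (2 * n)), (fib d).card = 2 := by
    have hsc : (∑ _d ∈ univ.erase (0 : ZMod (2 * n)), 2) = T.card := by
      rw [Finset.sum_const, smul_eq_mul, herase]
      omega
    have := (Finset.sum_eq_sum_iff_of_le hge).mp (by rw [hsum, hsc])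
    intro d hd
    exact (this d hd).symm
  have hfib_eq : ∀ x y x' y' : ZMod (2 * n), F.Adj (some x) (some y) →
      F.Adj (some x') (some y') → x - y = x' - y' →
      (x' = x ∧ y' = y) ∨ (x' = x + n ∧ y' = y + n) := by
    intro x y x' y' h h' hdeq
    have hd0 : (x - y) ≠ 0 := sub_ne_zero.mpr fun e => F.ne_of_adj h (by rw [e])
    have hdmem : (x - y) ∈ univ.erase (0 : ZMod (2 * n)) :=
      Finset.mem_erase.mpr ⟨hd0, Finset.mem_univ _⟩
    have hp1 : (x, y) ∈ fib (x - y) :=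
      Finset.mem_filter.mpr ⟨Finset.mem_filter.mpr ⟨Finset.mem_univ _, h⟩, rfl⟩
    have hp2 : (x + n, y + n) ∈ fib (x - y) := by
      have hup2 := hup (some x) (some y) h
      simp only [Option.map_some] at hup2
      exact Finset.mem_filter.mpr ⟨Finset.mem_filter.mpr ⟨Finset.mem_univ _, hup2⟩, by ring⟩
    have hpne : ((x, y) : ZMod (2 * n) × ZMod (2 * n)) ≠ (x + n, y + n) := by
      simp only [ne_eq, Prod.mk.injEq, not_and]
      intro hx; exact absurd hx (hne x)
    have hpair : ({(x, y), (x + n, y + n)} : Finset (ZMod (2 * n) × ZMod (2 * n)))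
        ⊆ fib (x - y) := by
      intro p hp
      rcases Finset.mem_insert.mp hp with h0 | h0
      · rwa [h0]
      · rw [Finset.mem_singleton.mp h0]; exact hp2
    have heq : ({(x, y), (x + n, y + n)} : Finset (ZMod (2 * n) × ZMod (2 * n)))
        = fib (x - y) := by
      apply Finset.eq_of_subset_of_card_le hpair
      rw [hall _ hdmem, Finset.card_pair hpne]
    have hmem' : (x', y') ∈ fib (x - y) :=
      Finset.mem_filter.mpr ⟨Finset.mem_filter.mpr ⟨Finset.mem_univ _, h'⟩, hdeq.symm⟩
    rw [← heq] at hmem'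
    rcases Finset.mem_insert.mp hmem' with h0 | h0
    · left; exact ⟨congrArg Prod.fst h0, congrArg Prod.snd h0⟩
    · right
      have := Finset.mem_singleton.mp h0
      exact ⟨congrArg Prod.fst this, congrArg Prod.snd this⟩
  -- neighbors of infinity
  have hinf : ∃ a : ZMod (2 * n), ∀ b : ZMod (2 * n),
      F.Adj none (some b) → b = a ∨ b = a + n := by
    have hpos : 0 < (univ.filter (F.Adj none ·)).card := by rw [hdeg]; norm_num
    obtain ⟨w, hw⟩ := Finset.card_pos.mp hpos
    rw [Finset.mem_filter] at hw
    obtain ⟨-, hw⟩ := hw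
    match w, hw with
    | none, hw => exact absurd hw (F.irrefl)
    | some a, hw =>
      refine ⟨a, fun b hb => ?_⟩
      have hw2 : F.Adj none (some (a + n)) := by
        have := hup none (some a) hw
        simpa using this
      have hpair : ({some a, some (a + n)} : Finset (Option (ZMod (2 * n))))
          ⊆ univ.filter (F.Adj none ·) := by
        intro p hp
        rcases Finset.mem_insert.mp hp with h0 | h0
        · rw [h0]; simp [hw]
        · rw [Finset.mem_singleton.mp h0]; simp [hw2]
      have hpne : (some a : Option (ZMod (2 * n))) ≠ some (a + n) := by
        simp only [ne_eq, Option.some.injEq]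
        exact hne a
      have heq : ({some a, some (a + n)} : Finset (Option (ZMod (2 * n))))
          = univ.filter (F.Adj none ·) := by
        apply Finset.eq_of_subset_of_card_le hpair
        rw [hdeg, Finset.card_pair hpne]
      have hbmem : (some b : Option (ZMod (2 * n))) ∈ univ.filter (F.Adj none ·) := by
        simp [hb]
      rw [← heq] at hbmem
      rcases Finset.mem_insert.mp hbmem with h0 | h0
      · left; exact Option.some_injective _ h0
      · right; exact Option.some_injective _ (Finset.mem_singleton.mp h0)
  -- main case analysis
  intro u v h hadj hshift
  obtain ⟨a, ha⟩ := hinf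
  match u, v with
  | none, none => exact absurd hadj (F.irrefl)
  | none, some y =>
    simp only [Option.map_none, Option.map_some] at hshift
    rcases ha y hadj with h1 | h1 <;> rcases ha (y - h) hshift with h2 | h2
    · left; linear_combination h1 - h2
    · right; linear_combination h1 - h2 - hnn
    · right; linear_combination h1 - h2
    · left; linear_combination h1 - h2
  | some x, none =>
    simp only [Option.map_none, Option.map_some] at hshift
    rcases ha x hadj.symm with h1 | h1 <;> rcases ha (x - h) hshift.symm with h2 | h2
    · left; linear_combination h1 - h2
    · right; linear_combination h1 - h2 - hnn
    · right; linear_combination h1 - h2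
    · left; linear_combination h1 - h2
  | some x, some y =>
    simp only [Option.map_some] at hshift
    rcases hfib_eq x y (x - h) (y - h) hadj hshift (by ring) with ⟨h1, -⟩ | ⟨h1, -⟩
    · left; linear_combination -h1
    · right; linear_combination -h1 - hnn
end

theorem stmt0 (n : ℕ) (hn : 0 < n) (F : SimpleGraph (Option (ZMod (2 * n))))
    (hreg : ∀ v, (F.neighborSet v).ncard = 2)
    (hdiff : ∀ d : ZMod (2 * n), d ≠ 0 →
      ∃ x y : ZMod (2 * n), F.Adj (some x) (some y) ∧ x - y = d)
    (hinv : obTranslate F (n : ZMod (2 * n)) = F) :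
    ∀ u v : Option (ZMod (2 * n)), u ≠ v →
      (∃ g : ZMod (2 * n), (obTranslate F g).Adj u v) ∧
      (∀ g g' : ZMod (2 * n), (obTranslate F g).Adj u v → (obTranslate F g').Adj u v →
        obTranslate F g = obTranslate F g') := by
  have key := obKey n F hn hreg hdiff hinv
  have hninf : ∃ a : ZMod (2 * n), F.Adj none (some a) := by
    have h2 := hreg none
    have hne : (F.neighborSet none).Nonempty :=
      Set.nonempty_of_ncard_ne_zero (by rw [h2]; norm_num)
    obtain ⟨w, hw⟩ := hne
    rw [SimpleGraph.mem_neighborSet] at hw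
    match w, hw with
    | none, hw => exact absurd hw (F.irrefl)
    | some a, hw => exact ⟨a, hw⟩
  intro u v huv
  constructor
  · -- existence
    match u, v with
    | none, none => exact absurd rfl huv
    | none, some y =>
      obtain ⟨a, ha⟩ := hninf
      refine ⟨y - a, ?_⟩
      rw [obAdj]
      simp only [Option.map_none, Option.map_some]
      rw [show y - (y - a) = a by ring]
      exact ha
    | some x, none =>
      obtain ⟨a, ha⟩ := hninf
      refine ⟨x - a, ?_⟩
      rw [obAdj]
      simp only [Option.map_none, Option.map_some]
      rw [show x - (x - a) = a by ring]
      exact ha.symm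
    | some x, some y =>
      have hxy : x - y ≠ 0 := sub_ne_zero.mpr fun e => huv (by rw [e])
      obtain ⟨p, q, hpq, hd⟩ := hdiff (x - y) hxy
      refine ⟨x - p, ?_⟩
      rw [obAdj]
      simp only [Option.map_some]
      rw [show x - (x - p) = p by ring, show y - (x - p) = q by linear_combination hd]
      exact hpq
  · intro g g' hg hg'
    rw [obAdj] at hg hg'
    have e : ∀ w : Option (ZMod (2 * n)),
        (w.map (· - g)).map (· - (g' - g)) = w.map (· - g') := by
      intro w
      cases w with
      | none => rfl
      | some x => simp only [Option.map_some]; rw [show x - g - (g' - g) = x - g' by ring]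
    have h2 : F.Adj ((u.map (· - g)).map (· - (g' - g)))
        ((v.map (· - g)).map (· - (g' - g))) := by
      rw [e, e]; exact hg'
    rcases key _ _ _ hg h2 with h0 | h0
    · rw [show g' = g by linear_combination h0]
    · have hgg : g + n = g' := by linear_combination -h0
      calc obTranslate F g = obTranslate (obTranslate F (n : ZMod (2 * n))) g := by rw [hinv]
        _ = obTranslate F ((n : ZMod (2 * n)) + g) := obTranslate_add F _ g
        _ = obTranslate F (g + n) := by rw [add_comm]
        _ = obTranslate F g' := by rw [hgg]
end

section
/- Let x be an element of Z_{2n} of order u with u ≡ 2 (mod 4), and define G = {2x·i + j : 0 ≤ i ≤ u/2 − 1, 0 ≤ j ≤ 2n/u − 1} ⊆ Z_{2n}. Then both {G, G + x} and {G, G + n} are partitions of Z_{2n}, i.e., Z_{2n} is the disjoint union of G and G + x, and also the disjoint union of G and G + n. -/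
theorem stmt1 (n : ℕ) (hn : 0 < n) (x : ZMod (2 * n))
    (hu : addOrderOf x % 4 = 2)
    (G : Set (ZMod (2 * n)))
    (hG : G = {z | ∃ i j : ℕ, i < addOrderOf x / 2 ∧ j < 2 * n / addOrderOf x ∧
      z = (2 * i) • x + (j : ZMod (2 * n))}) :
    (G ∪ (fun a => a + x) '' G = Set.univ ∧ Disjoint G ((fun a => a + x) '' G)) ∧
    (G ∪ (fun a => a + (n : ZMod (2 * n))) '' G = Set.univ ∧
      Disjoint G ((fun a => a + (n : ZMod (2 * n))) '' G)) := by
  have hN0 : (2 * n) ≠ 0 := by omega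
  haveI : NeZero (2 * n) := ⟨hN0⟩
  set u := addOrderOf x with hu_def
  have hu2 : u % 2 = 0 := by omega
  have hu0 : 2 ≤ u := by omega
  have hx : ((x.val : ℕ) : ZMod (2 * n)) = x := ZMod.natCast_rightInverse x
  have hord : u = (2 * n) / Nat.gcd (2 * n) x.val := by
    conv_lhs => rw [hu_def, ← hx]
    exact ZMod.addOrderOf_coe x.val hN0
  have hgdvd : Nat.gcd (2 * n) x.val ∣ 2 * n := Nat.gcd_dvd_left _ _
  have hg0 : 0 < Nat.gcd (2 * n) x.val := Nat.gcd_pos_of_pos_left _ (by omega)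
  set m := 2 * n / u with hm_def
  have hmg : m = Nat.gcd (2 * n) x.val := by
    rw [hm_def, hord]
    exact Nat.div_div_self hgdvd hN0
  have hm0 : 0 < m := by omega
  have huN : u ∣ 2 * n := hord ▸ Nat.div_dvd_of_dvd hgdvd
  have hmu : m * u = 2 * n := Nat.div_mul_cancel huN
  have hm2 : 2 * n = 2 * m * (u / 2) := by
    have h2u : 2 * (u / 2) = u := by omega
    calc 2 * n = m * u := hmu.symm
      _ = m * (2 * (u / 2)) := by rw [h2u]
      _ = 2 * m * (u / 2) := by ring
  have hdvd : 2 * m ∣ 2 * n := ⟨u / 2, hm2⟩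
  have hmx : m ∣ x.val := hmg ▸ Nat.gcd_dvd_right _ _
  obtain ⟨t, htx⟩ := hmx
  have hcop : Nat.Coprime t u := by
    have h1 := Nat.gcd_mul_left m u t
    rw [hmu, ← htx] at h1
    have h2 : m * Nat.gcd u t = m * 1 := by rw [mul_one, ← h1, hmg]
    have h3 : Nat.gcd u t = 1 := Nat.eq_of_mul_eq_mul_left hm0 h2
    exact Nat.coprime_comm.mp h3
  have ht_odd : t % 2 = 1 := by
    rcases Nat.mod_two_eq_zero_or_one t with h | h
    · exfalso
      have h2t : (2 : ℕ) ∣ t := ⟨t / 2, by omega⟩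
      have h2u : (2 : ℕ) ∣ u := ⟨u / 2, by omega⟩
      have hd : (2 : ℕ) ∣ 1 := hcop.gcd_eq_one ▸ Nat.dvd_gcd h2t h2u
      omega
    · exact h
  have hrep : ∀ i j : ℕ, (2 * i) • x + (j : ZMod (2 * n)) =
      ((2 * i * x.val + j : ℕ) : ZMod (2 * n)) := by
    intro i j
    have h1 : ((2 * i * x.val + j : ℕ) : ZMod (2 * n)) =
        (2 * i : ℕ) * ((x.val : ℕ) : ZMod (2 * n)) + (j : ZMod (2 * n)) := by
      push_cast; ring
    rw [h1, hx, nsmul_eq_mul]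
  have hGchar : ∀ z : ZMod (2 * n), z ∈ G ↔ z.val % (2 * m) < m := by
    intro z
    rw [hG]
    constructor
    · rintro ⟨i, j, hi, hj, rfl⟩
      rw [hrep i j, ZMod.val_natCast, Nat.mod_mod_of_dvd _ hdvd]
      have he : 2 * i * x.val + j = j + 2 * m * (i * t) := by rw [htx]; ring
      rw [he, Nat.add_mul_mod_self_left, Nat.mod_eq_of_lt (by omega)]
      exact hj
    · intro h
      haveI : NeZero (u / 2) := ⟨by omega⟩
      have hcop2 : Nat.Coprime t (u / 2) := hcop.coprime_dvd_right ⟨2, by omega⟩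
      set q := z.val / (2 * m) with hq
      set j := z.val % (2 * m) with hj
      set i := ((t : ZMod (u / 2))⁻¹ * (q : ZMod (u / 2))).val with hi_def
      have hi : i < u / 2 := ZMod.val_lt _
      have hti : t * i ≡ q [MOD u / 2] := by
        have h1 : ((t * i : ℕ) : ZMod (u / 2)) = ((q : ℕ) : ZMod (u / 2)) := by
          push_cast
          rw [hi_def, ZMod.natCast_rightInverse _, ← mul_assoc,
            ZMod.coe_mul_inv_eq_one t hcop2, one_mul]
        exact (ZMod.natCast_eq_natCast_iff _ _ _).mp h1
      have hmod : 2 * i * x.val + j ≡ z.val [MOD 2 * n] := by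
        have hfin : 2 * i * x.val + j ≡ z.val [MOD 2 * m * (u / 2)] :=
          calc 2 * i * x.val + j = 2 * m * (t * i) + j := by rw [htx]; ring
            _ ≡ 2 * m * q + j [MOD 2 * m * (u / 2)] :=
                (Nat.ModEq.mul_left' (2 * m) hti).add_right j
            _ = z.val := by rw [hq, hj]; exact Nat.div_add_mod _ _
        exact hfin.of_dvd (dvd_of_eq hm2)
      have hz : ((2 * i * x.val + j : ℕ) : ZMod (2 * n)) = z := by
        calc ((2 * i * x.val + j : ℕ) : ZMod (2 * n))
            = ((z.val : ℕ) : ZMod (2 * n)) := (ZMod.natCast_eq_natCast_iff _ _ _).mpr hmod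
          _ = z := ZMod.natCast_rightInverse z
      exact ⟨i, j, hi, by omega, by rw [hrep i j]; exact hz.symm⟩
  have hshift : ∀ s : ZMod (2 * n), s.val % (2 * m) = m →
      ∀ z : ZMod (2 * n), (z.val % (2 * m) < m ↔ ¬ ((z + s).val % (2 * m) < m)) := by
    intro s hs z
    have h1 : (z + s).val % (2 * m) = (z.val % (2 * m) + m) % (2 * m) := by
      rw [ZMod.val_add, Nat.mod_mod_of_dvd _ hdvd, Nat.add_mod, hs]
    have h2 : z.val % (2 * m) < 2 * m := Nat.mod_lt _ (by omega)
    have key : ∀ r : ℕ, r < 2 * m → (r + m) % (2 * m) = if r < m then r + m else r - m := by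
      intro r hr
      split
      · exact Nat.mod_eq_of_lt (by omega)
      · rw [Nat.mod_eq_sub_mod (by omega), Nat.mod_eq_of_lt (by omega)]
        omega
    rw [key (z.val % (2 * m)) h2] at h1
    split at h1 <;> omega
  have main : ∀ s : ZMod (2 * n), s.val % (2 * m) = m →
      (G ∪ (fun a => a + s) '' G = Set.univ ∧ Disjoint G ((fun a => a + s) '' G)) := by
    intro s hs
    constructor
    · ext z
      simp only [Set.mem_univ, iff_true, Set.mem_union, Set.mem_image]
      by_cases hz : z ∈ G
      · exact Or.inl hz
      · refine Or.inr ⟨z - s, ?_, by ring⟩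
        rw [hGchar] at hz ⊢
        have h := hshift s hs (z - s)
        rw [sub_add_cancel] at h
        tauto
    · rw [Set.disjoint_left]
      rintro b hb ⟨a, ha, rfl⟩
      rw [hGchar] at hb ha
      exact (hshift s hs a).mp ha hb
  have hsx : x.val % (2 * m) = m := by
    obtain ⟨k, hk⟩ : ∃ k, t = 2 * k + 1 := ⟨t / 2, by omega⟩
    have h1 : x.val = m + 2 * m * k := by rw [htx, hk]; ring
    rw [h1, Nat.add_mul_mod_self_left, Nat.mod_eq_of_lt (by omega)]
  have hsn : (n : ZMod (2 * n)).val % (2 * m) = m := by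
    rw [ZMod.val_natCast, Nat.mod_mod_of_dvd _ hdvd]
    obtain ⟨k, hk⟩ : ∃ k, u / 2 = 2 * k + 1 := ⟨u / 4, by omega⟩
    have h1 : 2 * n = 2 * (m + 2 * m * k) := by rw [hm2, hk]; ring
    have h2 : n = m + 2 * m * k := by omega
    rw [h2, Nat.add_mul_mod_self_left, Nat.mod_eq_of_lt (by omega)]
  exact ⟨main x hsx, main n hsn⟩
end

section
/- Let n be odd and suppose D_1, …, D_{s+t} are multisets of elements of Z_{2n} with |D_i| = m_i, Σ m_i = n − 1, such that the disjoint union of the ±D_i equals Z_{2n} \ {0, n} (each element exactly once), and such that Σ_{d ∈ D_i} d = n for 1 ≤ i ≤ s and Σ_{d ∈ D_i} d = 0 for s+1 ≤ i ≤ s+t. Then s·n ≡ ⌊n/2⌋ (mod 2); in particular, since n is odd, s ≡ (n−1)/2 (mod 2). -/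
private lemma auxOddRange (n : ℕ) :
    ((Finset.range (2 * n)).filter (fun k => k % 2 = 1)).card = n := by
  induction n with
  | zero => simp
  | succ n ih =>
    have h : 2 * (n + 1) = (2 * n + 1) + 1 := by ring
    rw [h, Finset.range_add_one, Finset.range_add_one, Finset.filter_insert,
      Finset.filter_insert]
    have h1 : (2 * n + 1) % 2 = 1 := by omega
    have h2 : ¬ (2 * n) % 2 = 1 := by omega
    simp only [h1, if_pos, h2, if_neg, if_true]
    rw [Finset.card_insert_of_notMem (by simp)]
    · simp [ih]

private lemma auxCastOne (k : ℕ) : ((k : ZMod 2) = 1) ↔ k % 2 = 1 := by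
  constructor
  · intro h
    rw [← ZMod.natCast_mod] at h
    rcases Nat.mod_two_eq_zero_or_one k with h0 | h1
    · rw [h0] at h; simp at h
    · exact h1
  · intro h
    rw [← ZMod.natCast_mod, h]; simp

theorem stmt6 (n s t : ℕ) (hn : Odd n) (hn0 : 0 < n)
    (D : Fin (s + t) → Multiset (ZMod (2 * n)))
    (m : Fin (s + t) → ℕ) (hm : ∀ i, m i = (D i).card)
    (hsum : ∑ i, m i = n - 1)
    -- the disjoint union of the `±D_i` is `Z_{2n} \ {0, n}`, each element exactly once
    (hcover : ∀ z : ZMod (2 * n),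
      Multiset.count z (∑ i, ((D i) + (D i).map (fun d => -d)))
        = if z = 0 ∨ z = (n : ZMod (2 * n)) then 0 else 1)
    (hS : ∀ i : Fin (s + t), (i : ℕ) < s → (D i).sum = (n : ZMod (2 * n)))
    (hT : ∀ i : Fin (s + t), s ≤ (i : ℕ) → (D i).sum = 0) :
    s * n ≡ n / 2 [MOD 2] ∧ s ≡ (n - 1) / 2 [MOD 2] := by
  haveI : NeZero (2 * n) := ⟨by omega⟩
  have hdvd : (2 : ℕ) ∣ 2 * n := ⟨n, rfl⟩
  set f : ZMod (2 * n) →+* ZMod 2 := ZMod.castHom hdvd (ZMod 2) with hf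
  have hfval : ∀ z : ZMod (2 * n), f z = ((z.val : ℕ) : ZMod 2) := by
    intro z
    rw [hf, ZMod.castHom_apply, ← ZMod.natCast_val]
  set p : ZMod (2 * n) → Prop := fun z => f z = 1 with hp
  set M : Multiset (ZMod (2 * n)) := ∑ i, D i with hM
  set N : Multiset (ZMod (2 * n)) := ∑ i, ((D i) + (D i).map (fun d => -d))
    with hNdef
  -- N = M + M.map neg
  have hN : N = M + M.map (fun d => -d) := by
    rw [hNdef, Finset.sum_add_distrib, hM]
    congr 1
    exact (map_sum (Multiset.mapAddMonoidHom (fun d : ZMod (2 * n) => -d)) D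
      Finset.univ).symm
  -- parity is preserved by negation
  have hpneg : ∀ x : ZMod (2 * n), p (-x) ↔ p x := by
    intro x
    have : ∀ a : ZMod 2, -a = a := by decide
    simp only [hp, map_neg, this]
  -- card of odd part of N = 2 * card of odd part of M
  have fact1 : Multiset.card (N.filter p) = 2 * Multiset.card (M.filter p) := by
    rw [hN, Multiset.filter_add, Multiset.card_add, Multiset.filter_map,
      Multiset.card_map]
    have : Multiset.filter (p ∘ fun d => -d) M = Multiset.filter p M :=
      Multiset.filter_congr (fun x _ => hpneg x)
    rw [this]; ring
  -- the set of odd elements of ZMod (2n)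
  set S : Finset (ZMod (2 * n)) := Finset.univ.filter p with hSdef
  have hScard : S.card = n := by
    refine Eq.trans (Finset.card_bij (fun z _ => ZMod.val z) ?_ ?_ ?_) (auxOddRange n)
    · intro z hz
      simp only [hSdef, Finset.mem_filter, Finset.mem_univ, true_and] at hz
      simp only [Finset.mem_filter, Finset.mem_range]
      refine ⟨ZMod.val_lt z, ?_⟩
      rw [← auxCastOne, ← hfval]
      exact hz
    · intro a ha b hb h
      exact ZMod.val_injective _ h
    · intro k hk
      simp only [Finset.mem_filter, Finset.mem_range] at hk
      refine ⟨(k : ZMod (2 * n)), ?_, ?_⟩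
      · simp only [hSdef, Finset.mem_filter, Finset.mem_univ, true_and, hp]
        rw [hfval, ZMod.val_cast_of_lt hk.1, auxCastOne]
        exact hk.2
      · exact ZMod.val_cast_of_lt hk.1
  have hnmem : (n : ZMod (2 * n)) ∈ S := by
    rw [hSdef, Finset.mem_filter]
    refine ⟨Finset.mem_univ _, ?_⟩
    show f ((n : ℕ) : ZMod (2 * n)) = 1
    rw [map_natCast]
    exact (auxCastOne n).mpr (Nat.odd_iff.mp hn)
  -- card of odd part of N = n - 1
  have fact2 : Multiset.card (N.filter p) = n - 1 := by
    classical
    have hcount : ∀ z : ZMod (2 * n),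
        (N.filter p).count z =
          if p z ∧ ¬(z = 0 ∨ z = (n : ZMod (2 * n))) then 1 else 0 := by
      intro z
      rw [Multiset.count_filter]
      by_cases hz : p z
      · rw [if_pos hz]
        rw [hNdef] at *
        rw [hcover z]
        by_cases hz2 : z = 0 ∨ z = (n : ZMod (2 * n))
        · rw [if_pos hz2, if_neg (by tauto)]
        · rw [if_neg hz2, if_pos ⟨hz, hz2⟩]
      · rw [if_neg hz, if_neg (by tauto)]
    have hcard : Multiset.card (N.filter p)
        = ∑ z : ZMod (2 * n), (N.filter p).count z := by
      rw [Multiset.sum_count_eq_card (fun a _ => Finset.mem_univ a)]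
    rw [hcard]
    have : ∑ z : ZMod (2 * n), (N.filter p).count z
        = (Finset.univ.filter
            (fun z : ZMod (2 * n) =>
              p z ∧ ¬(z = 0 ∨ z = (n : ZMod (2 * n))))).card := by
      rw [Finset.card_filter]
      exact Finset.sum_congr rfl (fun z _ => hcount z)
    rw [this]
    have hzero : ¬ p (0 : ZMod (2 * n)) := by
      show ¬ f 0 = 1
      rw [map_zero]
      decide
    have hfe : Finset.univ.filter
        (fun z : ZMod (2 * n) => p z ∧ ¬(z = 0 ∨ z = (n : ZMod (2 * n))))
        = S.erase (n : ZMod (2 * n)) := by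
      ext z
      rw [Finset.mem_filter, Finset.mem_erase, hSdef, Finset.mem_filter]
      constructor
      · rintro ⟨hu, hz, hno⟩
        exact ⟨fun h => hno (Or.inr h), hu, hz⟩
      · rintro ⟨hzn, hu, hz⟩
        refine ⟨hu, hz, ?_⟩
        rintro (h0 | h1)
        · rw [h0] at hz; exact hzero hz
        · exact hzn h1
    rw [hfe, Finset.card_erase_of_mem hnmem, hScard]
  -- sum of M
  have fact4 : M.sum = ((s * n : ℕ) : ZMod (2 * n)) := by
    have h1 : M.sum = ∑ i, (D i).sum := by
      rw [hM]
      exact Multiset.sum_sum D Finset.univ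
    rw [h1]
    have h2 : ∀ i : Fin (s + t), (D i).sum
        = if (i : ℕ) < s then ((n : ℕ) : ZMod (2 * n)) else 0 := by
      intro i
      by_cases hi : (i : ℕ) < s
      · rw [if_pos hi]; exact hS i hi
      · rw [if_neg hi]; exact hT i (le_of_not_gt hi)
    rw [Finset.sum_congr rfl (fun i _ => h2 i)]
    rw [Fin.sum_univ_eq_sum_range (fun i => if i < s then ((n : ℕ) : ZMod (2 * n)) else 0)]
    rw [Finset.sum_ite, Finset.sum_const, Finset.sum_const_zero, add_zero]
    have : (Finset.range (s + t)).filter (fun i => i < s) = Finset.range s := by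
      ext k; simp only [Finset.mem_filter, Finset.mem_range]; omega
    rw [this, Finset.card_range, nsmul_eq_mul]
    push_cast
    ring
  -- f of sum of M counts odd elements mod 2
  have fact3 : f M.sum = ((Multiset.card (M.filter p) : ℕ) : ZMod 2) := by
    classical
    have hone : ∀ x ∈ M.filter p, f x = 1 := fun x hx =>
      (Multiset.mem_filter.mp hx).2
    have hzero' : ∀ x ∈ M.filter (fun x => ¬ p x), f x = 0 := by
      intro x hx
      have h1 : ¬ p x := (Multiset.mem_filter.mp hx).2
      have h2 : ∀ a : ZMod 2, a ≠ 1 → a = 0 := by decide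
      exact h2 _ h1
    have h1 : ((M.filter p).map f)
        = Multiset.replicate (Multiset.card (M.filter p)) (1 : ZMod 2) := by
      rw [Multiset.map_congr rfl hone, Multiset.map_const']
    have h2 : ((M.filter (fun x => ¬ p x)).map f)
        = Multiset.replicate (Multiset.card (M.filter (fun x => ¬ p x)))
            (0 : ZMod 2) := by
      rw [Multiset.map_congr rfl hzero', Multiset.map_const']
    calc f M.sum
        = ((M.filter p).map f).sum
            + ((M.filter (fun x => ¬ p x)).map f).sum := by
          conv_lhs => rw [← Multiset.filter_add_not p M]
          rw [Multiset.sum_add, map_add, map_multiset_sum, map_multiset_sum]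
      _ = ((Multiset.card (M.filter p) : ℕ) : ZMod 2) := by
          rw [h1, h2, Multiset.sum_replicate, Multiset.sum_replicate]
          simp
  -- put everything together
  have key : ((s * n : ℕ) : ZMod 2)
      = ((Multiset.card (M.filter p) : ℕ) : ZMod 2) := by
    rw [← fact3, fact4, map_natCast]
  have hmod : s * n ≡ Multiset.card (M.filter p) [MOD 2] :=
    (ZMod.natCast_eq_natCast_iff _ _ _).mp key
  have hcnt : 2 * Multiset.card (M.filter p) = n - 1 := by
    rw [← fact1, fact2]
  have hn2 : n % 2 = 1 := Nat.odd_iff.mp hn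
  have hsn : s * n % 2 = s % 2 := by
    obtain ⟨k, hk⟩ := hn
    have h : s * n = 2 * (s * k) + s := by rw [hk]; ring
    omega
  have hmod' : (s * n) % 2 = (Multiset.card (M.filter p)) % 2 := hmod
  constructor
  · show (s * n) % 2 = (n / 2) % 2
    omega
  · show s % 2 = ((n - 1) / 2) % 2
    omega
end

section
/- Let F be a 2-regular graph of order 2n+1 on vertex set Z_{2n} ∪ {∞} with ΔF ⊇ Z_{2n} \ {0}, F + n = F, whose cycle through ∞ has length 3, and let r be the number of even-length cycles of F. Then either n ≡ 0 (mod 4), or (n−1)/2 + r is an even integer. -/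
set_option maxHeartbeats 1000000
set_option linter.unusedSectionVars false

namespace Ob

variable {V : Type*} [Fintype V] [DecidableEq V]

lemma even_card_of_invol : ∀ (N : ℕ) (s : Finset V) (e : V → V), s.card ≤ N →
    (∀ a ∈ s, e a ∈ s) → (∀ a ∈ s, e (e a) = a) → (∀ a ∈ s, e a ≠ a) → Even s.card := by
  intro N
  induction N with
  | zero =>
    intro s e h _ _ _
    simp [Nat.le_zero.mp h]
  | succ N ih =>
    intro s e hcard hmap hinv hne
    rcases s.eq_empty_or_nonempty with rfl | ⟨a, ha⟩
    · simp
    · have hea : e a ∈ s := hmap a ha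
      have hnea : e a ≠ a := hne a ha
      have hmem : e a ∈ s.erase a := Finset.mem_erase.mpr ⟨hnea, hea⟩
      have hc2 : ((s.erase a).erase (e a)).card = s.card - 2 := by
        rw [Finset.card_erase_of_mem hmem, Finset.card_erase_of_mem ha]
        omega
      have hsub : ∀ b ∈ (s.erase a).erase (e a), b ∈ s := by
        intro b hb
        exact Finset.mem_of_mem_erase (Finset.mem_of_mem_erase hb)
      have heven : Even ((s.erase a).erase (e a)).card := by
        apply ih _ e
        · omega
        · intro b hb
          have hbs := hsub b hb
          have hb1 : b ≠ e a := (Finset.mem_erase.mp hb).1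
          have hb2 : b ≠ a := (Finset.mem_erase.mp (Finset.mem_of_mem_erase hb)).1
          refine Finset.mem_erase.mpr ⟨?_, Finset.mem_erase.mpr ⟨?_, hmap b hbs⟩⟩
          · intro h
            exact hb2 (by rw [← hinv b hbs, h, hinv a ha])
          · intro h
            exact hb1 (by rw [← hinv b hbs, h])
        · intro b hb; exact hinv b (hsub b hb)
        · intro b hb; exact hne b (hsub b hb)
      have h2le : 2 ≤ s.card := by
        have : ({e a, a} : Finset V) ⊆ s := by
          intro x hx
          rcases Finset.mem_insert.mp hx with rfl | hx
          · exact hea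
          · rwa [Finset.mem_singleton.mp hx]
        calc 2 = ({e a, a} : Finset V).card := (Finset.card_pair hnea).symm
        _ ≤ s.card := Finset.card_le_card this
      rw [Nat.even_iff] at heven ⊢
      omega

variable {G : SimpleGraph V}

lemma pair_eq_of_ncard_two {s : Set V} (h2 : s.ncard = 2) {a b : V} (ha : a ∈ s) (hb : b ∈ s)
    (hab : a ≠ b) : s = {a, b} := by
  refine (Set.eq_of_subset_of_ncard_le ?_ ?_ (Set.toFinite s)).symm
  · intro x hx
    rcases hx with rfl | hx
    · exact ha
    · rwa [Set.mem_singleton_iff.mp hx]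
  · rw [h2, Set.ncard_pair hab]

open scoped Classical in
noncomputable def oN (G : SimpleGraph V) (c p : V) : V :=
  if h : ∃ w, G.Adj c w ∧ w ≠ p then h.choose else c

lemma oN_adj_ne (hreg : (G.neighborSet c).ncard = 2) (h : G.Adj c p) :
    G.Adj c (oN G c p) ∧ oN G c p ≠ p := by
  have hex : ∃ w, G.Adj c w ∧ w ≠ p := by
    obtain ⟨x, y, hxy, hN⟩ := Set.ncard_eq_two.mp hreg
    have hx : G.Adj c x := by
      have : x ∈ G.neighborSet c := by rw [hN]; exact Set.mem_insert _ _
      exact this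
    have hy : G.Adj c y := by
      have : y ∈ G.neighborSet c := by rw [hN]; exact Set.mem_insert_of_mem _ rfl
      exact this
    by_cases hxp : x = p
    · exact ⟨y, hy, by rw [← hxp]; exact hxy.symm⟩
    · exact ⟨x, hx, hxp⟩
  classical
  rw [oN]
  rw [dif_pos hex]
  exact hex.choose_spec

lemma oN_eq (hreg : (G.neighborSet c).ncard = 2) {w p : V} (h1 : G.Adj c w) (h2 : G.Adj c p)
    (hwp : w ≠ p) : oN G c p = w := by
  obtain ⟨hadj, hne⟩ := oN_adj_ne hreg h2
  obtain ⟨x, y, hxy, hN⟩ := Set.ncard_eq_two.mp hreg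
  have hmem : ∀ {u : V}, G.Adj c u → (u = x ∨ u = y) := by
    intro u hu
    have : u ∈ G.neighborSet c := hu
    rw [hN] at this
    exact this
  rcases hmem h1 with rfl | rfl <;> rcases hmem h2 with rfl | rfl <;>
    rcases hmem hadj with h' | h' <;> simp_all



noncomputable def nxtP (G : SimpleGraph V) : V × V → V × V := fun z => (z.2, oN G z.2 z.1)

lemma nxtP_key (hreg : ∀ v, (G.neighborSet v).ncard = 2) {z : V × V} (h : G.Adj z.1 z.2) :
    nxtP G (Prod.swap (nxtP G z)) = Prod.swap z := by
  have h1 := oN_adj_ne (hreg z.2) h.symm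
  have : oN G z.2 (oN G z.2 z.1) = z.1 :=
    oN_eq (hreg z.2) h.symm h1.1 (Ne.symm h1.2)
  simp only [nxtP, Prod.swap_prod_mk]
  exact Prod.ext rfl this

lemma nxtP_cancel (hreg : ∀ v, (G.neighborSet v).ncard = 2) {a b : V × V}
    (ha : G.Adj a.1 a.2) (hb : G.Adj b.1 b.2) (h : nxtP G a = nxtP G b) : a = b := by
  have h1 : Prod.swap (nxtP G a) = Prod.swap (nxtP G b) := by rw [h]
  have h2 : Prod.swap a = Prod.swap b := by
    rw [← nxtP_key hreg ha, ← nxtP_key hreg hb, h1]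
  have := congrArg Prod.swap h2
  simpa using this

lemma exists_cyc (hreg : ∀ v, (G.neighborSet v).ncard = 2) (v₀ : V) :
    ∃ (k : ℕ) (c : ℕ → V), 3 ≤ k ∧ c 0 = v₀ ∧ (∀ i, c (i + k) = c i) ∧
      (∀ i, G.Adj (c i) (c (i + 1))) ∧
      (∀ i j, i < k → j < k → c i = c j → i = j) ∧
      (∀ i w, G.Adj (c i) w → w = c (i + 1) ∨ w = c (i + k - 1)) := by
  classical
  obtain ⟨u₀, hu₀⟩ : (G.neighborSet v₀).Nonempty := by
    apply Set.nonempty_of_ncard_ne_zero; rw [hreg v₀]; omega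
  set seq : ℕ → V × V := fun i => (nxtP G)^[i] (u₀, v₀) with hseqdef
  have hseq_succ : ∀ i, seq (i + 1) = nxtP G (seq i) := by
    intro i; rw [hseqdef]; exact Function.iterate_succ_apply' _ _ _
  have hadj : ∀ i, G.Adj (seq i).1 (seq i).2 := by
    intro i
    induction i with
    | zero => exact hu₀.symm
    | succ i ih =>
      rw [hseq_succ i]
      exact (oN_adj_ne (hreg (seq i).2) ih.symm).1
  have hfst : ∀ i, (seq (i + 1)).1 = (seq i).2 := by
    intro i; rw [hseq_succ i]; rfl
  have hsnd : ∀ i, (seq (i + 1)).2 = oN G (seq i).2 (seq i).1 := by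
    intro i; rw [hseq_succ i]; rfl
  have hcanc : ∀ i j, seq i = seq j → i ≤ j → seq (j - i) = seq 0 := by
    intro i
    induction i with
    | zero => intro j h _; simpa using h.symm
    | succ i ih =>
      intro j h hij
      obtain ⟨j', rfl⟩ : ∃ j', j = j' + 1 := ⟨j - 1, by omega⟩
      rw [hseq_succ, hseq_succ] at h
      have := nxtP_cancel hreg (hadj i) (hadj j') h
      have h2 := ih j' this (by omega)
      simpa using h2
  obtain ⟨i0, j0, hne0, heq0⟩ := Finite.exists_ne_map_eq_of_infinite seq
  have hP : ∃ kk, 0 < kk ∧ seq kk = seq 0 := by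
    rcases Nat.lt_or_ge i0 j0 with h | h
    · exact ⟨j0 - i0, by omega, hcanc i0 j0 heq0 (by omega)⟩
    · have : j0 < i0 := by omega
      exact ⟨i0 - j0, by omega, hcanc j0 i0 heq0.symm (by omega)⟩
  set k := Nat.find hP with hkdef
  obtain ⟨hkpos, hk0⟩ : 0 < k ∧ seq k = seq 0 := Nat.find_spec hP
  have hmin : ∀ t, 0 < t → t < k → seq t ≠ seq 0 := by
    intro t ht htk hc
    exact Nat.find_min hP htk ⟨ht, hc⟩
  have hper : ∀ i, seq (i + k) = seq i := by
    intro i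
    rw [hseqdef]
    show (nxtP G)^[i + k] (u₀, v₀) = (nxtP G)^[i] (u₀, v₀)
    have hk0' : (nxtP G)^[k] (u₀, v₀) = (u₀, v₀) := hk0
    rw [Function.iterate_add_apply, hk0']
  have hperN : ∀ N, seq (N * k) = seq 0 := by
    intro N
    induction N with
    | zero => simp
    | succ N ih => rw [Nat.succ_mul, hper, ih]
  have hinj : ∀ i j, i < k → j < k → seq i = seq j → i = j := by
    intro i j hik hjk he
    rcases Nat.lt_trichotomy i j with h | h | h
    · have := hcanc i j he (by omega)
      exact absurd this (hmin _ (by omega) (by omega))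
    · exact h
    · have := hcanc j i he.symm (by omega)
      exact absurd this (hmin _ (by omega) (by omega))
  have hH : ∀ (s : ℕ), ∀ t i, seq t = Prod.swap (seq (i + s)) → seq (t + s) = Prod.swap (seq i) := by
    intro s
    induction s with
    | zero => intro t i h; simpa using h
    | succ s ih =>
      intro t i h
      have h1 : seq (i + (s + 1)) = nxtP G (seq (i + s)) := by
        rw [show i + (s + 1) = (i + s) + 1 by omega, hseq_succ]
      rw [h1] at h
      have h2 : seq (t + 1) = Prod.swap (seq (i + s)) := by
        rw [hseq_succ, h]
        exact nxtP_key hreg (hadj (i + s))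
      have := ih (t + 1) i h2
      rw [show t + (s + 1) = (t + 1) + s by omega]
      exact this
  have hnorev : ∀ u, seq u ≠ Prod.swap (seq 0) := by
    intro u hu
    have hcase1 : ∀ w j N, j + w = N * k → u + w = j → False := by
      intro w j N hjw huw
      have hs0 : seq (j + w) = seq 0 := by rw [hjw]; exact hperN N
      have hpre : seq u = Prod.swap (seq (j + w)) := by rw [hs0]; exact hu
      have := hH w u j hpre
      rw [huw] at this
      -- seq j = swap (seq j)
      have hfs : (seq j).1 = (seq j).2 := by
        have := congrArg Prod.fst this
        simpa using this
      have hj := hadj j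
      rw [hfs] at hj
      exact G.loopless.irrefl _ hj
    have hcase2 : ∀ w j N, j + w = N * k → u + w + 1 = j → False := by
      intro w j N hjw huw
      have hs0 : seq (j + w) = seq 0 := by rw [hjw]; exact hperN N
      have hpre : seq u = Prod.swap (seq (j + w)) := by rw [hs0]; exact hu
      have hconc := hH w u j hpre
      -- seq (u+w) = swap (seq (u+w+1))
      rw [← huw] at hconc
      rw [hseq_succ] at hconc
      -- b = swap (nxtP b)
      have hb2 : (seq (u + w)).1 = oN G (seq (u + w)).2 (seq (u + w)).1 := by
        have := congrArg Prod.fst hconc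
        simpa [nxtP] using this
      exact (oN_adj_ne (hreg (seq (u + w)).2) (hadj (u + w)).symm).2 hb2.symm
    rcases Nat.even_or_odd k with hke | hko
    · rcases Nat.even_or_odd u with hue | huo
      · -- M = u * k even, u even
        have hM2 : (u * k) % 2 = 0 := by
          rw [Nat.mul_mod, Nat.even_iff.mp hke]; simp
        have hle : u ≤ u * k := Nat.le_mul_of_pos_right u hkpos
        rw [Nat.even_iff] at hue
        obtain ⟨w, hw⟩ : ∃ w, u + 2 * w = u * k := ⟨(u * k - u) / 2, by omega⟩
        exact hcase1 w (u + w) u (by omega) rfl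
      · -- u odd: M = (u+1)*k
        have hM2 : ((u + 1) * k) % 2 = 0 := by
          rw [Nat.mul_mod, Nat.even_iff.mp hke]; simp
        have hle : u + 1 ≤ (u + 1) * k := Nat.le_mul_of_pos_right (u + 1) hkpos
        rw [Nat.odd_iff] at huo
        obtain ⟨w, hw⟩ : ∃ w, u + 1 + 2 * w = (u + 1) * k :=
          ⟨((u + 1) * k - (u + 1)) / 2, by omega⟩
        exact hcase2 w (u + w + 1) (u + 1) (by omega) rfl
    · -- k odd: M = u * k, parity u*k = u
      have hM2 : (u * k) % 2 = u % 2 := by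
        rw [Nat.odd_iff] at hko
        conv_lhs => rw [Nat.mul_mod, hko]
        omega
      have hle : u ≤ u * k := Nat.le_mul_of_pos_right u hkpos
      obtain ⟨w, hw⟩ : ∃ w, u + 2 * w = u * k := ⟨(u * k - u) / 2, by omega⟩
      exact hcase1 w (u + w) u (by omega) rfl
  have hcinj2 : ∀ i j, i < j → j < k → (seq i).2 = (seq j).2 → False := by
    intro i j hij hjk he
    by_cases hp : (seq i).1 = (seq j).1
    · have : seq i = seq j := Prod.ext hp he
      have := hinj i j (by omega) hjk this
      omega
    · have hrev : seq (j + 1) = Prod.swap (seq i) := by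
        rw [hseq_succ]
        refine Prod.ext ?_ ?_
        · show (seq j).2 = (seq i).2
          exact he.symm
        · show oN G (seq j).2 (seq j).1 = (seq i).1
          apply oN_eq (hreg (seq j).2)
          · rw [← he]; exact (hadj i).symm
          · exact (hadj j).symm
          · exact hp
      have := hH i (j + 1) 0 (by rw [Nat.zero_add]; exact hrev)
      exact hnorev _ this
  have hk1 : k ≠ 1 := by
    intro h
    have h0 := hk0
    rw [h] at h0
    have hfs : (seq 0).1 = (seq 0).2 := by
      have h1 := hfst 0
      rw [h0] at h1
      -- (seq 0).1 = (seq 0).2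
      exact h1
    exact G.loopless.irrefl _ (by have := hadj 0; rwa [hfs] at this)
  have hk2 : k ≠ 2 := by
    intro h
    have h0 := hk0
    rw [h] at h0
    have h1 : (seq 2).1 = (seq 1).2 := hfst 1
    have h2 : (seq 2).1 = (seq 0).1 := by rw [h0]
    have h3 : (seq 1).2 = oN G (seq 0).2 (seq 0).1 := hsnd 0
    have : oN G (seq 0).2 (seq 0).1 = (seq 0).1 := by rw [← h3, ← h1, h2]
    exact (oN_adj_ne (hreg (seq 0).2) (hadj 0).symm).2 this
  refine ⟨k, fun i => (seq i).2, by omega, rfl, ?_, ?_, ?_, ?_⟩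
  · intro i; exact congrArg Prod.snd (hper i)
  · intro i
    have h := hadj (i + 1)
    rwa [hfst i] at h
  · intro i j hik hjk he
    rcases Nat.lt_trichotomy i j with h | h | h
    · exact absurd he (fun hc => hcinj2 i j h hjk hc)
    · exact h
    · exact absurd he.symm (fun hc => hcinj2 j i h hik hc)
  · intro i w hw
    have hp_eq : (seq i).1 = (seq (i + k - 1)).2 := by
      have h1 : (seq (i + k - 1 + 1)).1 = (seq (i + k - 1)).2 := hfst _
      rw [show i + k - 1 + 1 = i + k by omega] at h1
      rw [← h1]
      exact (congrArg Prod.fst (hper i)).symm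
    have hnbr1 : (seq (i + 1)).2 ∈ G.neighborSet (seq i).2 := by
      have h := hadj (i + 1)
      rw [hfst i] at h
      exact h
    have hnbr2 : (seq i).1 ∈ G.neighborSet (seq i).2 := (hadj i).symm
    have hne12 : (seq (i + 1)).2 ≠ (seq i).1 := by
      rw [hsnd i]
      exact (oN_adj_ne (hreg (seq i).2) (hadj i).symm).2
    have hNeq := pair_eq_of_ncard_two (hreg (seq i).2) hnbr1 hnbr2 hne12
    have hwmem : w ∈ G.neighborSet (seq i).2 := hw
    rw [hNeq] at hwmem
    rcases hwmem with h | h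
    · left; exact h
    · right; rw [Set.mem_singleton_iff] at h; rw [h, hp_eq]


section CycProps
variable {k : ℕ} {c : ℕ → V}

lemma c_mul (hper : ∀ i, c (i + k) = c i) : ∀ q r, c (r + q * k) = c r := by
  intro q
  induction q with
  | zero => simp
  | succ q ih =>
    intro r
    rw [Nat.succ_mul, ← Nat.add_assoc, hper, ih]

lemma c_mod (hk : 0 < k) (hper : ∀ i, c (i + k) = c i) (i : ℕ) : c i = c (i % k) := by
  conv_lhs => rw [← Nat.mod_add_div' i k]
  exact c_mul hper (i / k) (i % k)

lemma c_congr (hk : 0 < k) (hper : ∀ i, c (i + k) = c i) {a b : ℕ} (h : a % k = b % k) :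
    c a = c b := by
  rw [c_mod hk hper a, c_mod hk hper b, h]

lemma c_ne_two (hk3 : 3 ≤ k) (hper : ∀ i, c (i + k) = c i)
    (hinj : ∀ i j, i < k → j < k → c i = c j → i = j) (a : ℕ) : c (a + 2) ≠ c a := by
  intro h
  have hk : 0 < k := by omega
  have h2 : c ((a + 2) % k) = c (a % k) := by
    rw [← c_mod hk hper, ← c_mod hk hper]; exact h
  have h3 := hinj _ _ (Nat.mod_lt _ hk) (Nat.mod_lt _ hk) h2
  have h4 : (a + 2) % k = a % k := h3
  have h5 : a + 2 ≡ a [MOD k] := h4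
  have h6 := (Nat.modEq_iff_dvd' (by omega : a ≤ a + 2)).mp h5.symm
  have h7 : a + 2 - a = 2 := by omega
  rw [h7] at h6
  have := Nat.le_of_dvd (by omega) h6
  omega

lemma supp_char (hk : 0 < k) (hper : ∀ i, c (i + k) = c i)
    (hadjc : ∀ i, G.Adj (c i) (c (i + 1)))
    (hcomp : ∀ i w, G.Adj (c i) w → w = c (i + 1) ∨ w = c (i + k - 1)) :
    ∀ v, v ∈ (G.connectedComponentMk (c 0)).supp ↔ ∃ i, i < k ∧ c i = v := by
  have hmem : ∀ i, G.connectedComponentMk (c i) = G.connectedComponentMk (c 0) := by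
    intro i
    induction i with
    | zero => rfl
    | succ i ih =>
      rw [← ih]
      exact SimpleGraph.ConnectedComponent.sound (hadjc i).symm.reachable
  have hreach : ∀ (u w : V) (p : G.Walk u w), (∃ i, c i = u) → ∃ j, c j = w := by
    intro u w p
    induction p with
    | nil => exact id
    | @cons a b w h q ih =>
      rintro ⟨i, rfl⟩
      rcases hcomp i _ h with h' | h'
      · exact ih ⟨i + 1, h'.symm⟩
      · exact ih ⟨i + k - 1, h'.symm⟩
  intro v
  constructor
  · intro hv
    rw [SimpleGraph.ConnectedComponent.mem_supp_iff] at hv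
    have hre : G.Reachable (c 0) v := (SimpleGraph.ConnectedComponent.eq.mp hv).symm
    obtain ⟨p⟩ := hre
    obtain ⟨j, hj⟩ := hreach (c 0) v p ⟨0, rfl⟩
    exact ⟨j % k, Nat.mod_lt _ hk, by rw [← c_mod hk hper j, hj]⟩
  · rintro ⟨i, _, rfl⟩
    exact hmem i

lemma mh1 {k j₀ i X : ℕ} (hk : 1 ≤ k) (h : 2 * i = j₀ + k * X) :
    (j₀ + (k - 1) * i) % k = i % k := by
  have e1 : j₀ + (k - 1) * i + i = j₀ + k * i := by
    have h2 : k - 1 + 1 = k := by omega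
    have h3 : (k - 1) * i + i = (k - 1 + 1) * i := by ring
    rw [h2] at h3
    omega
  have hmi : k * i ≡ 0 [MOD k] := Nat.modEq_zero_iff_dvd.mpr ⟨i, rfl⟩
  have hmX : k * X ≡ 0 [MOD k] := Nat.modEq_zero_iff_dvd.mpr ⟨X, rfl⟩
  have hmain : j₀ + (k - 1) * i + i ≡ i + i [MOD k] := by
    rw [e1, show i + i = 2 * i by ring, h]
    exact Nat.ModEq.add_left j₀ (hmi.trans hmX.symm)
  exact Nat.ModEq.add_right_cancel' i hmain

lemma mh2 {k j₀ i X : ℕ} (hk : 1 ≤ k) (h : 2 * i + 1 = j₀ + k * X) :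
    (j₀ + (k - 1) * i) % k = (i + 1) % k := by
  have e1 : j₀ + (k - 1) * i + i = j₀ + k * i := by
    have h2 : k - 1 + 1 = k := by omega
    have h3 : (k - 1) * i + i = (k - 1 + 1) * i := by ring
    rw [h2] at h3
    omega
  have hmi : k * i ≡ 0 [MOD k] := Nat.modEq_zero_iff_dvd.mpr ⟨i, rfl⟩
  have hmX : k * X ≡ 0 [MOD k] := Nat.modEq_zero_iff_dvd.mpr ⟨X, rfl⟩
  have hmain : j₀ + (k - 1) * i + i ≡ (i + 1) + i [MOD k] := by
    rw [e1, show (i + 1) + i = 2 * i + 1 by ring, h]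
    exact Nat.ModEq.add_left j₀ (hmi.trans hmX.symm)
  exact Nat.ModEq.add_right_cancel' i hmain

lemma Tstr (hk3 : 3 ≤ k) (hper : ∀ i, c (i + k) = c i)
    (hadjc : ∀ i, G.Adj (c i) (c (i + 1)))
    (hinj : ∀ i j, i < k → j < k → c i = c j → i = j)
    (hcomp : ∀ i w, G.Adj (c i) w → w = c (i + 1) ∨ w = c (i + k - 1))
    (T : V → V) (hTadj : ∀ u v, G.Adj (T u) (T v) ↔ G.Adj u v) (hTinv : ∀ v, T (T v) = v)
    {j₀ : ℕ} (hj₀k : j₀ < k) (hj₀ : T (c 0) = c j₀) (hj₀0 : j₀ ≠ 0)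
    (hnofix : ∀ i, T (c i) ≠ c i) (hnoedge : ∀ i, T (c i) ≠ c (i + 1)) :
    (∀ i, T (c i) = c (i + j₀)) ∧ j₀ + j₀ = k := by
  have hk : 0 < k := by omega
  have hTinj : Function.Injective T := Function.LeftInverse.injective hTinv
  have hstep : T (c 1) = c (j₀ + 1) ∨ T (c 1) = c (j₀ + k - 1) := by
    have hadj01 : G.Adj (T (c 0)) (T (c 1)) := (hTadj _ _).mpr (hadjc 0)
    rw [hj₀] at hadj01
    exact hcomp j₀ _ hadj01
  rcases hstep with hA | hB
  · -- rotation case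
    have main : ∀ i, T (c i) = c (i + j₀) ∧ T (c (i + 1)) = c (i + 1 + j₀) := by
      intro i
      induction i with
      | zero =>
        constructor
        · rw [hj₀]; congr 1; omega
        · rw [hA]; congr 1; omega
      | succ i ih =>
        have hadjT : G.Adj (c (i + 1 + j₀)) (T (c (i + 1 + 1))) := by
          have h := (hTadj (c (i + 1)) (c (i + 1 + 1))).mpr (hadjc (i + 1))
          rwa [ih.2] at h
        rcases hcomp (i + 1 + j₀) _ hadjT with h1 | h2
        · refine ⟨ih.2, ?_⟩
          rw [h1]; congr 1; omega
        · exfalso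
          have he : c (i + 1 + j₀ + k - 1) = c (i + j₀) := by
            rw [show i + 1 + j₀ + k - 1 = (i + j₀) + k by omega, hper]
          rw [he, ← ih.1] at h2
          exact c_ne_two hk3 hper hinj i (hTinj h2)
    have h2j : c (j₀ + j₀) = c 0 := by
      have h := (main j₀).1
      rw [← hj₀, hTinv] at h
      exact h.symm
    have hdvd : k ∣ j₀ + j₀ := by
      have hmm : c ((j₀ + j₀) % k) = c (0 % k) := by
        rw [← c_mod hk hper, ← c_mod hk hper]; exact h2j
      have h3 := hinj _ _ (Nat.mod_lt _ hk) (Nat.mod_lt _ hk) hmm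
      rw [Nat.zero_mod] at h3
      exact Nat.dvd_of_mod_eq_zero h3
    refine ⟨fun i => (main i).1, ?_⟩
    obtain ⟨q, hq⟩ := hdvd
    rcases Nat.lt_or_ge q 2 with hq2 | hq2
    · interval_cases q <;> omega
    · exfalso
      have hge : k * 2 ≤ k * q := Nat.mul_le_mul_left k hq2
      omega
  · -- reflection case: impossible
    exfalso
    have main : ∀ i, T (c i) = c (j₀ + (k - 1) * i) ∧
        T (c (i + 1)) = c (j₀ + (k - 1) * (i + 1)) := by
      intro i
      induction i with
      | zero =>
        constructor
        · rw [hj₀]; simp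
        · rw [hB]; congr 1
          have : (k - 1) * 1 = k - 1 := by ring
          omega
      | succ i ih =>
        have hadjT : G.Adj (c (j₀ + (k - 1) * (i + 1))) (T (c (i + 1 + 1))) := by
          have h := (hTadj (c (i + 1)) (c (i + 1 + 1))).mpr (hadjc (i + 1))
          rwa [ih.2] at h
        rcases hcomp (j₀ + (k - 1) * (i + 1)) _ hadjT with h1 | h2
        · exfalso
          have hidx : j₀ + (k - 1) * (i + 1) + 1 = (j₀ + (k - 1) * i) + k := by
            have h1' : (k - 1) * (i + 1) = (k - 1) * i + (k - 1) := by ring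
            omega
          rw [hidx, hper, ← ih.1] at h1
          exact c_ne_two hk3 hper hinj i (hTinj h1)
        · refine ⟨ih.2, ?_⟩
          rw [h2]; congr 1
          have h2' : (k - 1) * (i + 1 + 1) = (k - 1) * (i + 1) + (k - 1) := by ring
          omega
    rcases Nat.even_or_odd k with hke | hko
    · rcases Nat.even_or_odd j₀ with hje | hjo
      · -- j₀ = 2J : fixed point
        obtain ⟨J, hJ⟩ := hje
        have hmod := mh1 (i := J) (X := 0) (j₀ := j₀) (by omega : 1 ≤ k) (by omega)
        have := (main J).1
        rw [c_congr hk hper hmod] at this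
        exact hnofix J this
      · -- j₀ = 2J+1 : fixed edge
        obtain ⟨J, hJ⟩ := hjo
        have hmod := mh2 (i := J) (X := 0) (j₀ := j₀) (by omega : 1 ≤ k) (by omega)
        have := (main J).1
        rw [c_congr hk hper hmod] at this
        exact hnoedge J this
    · -- k odd : fixed point
      obtain ⟨K, hK⟩ := hko
      have heq : 2 * ((K + 1) * j₀) = j₀ + k * j₀ := by
        rw [hK]; ring
      have hmod := mh1 (by omega : 1 ≤ k) heq
      have := (main ((K + 1) * j₀)).1
      rw [c_congr hk hper hmod] at this
      exact hnofix _ this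

end CycProps
end Ob
open Ob in
theorem stmt7 (n : ℕ) (hn : 0 < n) (F : SimpleGraph (Option (ZMod (2 * n))))
    (hreg : ∀ v, (F.neighborSet v).ncard = 2)
    (hdiff : ∀ d : ZMod (2 * n), d ≠ 0 →
      ∃ x y : ZMod (2 * n), F.Adj (some x) (some y) ∧ x - y = d)
    (hinv : obTranslate F (n : ZMod (2 * n)) = F)
    -- the cycle of `F` through `∞` has length 3
    (hinf3 : (F.connectedComponentMk none).supp.ncard = 3)
    -- `r` is the number of even-length cycles of `F`
    (r : ℕ) (hr : r = {c : F.ConnectedComponent | Even c.supp.ncard}.ncard) :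
    n % 4 = 0 ∨ Even ((n - 1) / 2 + r) := by
  classical
  haveI : NeZero (2 * n) := ⟨by omega⟩
  set ν : ZMod (2 * n) := (n : ZMod (2 * n)) with hνdef
  have hν0 : ν ≠ 0 := by
    intro h
    rw [hνdef, ZMod.natCast_eq_zero_iff] at h
    have := Nat.le_of_dvd hn h
    omega
  have hνν : ν + ν = 0 := by
    rw [hνdef, ← Nat.cast_add, show n + n = 2 * n by ring, ZMod.natCast_self]
  have hxν : ∀ x : ZMod (2 * n), x + ν ≠ x := by
    intro x h
    exact hν0 (by linear_combination h)
  set t : Option (ZMod (2 * n)) ≃ Option (ZMod (2 * n)) :=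
    Equiv.optionCongr (Equiv.addRight ν) with htdef
  have ht_some : ∀ x, t (some x) = some (x + ν) := fun x => rfl
  have ht_none : t none = none := rfl
  have hA : ∀ u v, F.Adj (t u) (t v) ↔ F.Adj u v := by
    intro u v
    constructor
    · intro h
      rw [← hinv, obTranslate, SimpleGraph.map_adj] at h
      obtain ⟨u', v', h', hu', hv'⟩ := h
      rw [Equiv.coe_toEmbedding] at hu' hv'
      rwa [← t.injective hu', ← t.injective hv']
    · intro h
      conv => rw [← hinv]
      rw [obTranslate, SimpleGraph.map_adj]
      exact ⟨u, v, h, rfl, rfl⟩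
  have htt : ∀ v, t (t v) = v := by
    intro v
    cases v with
    | none => rfl
    | some x => rw [ht_some, ht_some, add_assoc, hνν, add_zero]
  haveI : Fintype F.ConnectedComponent := Fintype.ofFinite _
  set φiso : F ≃g F := ⟨t, by intro u v; exact hA u v⟩ with hφdef
  set Tc : F.ConnectedComponent → F.ConnectedComponent :=
    SimpleGraph.ConnectedComponent.map φiso.toHom with hTcdef
  have hTc_mk : ∀ v, Tc (F.connectedComponentMk v) = F.connectedComponentMk (t v) :=
    fun v => rfl
  have hTcTc : ∀ K, Tc (Tc K) = K := by
    refine SimpleGraph.ConnectedComponent.ind (fun v => ?_)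
    rw [hTc_mk, hTc_mk, htt]
  set Kinf : F.ConnectedComponent := F.connectedComponentMk none with hKinfdef
  have hTcKinf : Tc Kinf = Kinf := by rw [hKinfdef, hTc_mk, ht_none]
  have hmk_adj : ∀ u v, F.Adj u v → F.connectedComponentMk u = F.connectedComponentMk v := by
    intro u v h
    exact SimpleGraph.ConnectedComponent.sound h.reachable
  -- ===================== Part A : triangle =====================
  have hnone_mem : none ∈ Kinf.supp := by rw [SimpleGraph.ConnectedComponent.mem_supp_iff]
  obtain ⟨v, w, hvw, hvn, hwn, hsupp3⟩ :
      ∃ v w, v ≠ w ∧ v ≠ none ∧ w ≠ none ∧ Kinf.supp = {none, v, w} := by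
    obtain ⟨x, y, z, hxy, hxz, hyz, hset⟩ := Set.ncard_eq_three.mp hinf3
    rw [hset] at hnone_mem
    simp only [Set.mem_insert_iff, Set.mem_singleton_iff] at hnone_mem
    rcases hnone_mem with h | h | h
    · subst h
      exact ⟨y, z, hyz, hxy.symm, hxz.symm, hset⟩
    · subst h
      refine ⟨x, z, hxz, hxy, hyz.symm, ?_⟩
      rw [hset]; ext u; simp; tauto
    · subst h
      refine ⟨x, y, hxy, hxz, hyz, ?_⟩
      rw [hset]; ext u; simp; tauto
  have hvmem : v ∈ Kinf.supp := by rw [hsupp3]; right; left; rfl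
  have hwmem : w ∈ Kinf.supp := by rw [hsupp3]; right; right; rfl
  have hsupp_T : ∀ (K : F.ConnectedComponent) u, u ∈ K.supp → t u ∈ (Tc K).supp := by
    intro K u hu
    rw [SimpleGraph.ConnectedComponent.mem_supp_iff] at hu ⊢
    rw [← hu, hTc_mk]
  have ht_ne_self : ∀ u : Option (ZMod (2 * n)), u ≠ none → t u ≠ u := by
    intro u hu
    obtain ⟨b, rfl⟩ := Option.ne_none_iff_exists'.mp hu
    rw [ht_some]
    intro hc
    exact hxν b (Option.some_injective _ hc)
  have ht_ne_none : ∀ u : Option (ZMod (2 * n)), u ≠ none → t u ≠ none := by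
    intro u hu
    obtain ⟨b, rfl⟩ := Option.ne_none_iff_exists'.mp hu
    rw [ht_some]
    simp
  have htv : t v = w := by
    have h1 : t v ∈ Kinf.supp := by rw [← hTcKinf]; exact hsupp_T _ _ hvmem
    rw [hsupp3] at h1
    rcases h1 with h | h | h
    · exact absurd h (ht_ne_none v hvn)
    · exact absurd h (ht_ne_self v hvn)
    · exact h
  obtain ⟨a, rfl⟩ := Option.ne_none_iff_exists'.mp hvn
  have hwa : w = some (a + ν) := by rw [← htv, ht_some]
  -- neighbor sets in the triangle
  have hnbr_supp : ∀ u u', F.Adj u u' → u ∈ Kinf.supp → u' ∈ Kinf.supp := by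
    intro u u' h hu
    rw [SimpleGraph.ConnectedComponent.mem_supp_iff] at hu ⊢
    rw [← hmk_adj u u' h, hu]
  have hNinf : F.neighborSet none = {some a, w} := by
    refine Set.eq_of_subset_of_ncard_le ?_ ?_ (Set.toFinite _)
    · intro u hu
      have h1 : u ∈ Kinf.supp := hnbr_supp none u hu hnone_mem
      have h2 : u ≠ none := fun h => F.loopless.irrefl none (h ▸ hu)
      rw [hsupp3] at h1
      rcases h1 with h | h | h
      · exact absurd h h2
      · exact Or.inl h
      · exact Or.inr h
    · rw [hreg, Set.ncard_pair hvw]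
  have hNv : F.neighborSet (some a) = {none, w} := by
    refine Set.eq_of_subset_of_ncard_le ?_ ?_ (Set.toFinite _)
    · intro u hu
      have h1 : u ∈ Kinf.supp := hnbr_supp _ u hu hvmem
      have h2 : u ≠ some a := fun h => F.loopless.irrefl (some a) (h ▸ hu)
      rw [hsupp3] at h1
      rcases h1 with h | h | h
      · exact Or.inl h
      · exact absurd h h2
      · exact Or.inr h
    · rw [hreg, Set.ncard_pair hwn.symm]
  have hNw : F.neighborSet w = {none, some a} := by
    refine Set.eq_of_subset_of_ncard_le ?_ ?_ (Set.toFinite _)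
    · intro u hu
      have h1 : u ∈ Kinf.supp := hnbr_supp _ u hu hwmem
      have h2 : u ≠ w := fun h => F.loopless.irrefl w (h ▸ hu)
      rw [hsupp3] at h1
      rcases h1 with h | h | h
      · exact Or.inl h
      · exact Or.inr h
      · exact absurd h h2
    · rw [hreg, Set.ncard_pair hvn.symm]
  have hadj_vw : F.Adj (some a) w := by
    have : w ∈ F.neighborSet (some a) := by rw [hNv]; right; rfl
    exact this
  have hadj_aν : F.Adj (some a) (some (a + ν)) := by rwa [hwa] at hadj_vw
  have hadj_inf_v : F.Adj none (some a) := by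
    have hmem : some a ∈ F.neighborSet none := by rw [hNinf]; exact Set.mem_insert _ _
    exact hmem
  have hadj_inf_w : F.Adj none (some (a + ν)) := by
    have hmem : some (a + ν) ∈ F.neighborSet none := by
      rw [hNinf, hwa]; exact Set.mem_insert_of_mem _ rfl
    exact hmem
  -- ===================== Part B : difference counting =====================
  set φ : ZMod (2 * n) →+* ZMod 2 := ZMod.castHom ⟨n, rfl⟩ (ZMod 2) with hφmapdef
  have hφν : φ ν = (n : ZMod 2) := map_natCast φ n
  have hZ2 : ∀ a b : ZMod 2, a ≠ b ↔ a - b = 1 := by decide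
  set SD : ZMod (2 * n) → Finset (ZMod (2 * n) × ZMod (2 * n)) :=
    fun d => Finset.univ.filter (fun z => F.Adj (some z.1) (some z.2) ∧ z.1 - z.2 = d) with hSDdef
  set AdjP : Finset (ZMod (2 * n) × ZMod (2 * n)) :=
    Finset.univ.filter (fun z => F.Adj (some z.1) (some z.2)) with hAdjPdef
  have hcards : (Finset.univ : Finset (ZMod (2 * n))).card = 2 * n := by
    rw [Finset.card_univ, ZMod.card]
  have hdeg : ∀ x : ZMod (2 * n),
      (Finset.univ.filter (fun y => F.Adj (some x) (some y))).card
        + (if F.Adj none (some x) then 1 else 0) = 2 := by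
    intro x
    have hn2 : (Finset.univ.filter
        (fun u : Option (ZMod (2 * n)) => F.Adj (some x) u)).card = 2 := by
      have h := hreg (some x)
      have hset : F.neighborSet (some x) = {u | F.Adj (some x) u} := rfl
      rwa [hset, Set.ncard_eq_toFinset_card', Set.toFinset_setOf] at h
    rw [← Finset.card_filter_add_card_filter_not
      (p := fun u : Option (ZMod (2 * n)) => u = none)] at hn2
    have h1 : ((Finset.univ.filter (fun u : Option (ZMod (2 * n)) => F.Adj (some x) u)).filter
        (fun u => u = none)).card = (if F.Adj none (some x) then 1 else 0) := by
      by_cases hax : F.Adj none (some x)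
      · rw [if_pos hax]
        have he : (Finset.univ.filter
            (fun u : Option (ZMod (2 * n)) => F.Adj (some x) u)).filter
            (fun u => u = none) = {none} := by
          ext u
          simp only [Finset.mem_filter, Finset.mem_univ, true_and, Finset.mem_singleton]
          constructor
          · rintro ⟨_, rfl⟩; rfl
          · rintro rfl; exact ⟨hax.symm, rfl⟩
        rw [he, Finset.card_singleton]
      · rw [if_neg hax]
        have he : (Finset.univ.filter
            (fun u : Option (ZMod (2 * n)) => F.Adj (some x) u)).filter
            (fun u => u = none) = ∅ := by
          ext u
          simp only [Finset.mem_filter, Finset.mem_univ, true_and, Finset.notMem_empty,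
            iff_false, not_and]
          rintro h' rfl
          exact hax h'.symm
        rw [he, Finset.card_empty]
    have h2 : ((Finset.univ.filter (fun u : Option (ZMod (2 * n)) => F.Adj (some x) u)).filter
        (fun u => ¬ u = none)).card
        = (Finset.univ.filter (fun y => F.Adj (some x) (some y))).card := by
      have he : ((Finset.univ.filter (fun u : Option (ZMod (2 * n)) => F.Adj (some x) u)).filter
          (fun u => ¬ u = none))
          = (Finset.univ.filter (fun y => F.Adj (some x) (some y))).image some := by
        ext u
        cases u with
        | none => simp
        | some y => simp
      rw [he, Finset.card_image_of_injective _ (Option.some_injective _)]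
    omega
  have hEdgesInf : (Finset.univ.filter (fun x : ZMod (2 * n) => F.Adj none (some x))).card
      = 2 := by
    have he : (Finset.univ.filter (fun x : ZMod (2 * n) => F.Adj none (some x)))
        = {a, a + ν} := by
      ext y
      simp only [Finset.mem_filter, Finset.mem_univ, true_and, Finset.mem_insert,
        Finset.mem_singleton]
      constructor
      · intro h
        have hmem : (some y) ∈ F.neighborSet none := h
        rw [hNinf, hwa] at hmem
        rcases hmem with h' | h'
        · left; exact Option.some_injective _ h'
        · right; exact Option.some_injective _ h'
      · rintro (rfl | rfl)
        · exact hadj_inf_v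
        · exact hadj_inf_w
    rw [he, Finset.card_insert_of_notMem (by
      simp only [Finset.mem_singleton]; exact fun h => hxν a h.symm), Finset.card_singleton]
  have hAdjP_card : AdjP.card + 2 = 4 * n := by
    have hfib := Finset.card_eq_sum_card_fiberwise
      (f := fun z : ZMod (2 * n) × ZMod (2 * n) => z.1) (s := AdjP) (t := Finset.univ)
      (fun z _ => Finset.mem_univ _)
    have hfibx : ∀ x : ZMod (2 * n), (AdjP.filter (fun z => z.1 = x)).card =
        (Finset.univ.filter (fun y => F.Adj (some x) (some y))).card := by
      intro x
      apply Finset.card_bij (fun z _ => z.2)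
      · intro z hz
        simp only [hAdjPdef, Finset.filter_filter, Finset.mem_filter, Finset.mem_univ,
          true_and] at hz ⊢
        obtain ⟨h1, h2⟩ := hz
        rw [← h2]; exact h1
      · intro z1 h1 z2 h2 he
        simp only [hAdjPdef, Finset.filter_filter, Finset.mem_filter, Finset.mem_univ,
          true_and] at h1 h2
        exact Prod.ext (h1.2.trans h2.2.symm) he
      · intro y hy
        simp only [Finset.mem_filter, Finset.mem_univ, true_and] at hy
        refine ⟨(x, y), ?_, rfl⟩
        simp only [hAdjPdef, Finset.filter_filter, Finset.mem_filter, Finset.mem_univ, true_and]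
        exact ⟨hy, trivial⟩
    have hsum : ∑ x : ZMod (2 * n), ((Finset.univ.filter
        (fun y => F.Adj (some x) (some y))).card
        + (if F.Adj none (some x) then 1 else 0)) = 2 * (2 * n) := by
      rw [Finset.sum_congr rfl (fun x _ => hdeg x), Finset.sum_const, hcards, smul_eq_mul]
      ring
    rw [Finset.sum_add_distrib] at hsum
    have hindsum : (∑ x : ZMod (2 * n), if F.Adj none (some x) then 1 else 0) = 2 := by
      have h' := hEdgesInf
      rw [Finset.card_filter] at h'
      exact h'
    have hA1 : AdjP.card = ∑ x : ZMod (2 * n),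
        (Finset.univ.filter (fun y => F.Adj (some x) (some y))).card := by
      rw [hfib]
      exact Finset.sum_congr rfl (fun x _ => hfibx x)
    omega
  have hSD2 : ∀ d : ZMod (2 * n), d ≠ 0 → (SD d).card = 2 := by
    have hmaps : ∀ z ∈ AdjP, z.1 - z.2 ∈ Finset.univ.erase (0 : ZMod (2 * n)) := by
      intro z hz
      simp only [hAdjPdef, Finset.mem_filter, Finset.mem_univ, true_and] at hz
      refine Finset.mem_erase.mpr ⟨?_, Finset.mem_univ _⟩
      intro h
      have heq : z.1 = z.2 := sub_eq_zero.mp h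
      rw [← heq] at hz
      exact F.loopless.irrefl _ hz
    have hfib2 := Finset.card_eq_sum_card_fiberwise hmaps
    have hfd : ∀ d, AdjP.filter (fun z => z.1 - z.2 = d) = SD d := by
      intro d
      ext z
      simp only [hAdjPdef, hSDdef, Finset.filter_filter, Finset.mem_filter]
    have hge : ∀ d ∈ Finset.univ.erase (0 : ZMod (2 * n)), 2 ≤ (SD d).card := by
      intro d hd
      obtain ⟨x, y, hadj, hxyd⟩ := hdiff d (Finset.mem_erase.mp hd).1
      have hm1 : (x, y) ∈ SD d := by
        simp only [hSDdef, Finset.mem_filter, Finset.mem_univ, true_and]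
        exact ⟨hadj, hxyd⟩
      have hm2 : (x + ν, y + ν) ∈ SD d := by
        have hadj2 : F.Adj (some (x + ν)) (some (y + ν)) := by
          rw [← ht_some, ← ht_some]; exact (hA _ _).mpr hadj
        simp only [hSDdef, Finset.mem_filter, Finset.mem_univ, true_and]
        exact ⟨hadj2, by linear_combination hxyd⟩
      have hnepair : ((x, y) : _ × _) ≠ (x + ν, y + ν) := by
        intro h
        exact hxν x (congrArg Prod.fst h).symm
      have hss : ({(x, y), (x + ν, y + ν)} : Finset _) ⊆ SD d := by
        intro z hz
        rcases Finset.mem_insert.mp hz with rfl | hz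
        · exact hm1
        · rw [Finset.mem_singleton.mp hz]; exact hm2
      calc 2 = ({(x, y), (x + ν, y + ν)} : Finset _).card := (Finset.card_pair hnepair).symm
      _ ≤ _ := Finset.card_le_card hss
    have htot : ∑ d ∈ Finset.univ.erase (0 : ZMod (2 * n)), (SD d).card = AdjP.card := by
      rw [hfib2]
      exact (Finset.sum_congr rfl (fun d _ => congrArg Finset.card (hfd d))).symm
    have hcard_erase : (Finset.univ.erase (0 : ZMod (2 * n))).card = 2 * n - 1 := by
      rw [Finset.card_erase_of_mem (Finset.mem_univ _), hcards]
    intro d hd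
    have hdm : d ∈ Finset.univ.erase (0 : ZMod (2 * n)) :=
      Finset.mem_erase.mpr ⟨hd, Finset.mem_univ _⟩
    have hsplit : (SD d).card
        + ∑ d' ∈ (Finset.univ.erase (0 : ZMod (2 * n))).erase d, (SD d').card
        = ∑ d' ∈ Finset.univ.erase (0 : ZMod (2 * n)), (SD d').card :=
      Finset.add_sum_erase _ (fun d => (SD d).card) hdm
    have hboundrest : ((Finset.univ.erase (0 : ZMod (2 * n))).erase d).card • 2 ≤
        ∑ d' ∈ (Finset.univ.erase (0 : ZMod (2 * n))).erase d, (SD d').card :=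
      Finset.card_nsmul_le_sum _ _ _ (fun d' hd' => hge d' (Finset.mem_of_mem_erase hd'))
    have hcard_erase2 : ((Finset.univ.erase (0 : ZMod (2 * n))).erase d).card = 2 * n - 2 := by
      rw [Finset.card_erase_of_mem hdm, hcard_erase]
      omega
    rw [smul_eq_mul, hcard_erase2] at hboundrest
    have h2d := hge d hdm
    omega
  have hSDν : SD ν = {(a + ν, a), (a, a + ν)} := by
    have hm1 : (a + ν, a) ∈ SD ν := by
      simp only [hSDdef, Finset.mem_filter, Finset.mem_univ, true_and]
      exact ⟨hadj_aν.symm, by ring⟩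
    have hm2 : (a, a + ν) ∈ SD ν := by
      simp only [hSDdef, Finset.mem_filter, Finset.mem_univ, true_and]
      exact ⟨hadj_aν, by linear_combination -hνν⟩
    have hnepair : ((a + ν, a) : _ × _) ≠ (a, a + ν) := fun h => hxν a (congrArg Prod.fst h)
    refine (Finset.eq_of_subset_of_card_le ?_ ?_).symm
    · intro z hz
      rcases Finset.mem_insert.mp hz with rfl | hz
      · exact hm1
      · rw [Finset.mem_singleton.mp hz]; exact hm2
    · exact le_of_eq (by rw [hSD2 ν hν0, Finset.card_pair hnepair])
  have hνedge : ∀ p q : ZMod (2 * n), F.Adj (some p) (some q) → p - q = ν →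
      F.connectedComponentMk (some p) = Kinf := by
    intro p q hpq hd
    have hm : (p, q) ∈ SD ν := by
      simp only [hSDdef, Finset.mem_filter, Finset.mem_univ, true_and]
      exact ⟨hpq, hd⟩
    rw [hSDν] at hm
    rcases Finset.mem_insert.mp hm with h | h
    · have hp : p = a + ν := congrArg Prod.fst h
      rw [hp]
      have hmem := hwmem
      rw [hwa, SimpleGraph.ConnectedComponent.mem_supp_iff] at hmem
      exact hmem
    · have hp : p = a := congrArg Prod.fst (Finset.mem_singleton.mp h)
      rw [hp]
      have hmem := hvmem
      rw [SimpleGraph.ConnectedComponent.mem_supp_iff] at hmem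
      exact hmem
  -- ===================== Part C : crossing pairs =====================
  set X : Finset (ZMod (2 * n) × ZMod (2 * n)) :=
    Finset.univ.filter (fun z => F.Adj (some z.1) (some z.2) ∧ φ z.1 ≠ φ z.2) with hXdef
  have hX_card : X.card = 2 * n := by
    have hmapsX : ∀ z ∈ X, z.1 - z.2 ∈ Finset.univ.filter (fun d : ZMod (2 * n) => φ d = 1) := by
      intro z hz
      simp only [hXdef, Finset.mem_filter, Finset.mem_univ, true_and] at hz ⊢
      rw [map_sub]
      exact (hZ2 _ _).mp hz.2
    have hfib := Finset.card_eq_sum_card_fiberwise hmapsX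
    have hfd : ∀ d ∈ Finset.univ.filter (fun d : ZMod (2 * n) => φ d = 1),
        X.filter (fun z => z.1 - z.2 = d) = SD d := by
      intro d hd
      simp only [Finset.mem_filter, Finset.mem_univ, true_and] at hd
      ext z
      simp only [hXdef, hSDdef, Finset.filter_filter, Finset.mem_filter, Finset.mem_univ,
        true_and]
      constructor
      · rintro ⟨⟨h1, _⟩, h3⟩; exact ⟨h1, h3⟩
      · rintro ⟨h1, h3⟩
        refine ⟨⟨h1, ?_⟩, h3⟩
        rw [hZ2, ← map_sub, h3, hd]
    have hodd : (Finset.univ.filter (fun d : ZMod (2 * n) => φ d = 1)).card = n := by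
      have hbij : (Finset.univ.filter (fun d : ZMod (2 * n) => φ d = 1)).card
          = (Finset.univ.filter (fun d : ZMod (2 * n) => ¬ φ d = 1)).card := by
        apply Finset.card_bij (fun d _ => d + 1)
        · intro d hd
          simp only [Finset.mem_filter, Finset.mem_univ, true_and] at hd ⊢
          rw [map_add, hd, map_one]
          decide
        · intro d1 _ d2 _ h
          exact add_right_cancel h
        · intro d hd
          simp only [Finset.mem_filter, Finset.mem_univ, true_and] at hd
          refine ⟨d - 1, ?_, by ring⟩
          simp only [Finset.mem_filter, Finset.mem_univ, true_and]
          rw [map_sub, map_one]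
          have h0 : φ d = 0 := by
            rcases (by decide : ∀ c : ZMod 2, c = 0 ∨ c = 1) (φ d) with h0 | h1
            · exact h0
            · exact absurd h1 hd
          rw [h0]
          decide
      have hpartition := Finset.card_filter_add_card_filter_not
        (s := (Finset.univ : Finset (ZMod (2 * n)))) (p := fun d => φ d = 1)
      rw [hcards] at hpartition
      omega
    have hconst : ∑ d ∈ Finset.univ.filter (fun d : ZMod (2 * n) => φ d = 1),
        (X.filter (fun z => z.1 - z.2 = d)).card
        = ∑ _d ∈ Finset.univ.filter (fun d : ZMod (2 * n) => φ d = 1), 2 := by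
      apply Finset.sum_congr rfl
      intro d hd
      rw [hfd d hd]
      apply hSD2
      intro h0
      simp only [Finset.mem_filter, Finset.mem_univ, true_and] at hd
      rw [h0, map_zero] at hd
      exact (by decide : ¬ (0 : ZMod 2) = 1) hd
    rw [hfib, hconst, Finset.sum_const, hodd, smul_eq_mul]
    ring
  set gc : F.ConnectedComponent → ℕ :=
    fun K => (X.filter (fun z => F.connectedComponentMk (some z.1) = K)).card with hgcdef
  have hXpart : X.card = ∑ K ∈ (Finset.univ : Finset F.ConnectedComponent), gc K :=
    Finset.card_eq_sum_card_fiberwise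
      (f := fun z : ZMod (2 * n) × ZMod (2 * n) => F.connectedComponentMk (some z.1))
      (s := X) (t := Finset.univ) (fun z _ => Finset.mem_univ _)
  have hgTc : ∀ K, gc K = gc (Tc K) := by
    intro K
    simp only [hgcdef]
    apply Finset.card_bij (fun z _ => ((z.1 + ν, z.2 + ν) : ZMod (2 * n) × ZMod (2 * n)))
    · intro z hz
      simp only [hXdef, Finset.filter_filter, Finset.mem_filter, Finset.mem_univ,
        true_and] at hz ⊢
      obtain ⟨⟨h1, h2⟩, h3⟩ := hz
      refine ⟨⟨?_, ?_⟩, ?_⟩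
      · rw [← ht_some, ← ht_some]; exact (hA _ _).mpr h1
      · rw [map_add, map_add]
        intro hc
        exact h2 (add_right_cancel hc)
      · rw [← h3, hTc_mk, ht_some]
    · intro z1 _ z2 _ he
      have h1' := congrArg Prod.fst he
      have h2' := congrArg Prod.snd he
      simp only at h1' h2'
      exact Prod.ext (add_right_cancel h1') (add_right_cancel h2')
    · intro z hz
      simp only [hXdef, Finset.filter_filter, Finset.mem_filter, Finset.mem_univ,
        true_and] at hz
      obtain ⟨⟨h1, h2⟩, h3⟩ := hz
      refine ⟨(z.1 + ν, z.2 + ν), ?_, ?_⟩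
      · simp only [hXdef, Finset.filter_filter, Finset.mem_filter, Finset.mem_univ, true_and]
        refine ⟨⟨?_, ?_⟩, ?_⟩
        · rw [← ht_some, ← ht_some]; exact (hA _ _).mpr h1
        · rw [map_add, map_add]
          intro hc
          exact h2 (add_right_cancel hc)
        · have he2 : F.connectedComponentMk (some (z.1 + ν))
              = Tc (F.connectedComponentMk (some z.1)) := by
            rw [hTc_mk, ht_some]
          rw [he2, h3, hTcTc]
      · refine Prod.ext ?_ ?_ <;> simp only
        · rw [add_assoc, hνν, add_zero]
        · rw [add_assoc, hνν, add_zero]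
  have hgcKinf : gc Kinf = 2 * (n % 2) := by
    have hXtri : X.filter (fun z => F.connectedComponentMk (some z.1) = Kinf)
        = Finset.univ.filter (fun z : ZMod (2 * n) × ZMod (2 * n) =>
            (z = (a, a + ν) ∨ z = (a + ν, a)) ∧ φ z.1 ≠ φ z.2) := by
      ext z
      simp only [hXdef, Finset.filter_filter, Finset.mem_filter, Finset.mem_univ, true_and]
      constructor
      · rintro ⟨⟨h1, h2⟩, h3⟩
        refine ⟨?_, h2⟩
        have hm1 : some z.1 ∈ Kinf.supp := by
          rw [SimpleGraph.ConnectedComponent.mem_supp_iff]; exact h3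
        rw [hsupp3, hwa] at hm1
        rcases hm1 with h | h | h
        · exact absurd h (by simp)
        · have hz1 : z.1 = a := Option.some_injective _ h
          have hm2 : some z.2 ∈ F.neighborSet (some z.1) := h1
          rw [hz1, hNv, hwa] at hm2
          rcases hm2 with h' | h'
          · exact absurd h' (by simp)
          · have hz2 : z.2 = a + ν := Option.some_injective _ h'
            left; exact Prod.ext hz1 hz2
        · have hz1 : z.1 = a + ν := Option.some_injective _ h
          have hm2 : some z.2 ∈ F.neighborSet (some z.1) := h1
          rw [hz1, ← hwa, hNw] at hm2
          rcases hm2 with h' | h'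
          · exact absurd h' (by simp)
          · have hz2 : z.2 = a := Option.some_injective _ h'
            right; exact Prod.ext hz1 hz2
      · rintro ⟨(rfl | rfl), h2⟩
        · refine ⟨⟨hadj_aν, h2⟩, ?_⟩
          have := hvmem
          rwa [SimpleGraph.ConnectedComponent.mem_supp_iff] at this
        · refine ⟨⟨hadj_aν.symm, h2⟩, ?_⟩
          have := hwmem
          rw [hwa] at this
          rwa [SimpleGraph.ConnectedComponent.mem_supp_iff] at this
    simp only [hgcdef]
    rw [hXtri]
    by_cases hpar : (n : ZMod 2) = 1
    · have hnm : n % 2 = 1 := by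
        have h' := (ZMod.natCast_eq_natCast_iff' n 1 2).mp (by rw [Nat.cast_one]; exact hpar)
        simpa using h'
      have hcross : φ a ≠ φ (a + ν) := by
        rw [map_add, hφν, hpar]
        exact (by decide : ∀ c : ZMod 2, c ≠ c + 1) (φ a)
      have hfe : Finset.univ.filter (fun z : ZMod (2 * n) × ZMod (2 * n) =>
            (z = (a, a + ν) ∨ z = (a + ν, a)) ∧ φ z.1 ≠ φ z.2)
          = {(a, a + ν), (a + ν, a)} := by
        ext z
        simp only [Finset.mem_filter, Finset.mem_univ, true_and, Finset.mem_insert,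
          Finset.mem_singleton]
        constructor
        · rintro ⟨h, _⟩; exact h
        · rintro (rfl | rfl)
          · exact ⟨Or.inl rfl, hcross⟩
          · exact ⟨Or.inr rfl, fun hc => hcross hc.symm⟩
      have hne12 : ((a, a + ν) : _ × _) ≠ (a + ν, a) := fun h => hxν a (congrArg Prod.fst h).symm
      rw [hfe, Finset.card_pair hne12, hnm]
    · have hpar0 : (n : ZMod 2) = 0 := by
        rcases (by decide : ∀ c : ZMod 2, c = 0 ∨ c = 1) ((n : ZMod 2)) with h | h
        · exact h
        · exact absurd h hpar
      have hnm : n % 2 = 0 := by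
        have h' := (ZMod.natCast_eq_natCast_iff' n 0 2).mp (by rw [Nat.cast_zero]; exact hpar0)
        simpa using h'
      have hfe : Finset.univ.filter (fun z : ZMod (2 * n) × ZMod (2 * n) =>
            (z = (a, a + ν) ∨ z = (a + ν, a)) ∧ φ z.1 ≠ φ z.2) = ∅ := by
        ext z
        simp only [Finset.mem_filter, Finset.mem_univ, true_and, Finset.notMem_empty,
          iff_false, not_and]
        rintro (rfl | rfl)
        · simp only [not_ne_iff]
          rw [map_add, hφν, hpar0, add_zero]
        · simp only [not_ne_iff]
          rw [map_add, hφν, hpar0, add_zero]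
      rw [hfe, Finset.card_empty, hnm]
  -- ===================== Part D : per-component counts =====================
  have hcomp_main : ∀ K : F.ConnectedComponent, K ≠ Kinf →
      gc K % 4 = 0 ∧ (Tc K = K → gc K % 8 = (4 * (n % 2)) % 8) := by
    intro K hK
    obtain ⟨v0, hv0⟩ : ∃ v0, F.connectedComponentMk v0 = K := K.exists_rep
    obtain ⟨k, c, hk3, hc0, hperc, hadjc, hinjc, hcompc⟩ := exists_cyc hreg v0
    have hkpos : 0 < k := by omega
    rw [← hc0] at hv0
    have hcmem : ∀ i, F.connectedComponentMk (c i) = K := by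
      intro i
      induction i with
      | zero => exact hv0
      | succ i ih => rw [← ih]; exact (hmk_adj _ _ (hadjc i)).symm
    have hcnone : ∀ i, c i ≠ none := by
      intro i h
      apply hK
      rw [← hcmem i, h, hKinfdef]
    set γ : ℕ → ZMod (2 * n) := fun i => (c i).getD 0 with hγdef
    have hcγ : ∀ i, c i = some (γ i) := by
      intro i
      rcases Option.ne_none_iff_exists'.mp (hcnone i) with ⟨b, hb⟩
      rw [hγdef]
      simp only
      rw [hb]
      rfl
    have hadjγ : ∀ i, F.Adj (some (γ i)) (some (γ (i + 1))) := by
      intro i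
      have h := hadjc i
      rwa [hcγ i, hcγ (i + 1)] at h
    have hγcongr : ∀ p q : ℕ, p % k = q % k → γ p = γ q := by
      intro p q h
      rw [hγdef]
      simp only
      rw [c_congr hkpos hperc h]
    have hγinj : ∀ p q : ℕ, γ p = γ q → p % k = q % k := by
      intro p q h
      have hcpq : c (p % k) = c (q % k) := by
        rw [← c_mod hkpos hperc, ← c_mod hkpos hperc, hcγ p, hcγ q, h]
      exact hinjc _ _ (Nat.mod_lt _ hkpos) (Nat.mod_lt _ hkpos) hcpq
    have hsuppK : ∀ u, u ∈ K.supp ↔ ∃ i, i < k ∧ c i = u := by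
      intro u
      rw [← hv0]
      exact supp_char hkpos hperc hadjc hcompc u
    have hcmemγ : ∀ i, F.connectedComponentMk (some (γ i)) = K := by
      intro i
      rw [← hcγ i]
      exact hcmem i
    set xx : ℕ → ℕ := fun i => if φ (γ i) ≠ φ (γ (i + 1)) then 1 else 0 with hxxdef
    have hcount : gc K = 2 * ∑ i ∈ Finset.range k, xx i := by
      have hsum_card : ∑ i ∈ Finset.range k, xx i
          = ((Finset.range k).filter (fun i => φ (γ i) ≠ φ (γ (i + 1)))).card := by
        rw [Finset.card_filter]
      have hprod : ((((Finset.range k).filter (fun i => φ (γ i) ≠ φ (γ (i + 1))))) ×ˢ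
          (Finset.univ : Finset Bool)).card = 2 * ∑ i ∈ Finset.range k, xx i := by
        rw [Finset.card_product, hsum_card, Finset.card_univ]
        simp [Fintype.card_bool, Nat.mul_comm]
      simp only [hgcdef]
      rw [← hprod]
      refine (Finset.card_bij (fun (p : ℕ × Bool) _ =>
        if p.2 then ((γ (p.1 + 1), γ p.1) : ZMod (2 * n) × ZMod (2 * n))
        else (γ p.1, γ (p.1 + 1))) ?_ ?_ ?_).symm
      · rintro ⟨i, b⟩ hp
        obtain ⟨hi, -⟩ := Finset.mem_product.mp hp
        simp only [Finset.mem_filter, Finset.mem_range] at hi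
        obtain ⟨hik, hcross⟩ := hi
        cases b with
        | false =>
          simp only [if_neg Bool.false_ne_true]
          simp only [hXdef, Finset.filter_filter, Finset.mem_filter, Finset.mem_univ, true_and]
          exact ⟨⟨hadjγ i, hcross⟩, hcmemγ i⟩
        | true =>
          simp only [if_pos rfl]
          simp only [hXdef, Finset.filter_filter, Finset.mem_filter, Finset.mem_univ, true_and]
          exact ⟨⟨(hadjγ i).symm, fun hc => hcross hc.symm⟩, hcmemγ (i + 1)⟩
      · rintro ⟨i1, b1⟩ hp1 ⟨i2, b2⟩ hp2 he
        obtain ⟨hi1, -⟩ := Finset.mem_product.mp hp1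
        obtain ⟨hi2, -⟩ := Finset.mem_product.mp hp2
        simp only [Finset.mem_filter, Finset.mem_range] at hi1 hi2
        have hmixed : ∀ p q : ℕ, p < k → q < k → γ p = γ (q + 1) → γ (p + 1) = γ q → False := by
          intro p q hpk hqk h1 h2
          have m1 : p % k = (q + 1) % k := hγinj _ _ h1
          have m2 : (p + 1) % k = q % k := hγinj _ _ h2
          have m3 : (p + 1 + 1) % k = (q + 1) % k := by
            rw [← Nat.mod_add_mod, m2, Nat.mod_add_mod]
          have m4 : (p + 2) % k = p % k := by
            rw [show p + 2 = p + 1 + 1 by omega, m3, ← m1]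
          have m5 : p + 2 ≡ p [MOD k] := m4
          have m6 := (Nat.modEq_iff_dvd' (by omega : p ≤ p + 2)).mp m5.symm
          have m7 : p + 2 - p = 2 := by omega
          rw [m7] at m6
          have := Nat.le_of_dvd (by omega) m6
          omega
        cases b1 with
        | false =>
          cases b2 with
          | false =>
            simp only [if_neg Bool.false_ne_true] at he
            have h1 : γ i1 = γ i2 := congrArg Prod.fst he
            have := hγinj _ _ h1
            rw [Nat.mod_eq_of_lt hi1.1, Nat.mod_eq_of_lt hi2.1] at this
            rw [this]
          | true =>
            simp only [if_neg Bool.false_ne_true, if_pos rfl] at he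
            exact absurd he (fun he => hmixed i1 i2 hi1.1 hi2.1
              (congrArg Prod.fst he) (congrArg Prod.snd he))
        | true =>
          cases b2 with
          | false =>
            simp only [if_neg Bool.false_ne_true, if_pos rfl] at he
            exact absurd he (fun he => (hmixed i2 i1 hi2.1 hi1.1
              (congrArg Prod.fst he).symm (congrArg Prod.snd he).symm))
          | true =>
            simp only [if_pos rfl] at he
            have h1 : γ i1 = γ i2 := congrArg Prod.snd he
            have := hγinj _ _ h1
            rw [Nat.mod_eq_of_lt hi1.1, Nat.mod_eq_of_lt hi2.1] at this
            rw [this]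
      · intro z hz
        simp only [hXdef, Finset.filter_filter, Finset.mem_filter, Finset.mem_univ,
          true_and] at hz
        obtain ⟨⟨h1, h2⟩, h3⟩ := hz
        have hz1supp : some z.1 ∈ K.supp := by
          rw [SimpleGraph.ConnectedComponent.mem_supp_iff]
          exact h3
        obtain ⟨i, hik, hci⟩ := (hsuppK _).mp hz1supp
        have hγi : γ i = z.1 := by
          have := hci
          rw [hcγ i] at this
          exact Option.some_injective _ this
        have hadj' : F.Adj (c i) (some z.2) := by rw [hci]; exact h1
        rcases hcompc i _ hadj' with hcase | hcase
        · have hγi1 : γ (i + 1) = z.2 := by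
            have := hcase
            rw [hcγ (i + 1)] at this
            exact Option.some_injective _ this.symm
          refine ⟨(i, false), ?_, ?_⟩
          · rw [Finset.mem_product]
            constructor
            · simp only [Finset.mem_filter, Finset.mem_range]
              exact ⟨hik, by rw [hγi, hγi1]; exact h2⟩
            · exact Finset.mem_univ _
          · simp only [if_neg Bool.false_ne_true]
            exact Prod.ext hγi hγi1
        · set i' := (i + k - 1) % k with hi'def
          have hci' : c i' = some z.2 := by
            rw [hi'def, ← c_mod hkpos hperc, ← hcase]
          have hγi' : γ i' = z.2 := by
            have := hci'
            rw [hcγ i'] at this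
            exact Option.some_injective _ this
          have hγi'1 : γ (i' + 1) = z.1 := by
            have hc1 : (i' + 1) % k = i % k := by
              rw [hi'def, Nat.mod_add_mod, show i + k - 1 + 1 = i + k by omega,
                Nat.add_mod_right]
            rw [hγcongr _ _ hc1, hγi]
          refine ⟨(i', true), ?_, ?_⟩
          · rw [Finset.mem_product]
            constructor
            · simp only [Finset.mem_filter, Finset.mem_range]
              refine ⟨Nat.mod_lt _ hkpos, ?_⟩
              rw [hγi', hγi'1]
              exact fun hc => h2 hc.symm
            · exact Finset.mem_univ _
          · simp only [if_pos rfl]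
            exact Prod.ext hγi'1 hγi'
    have hcast : ∀ i, ((xx i : ℕ) : ZMod 2) = φ (γ (i + 1)) - φ (γ i) := by
      intro i
      simp only [hxxdef]
      by_cases h : φ (γ i) ≠ φ (γ (i + 1))
      · rw [if_pos h, Nat.cast_one]
        exact ((hZ2 _ _).mp (Ne.symm h)).symm
      · rw [if_neg h, Nat.cast_zero]
        rw [not_ne_iff] at h
        rw [h, sub_self]
    have htelesum : ∀ N : ℕ, ((∑ i ∈ Finset.range N, xx i : ℕ) : ZMod 2)
        = φ (γ N) - φ (γ 0) := by
      intro N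
      rw [Nat.cast_sum, Finset.sum_congr rfl (fun i _ => hcast i)]
      exact Finset.sum_range_sub (fun i => φ (γ i)) N
    constructor
    · have h0 : ((∑ i ∈ Finset.range k, xx i : ℕ) : ZMod 2) = 0 := by
        rw [htelesum k, hγcongr k 0 (by simp), sub_self]
      have hdvd := (ZMod.natCast_eq_zero_iff _ 2).mp h0
      obtain ⟨s, hs⟩ := hdvd
      rw [hcount, hs]
      omega
    · intro hfix
      have htc0 : t (c 0) ∈ K.supp := by
        rw [← hfix]
        exact hsupp_T K (c 0) (by rw [SimpleGraph.ConnectedComponent.mem_supp_iff]; exact hv0)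
      obtain ⟨j₀, hj₀k, hj₀cdef⟩ := (hsuppK _).mp htc0
      have hj₀0 : j₀ ≠ 0 := by
        intro h
        rw [h] at hj₀cdef
        exact ht_ne_self (c 0) (hcnone 0) hj₀cdef.symm
      have hnofixc : ∀ i, t (c i) ≠ c i := fun i => ht_ne_self (c i) (hcnone i)
      have hnoedgec : ∀ i, t (c i) ≠ c (i + 1) := by
        intro i h
        have hadji := hadjc i
        rw [← h, hcγ i, ht_some] at hadji
        have hd : (γ i + ν) - γ i = ν := by ring
        have hcompeq := hνedge (γ i + ν) (γ i) hadji.symm hd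
        have hKK : F.connectedComponentMk (some (γ i + ν)) = K := by
          have h1 : (some (γ i + ν) : Option (ZMod (2 * n))) = t (c i) := by
            rw [hcγ i]; rfl
          rw [h1, ← hTc_mk, hcmem i, hfix]
        rw [hKK] at hcompeq
        exact hK hcompeq
      obtain ⟨hshift, hhalf⟩ := Tstr hk3 hperc hadjc hinjc hcompc (fun u => t u) hA htt
        hj₀k hj₀cdef.symm hj₀0 hnofixc hnoedgec
      have hγshift : ∀ i, γ (i + j₀) = γ i + ν := by
        intro i
        have h := hshift i
        rw [hcγ i, ht_some, hcγ (i + j₀)] at h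
        exact (Option.some_injective _ h).symm
      have hxxshift : ∀ i, xx (i + j₀) = xx i := by
        intro i
        simp only [hxxdef]
        rw [show i + j₀ + 1 = (i + 1) + j₀ by omega, hγshift i, hγshift (i + 1)]
        rw [map_add, map_add]
        simp only [ne_eq, add_left_inj]
      have hsplitsum : ∑ i ∈ Finset.range k, xx i
          = 2 * ∑ i ∈ Finset.range j₀, xx i := by
        have hk2j : k = j₀ + j₀ := hhalf.symm
        rw [hk2j, Finset.range_eq_Ico,
          ← Finset.sum_Ico_consecutive _ (by omega : 0 ≤ j₀) (by omega : j₀ ≤ j₀ + j₀)]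
        have h2 : ∑ i ∈ Finset.Ico j₀ (j₀ + j₀), xx i = ∑ i ∈ Finset.range j₀, xx i := by
          rw [Finset.sum_Ico_eq_sum_range]
          simp only [Nat.add_sub_cancel_left]
          apply Finset.sum_congr rfl
          intro i _
          rw [show j₀ + i = i + j₀ by omega, hxxshift]
        rw [h2, ← Finset.range_eq_Ico]
        omega
      have hhalfpar : ((∑ i ∈ Finset.range j₀, xx i : ℕ) : ZMod 2) = ((n % 2 : ℕ) : ZMod 2) := by
        rw [htelesum j₀]
        rw [show γ j₀ = γ 0 + ν from by rw [show j₀ = 0 + j₀ by omega, hγshift]]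
        rw [map_add, hφν]
        rw [ZMod.natCast_mod]
        ring
      have hd2 : (∑ i ∈ Finset.range j₀, xx i) % 2 = (n % 2) % 2 :=
        (ZMod.natCast_eq_natCast_iff' _ _ _).mp hhalfpar
      rw [hcount, hsplitsum]
      omega
  -- ===================== Final assembly =====================
  set Bfix : Finset F.ConnectedComponent :=
    (Finset.univ.erase Kinf).filter (fun K => Tc K = K) with hBdef
  set Crest : Finset F.ConnectedComponent :=
    (Finset.univ.erase Kinf).filter (fun K => ¬ Tc K = K) with hCdef
  set f : ℕ := Bfix.card with hfdef
  have hBfix_mem : ∀ K, K ∈ Bfix ↔ (K ≠ Kinf ∧ Tc K = K) := by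
    intro K
    simp only [hBdef, Finset.mem_filter, Finset.mem_erase, Finset.mem_univ, and_true]
  have hCrest_mem : ∀ K, K ∈ Crest ↔ (K ≠ Kinf ∧ ¬ Tc K = K) := by
    intro K
    simp only [hCdef, Finset.mem_filter, Finset.mem_erase, Finset.mem_univ, and_true]
  have h1 : (Finset.univ : Finset F.ConnectedComponent) = insert Kinf (Finset.univ.erase Kinf) :=
    (Finset.insert_erase (Finset.mem_univ Kinf)).symm
  have h2 : (Finset.univ.erase Kinf) = Bfix ∪ Crest :=
    (Finset.filter_union_filter_not_eq _ _).symm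
  have hdisj : Disjoint Bfix Crest := Finset.disjoint_filter_filter_not _ _ _
  have hsum_univ : ∑ K ∈ (Finset.univ : Finset F.ConnectedComponent), gc K
      = gc Kinf + (∑ K ∈ Bfix, gc K + ∑ K ∈ Crest, gc K) := by
    conv_lhs => rw [h1]
    rw [Finset.sum_insert (Finset.notMem_erase _ _), h2, Finset.sum_union hdisj]
  have hCrest8 : (8 : ℕ) ∣ ∑ K ∈ Crest, gc K := by
    have hz : ((∑ K ∈ Crest, gc K : ℕ) : ZMod 8) = 0 := by
      rw [Nat.cast_sum]
      apply Finset.sum_involution (g := fun K _ => Tc K)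
      · intro K hKmem
        obtain ⟨hKne, hKnf⟩ := (hCrest_mem K).mp hKmem
        have h4 := (hcomp_main K hKne).1
        have h8 : ((gc K + gc (Tc K) : ℕ) : ZMod 8) = 0 := by
          rw [← hgTc K, ZMod.natCast_eq_zero_iff]
          omega
        exact_mod_cast h8
      · intro K hKmem _
        exact ((hCrest_mem K).mp hKmem).2
      · intro K hKmem
        obtain ⟨hKne, hKnf⟩ := (hCrest_mem K).mp hKmem
        rw [hCrest_mem]
        constructor
        · intro h
          exact hKne (by rw [← hTcTc K, h, hTcKinf])
        · intro h
          rw [hTcTc] at h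
          exact hKnf h.symm
      · intro K _
        exact hTcTc K
    exact (ZMod.natCast_eq_zero_iff _ _).mp hz
  have hBfix8 : (∑ K ∈ Bfix, gc K) % 8 = (f * (4 * (n % 2))) % 8 := by
    have hcong : ∀ K ∈ Bfix, gc K % 8 = (4 * (n % 2)) % 8 := by
      intro K hKmem
      obtain ⟨hKne, hKfix⟩ := (hBfix_mem K).mp hKmem
      exact (hcomp_main K hKne).2 hKfix
    calc (∑ K ∈ Bfix, gc K) % 8 = (∑ K ∈ Bfix, gc K % 8) % 8 := by
          rw [Finset.sum_nat_mod]
      _ = (∑ _K ∈ Bfix, (4 * (n % 2)) % 8) % 8 := by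
          rw [Finset.sum_congr rfl hcong]
      _ = (f * ((4 * (n % 2)) % 8)) % 8 := by
          rw [Finset.sum_const, smul_eq_mul, hfdef]
      _ = (f * (4 * (n % 2))) % 8 := by
          rcases Nat.mod_two_eq_zero_or_one n with h | h <;> rw [h] <;> norm_num
  have hmaster : 2 * n = gc Kinf + (∑ K ∈ Bfix, gc K + ∑ K ∈ Crest, gc K) := by
    rw [← hsum_univ, ← hXpart, hX_card]
  -- ==== r ≡ f ====
  have hEfin : r = (Finset.univ.filter
      (fun K : F.ConnectedComponent => Even K.supp.ncard)).card := by
    rw [hr, Set.ncard_eq_toFinset_card', Set.toFinset_setOf]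
  have hK3odd : ¬ Even (Kinf.supp.ncard) := by
    rw [hinf3]
    decide
  have hBfixEven : ∀ K ∈ Bfix, Even K.supp.ncard := by
    intro K hKmem
    obtain ⟨hKne, hKfix⟩ := (hBfix_mem K).mp hKmem
    rw [Set.ncard_eq_toFinset_card']
    apply even_card_of_invol (Set.toFinset K.supp).card _ (fun u => t u) le_rfl
    · intro u hu
      rw [Set.mem_toFinset] at hu ⊢
      have h' := hsupp_T K u hu
      rwa [hKfix] at h'
    · intro u _
      exact htt u
    · intro u hu
      rw [Set.mem_toFinset] at hu
      apply ht_ne_self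
      intro hnone
      apply hKne
      rw [SimpleGraph.ConnectedComponent.mem_supp_iff] at hu
      rw [← hu, hnone, hKinfdef]
  have hsuppTcncard : ∀ K : F.ConnectedComponent, (Tc K).supp.ncard = K.supp.ncard := by
    intro K
    have himg : (Tc K).supp = (fun u => t u) '' K.supp := by
      ext u
      simp only [SimpleGraph.ConnectedComponent.mem_supp_iff, Set.mem_image]
      constructor
      · intro h
        refine ⟨t u, ?_, htt u⟩
        have h' := congrArg Tc h
        rw [hTcTc] at h'
        rw [hTc_mk] at h'
        exact h'
      · rintro ⟨u', hu', rfl⟩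
        rw [← hu', ← hTc_mk]
    rw [himg, Set.ncard_image_of_injective _ (fun x y h => t.injective h)]
  have hsplitE : Finset.univ.filter (fun K : F.ConnectedComponent => Even K.supp.ncard)
      = Bfix ∪ Crest.filter (fun K => Even K.supp.ncard) := by
    ext K
    constructor
    · intro hE
      have hEv : Even K.supp.ncard := (Finset.mem_filter.mp hE).2
      rw [Finset.mem_union]
      by_cases hKinf : K = Kinf
      · exact absurd (hKinf ▸ hEv) hK3odd
      by_cases hfix : Tc K = K
      · exact Or.inl ((hBfix_mem K).mpr ⟨hKinf, hfix⟩)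
      · exact Or.inr (Finset.mem_filter.mpr ⟨(hCrest_mem K).mpr ⟨hKinf, hfix⟩, hEv⟩)
    · intro h
      rw [Finset.mem_union] at h
      rw [Finset.mem_filter]
      refine ⟨Finset.mem_univ _, ?_⟩
      rcases h with h | h
      · exact hBfixEven K h
      · exact (Finset.mem_filter.mp h).2
  have hdisj2 : Disjoint Bfix (Crest.filter (fun K => Even K.supp.ncard)) :=
    Finset.disjoint_of_subset_right (Finset.filter_subset _ _) hdisj
  have hrcard : r = f + (Crest.filter (fun K => Even K.supp.ncard)).card := by
    rw [hEfin, hsplitE, Finset.card_union_of_disjoint hdisj2, hfdef]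
  have hCfE_even : Even (Crest.filter (fun K => Even K.supp.ncard)).card := by
    apply even_card_of_invol (Crest.filter (fun K => Even K.supp.ncard)).card _ Tc le_rfl
    · intro K hKmem
      rw [Finset.mem_filter] at hKmem ⊢
      obtain ⟨hKc, hKE⟩ := hKmem
      obtain ⟨hKne, hKnf⟩ := (hCrest_mem K).mp hKc
      constructor
      · exact (hCrest_mem _).mpr ⟨fun h => hKne (by rw [← hTcTc K, h, hTcKinf]),
          fun h => hKnf (by rw [hTcTc] at h; exact h.symm)⟩
      · rw [hsuppTcncard]
        exact hKE
    · intro K _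
      exact hTcTc K
    · intro K hKmem
      rw [Finset.mem_filter] at hKmem
      exact ((hCrest_mem K).mp hKmem.1).2
  obtain ⟨e0, he0⟩ := hCfE_even
  have hrf : r = f + (e0 + e0) := by rw [hrcard, he0]
  obtain ⟨cc, hcc⟩ := hCrest8
  rcases Nat.mod_two_eq_zero_or_one n with hpar | hpar
  · left
    have hKinf0 : gc Kinf = 0 := by rw [hgcKinf, hpar]
    have hB0 : (∑ K ∈ Bfix, gc K) % 8 = 0 := by
      rw [hBfix8, hpar]
      simp
    omega
  · right
    rw [Nat.even_iff]
    have hKinf2 : gc Kinf = 2 := by rw [hgcKinf, hpar]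
    have hB4 : (∑ K ∈ Bfix, gc K) % 8 = (f * 4) % 8 := by
      rw [hBfix8, hpar]
    omega
end

section
/- Let C be a cycle with vertex set contained in Z_{2n} ∪ {∞} such that C + n = C (translation by n fixing ∞, applied to vertices, maps C to itself as a graph). Then C has one of the following three forms: (a) C = (∞, c_1, …, c_m, c_m + n, c_{m−1} + n, …, c_1 + n); (b) C = (c_1, …, c_m, c_m + n, …, c_1 + n) with ∞ ∉ V(C); or (c) C = (c_1, …, c_m, c_1 + n, …, c_m + n) with ∞ ∉ V(C). -/
/-- The cycle graph on a (cyclic) list of vertices: consecutive entries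
(and the last with the first) are adjacent. -/
def cycleGraph {V : Type} (l : List V) : SimpleGraph V :=
  SimpleGraph.fromEdgeSet {e | ∃ p ∈ l.zip (l.rotate 1), e = s(p.1, p.2)}

lemma mem_zipRot {V : Type} (l : List V) (p : V × V) :
    p ∈ l.zip (l.rotate 1) ↔ ∃ k, ∃ h : k < l.length,
      p = (l[k], l[(k + 1) % l.length]'(Nat.mod_lt _ (by omega))) := by
  rw [List.mem_iff_getElem]
  constructor
  · rintro ⟨k, hk, hp⟩
    have hk' : k < l.length := by
      simpa [List.length_zip, List.length_rotate] using hk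
    refine ⟨k, hk', ?_⟩
    rw [← hp, List.getElem_zip]
    congr 1
    rw [List.getElem_rotate]
  · rintro ⟨k, hk, hp⟩
    have hk2 : k < (l.zip (l.rotate 1)).length := by
      simpa [List.length_zip, List.length_rotate] using hk
    refine ⟨k, hk2, ?_⟩
    rw [List.getElem_zip, hp]
    congr 1
    rw [List.getElem_rotate]

lemma cycleGraph_adj {V : Type} (l : List V) (u v : V) :
    (cycleGraph l).Adj u v ↔ u ≠ v ∧
      ((∃ k, ∃ h : k < l.length, u = l[k] ∧
          v = l[(k + 1) % l.length]'(Nat.mod_lt _ (by omega))) ∨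
       (∃ k, ∃ h : k < l.length, v = l[k] ∧
          u = l[(k + 1) % l.length]'(Nat.mod_lt _ (by omega)))) := by
  rw [cycleGraph, SimpleGraph.fromEdgeSet_adj]
  constructor
  · rintro ⟨⟨p, hp, he⟩, hne⟩
    rw [mem_zipRot] at hp
    obtain ⟨k, hk, rfl⟩ := hp
    rw [Sym2.eq_iff] at he
    refine ⟨hne, ?_⟩
    rcases he with ⟨h1, h2⟩ | ⟨h1, h2⟩
    · exact Or.inl ⟨k, hk, h1, h2⟩
    · exact Or.inr ⟨k, hk, h2, h1⟩
  · rintro ⟨hne, h | h⟩ <;> obtain ⟨k, hk, h1, h2⟩ := h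
    · exact ⟨⟨_, (mem_zipRot l _).2 ⟨k, hk, rfl⟩, by rw [h1, h2]⟩, hne⟩
    · exact ⟨⟨_, (mem_zipRot l _).2 ⟨k, hk, rfl⟩, by rw [h1, h2, Sym2.eq_swap]⟩, hne⟩

lemma cycleGraph_rotate_le {V : Type} (l : List V) (r : ℕ) :
    cycleGraph (l.rotate r) ≤ cycleGraph l := by
  apply SimpleGraph.fromEdgeSet_mono
  rintro e ⟨p, hp, rfl⟩
  rw [mem_zipRot] at hp
  obtain ⟨k, hk, rfl⟩ := hp
  rw [List.length_rotate] at hk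
  have hL : 0 < l.length := by omega
  refine ⟨(l[(k+r) % l.length]'(Nat.mod_lt _ hL),
      l[((k+r) % l.length + 1) % l.length]'(Nat.mod_lt _ hL)),
    (mem_zipRot l _).2 ⟨(k+r) % l.length, Nat.mod_lt _ hL, rfl⟩, ?_⟩
  have e3 : ((k+1) % l.length + r) % l.length = ((k+r) % l.length + 1) % l.length := by
    rw [Nat.mod_add_mod, Nat.mod_add_mod]
    ring_nf
  simp only [List.getElem_rotate, List.length_rotate, e3]

lemma cycleGraph_rotate {V : Type} (l : List V) (r : ℕ) :
    cycleGraph (l.rotate r) = cycleGraph l := by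
  refine le_antisymm (cycleGraph_rotate_le l r) ?_
  rcases Nat.eq_zero_or_pos l.length with h0 | hL
  · rw [List.eq_nil_of_length_eq_zero h0]; simp [cycleGraph]
  · have : l = (l.rotate r).rotate (l.length - r % l.length) := by
      rw [List.rotate_rotate]
      have : (r + (l.length - r % l.length)) % l.length = 0 := by
        have h1 : r % l.length < l.length := Nat.mod_lt _ hL
        have h2 : r % l.length ≤ r := Nat.mod_le _ _
        have : (r + (l.length - r % l.length)) % l.length
            = (r % l.length + (l.length - r % l.length)) % l.length := by
          conv_lhs => rw [← Nat.mod_add_mod]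
        rw [this]
        have : r % l.length + (l.length - r % l.length) = l.length := by omega
        rw [this, Nat.mod_self]
      rw [← List.rotate_mod, this, List.rotate_zero]
    conv_lhs => rw [this]
    exact cycleGraph_rotate_le _ _

lemma exists_map_some {A : Type} (l : List (Option A)) (h : none ∉ l) :
    ∃ cs : List A, l = cs.map some := by
  induction l with
  | nil => exact ⟨[], rfl⟩
  | cons a t ih =>
    simp only [List.mem_cons, not_or] at h
    obtain ⟨cs, rfl⟩ := ih h.2
    cases a with
    | none => exact absurd rfl h.1
    | some b => exact ⟨b :: cs, rfl⟩


lemma affine_of_step {L : ℕ} (hL : 3 ≤ L) (π : ZMod L → ZMod L)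
    (hinj : Function.Injective π)
    (hstep : ∀ i, π (i + 1) = π i + 1 ∨ π (i + 1) = π i - 1) :
    (∀ i, π i = π 0 + i) ∨ (∀ i, π i = π 0 - i) := by
  haveI : NeZero L := ⟨by omega⟩
  have h2 : (2 : ZMod L) ≠ 0 := by
    intro h
    have : ((2 : ℕ) : ZMod L) = 0 := by push_cast; exact h
    rw [ZMod.natCast_eq_zero_iff] at this
    have := Nat.le_of_dvd (by omega) this
    omega
  have step2 : ∀ i, π (i + 1 + 1) - π (i + 1) = π (i + 1) - π i := by
    intro i
    rcases hstep i with h1 | h1 <;> rcases hstep (i + 1) with hb | hb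
    · rw [hb, h1]; ring
    · exfalso
      have he : π (i + 1 + 1) = π i := by rw [hb, h1]; ring
      exact h2 (by linear_combination hinj he)
    · exfalso
      have he : π (i + 1 + 1) = π i := by rw [hb, h1]; ring
      exact h2 (by linear_combination hinj he)
    · rw [hb, h1]; ring
  have hconst : ∀ i, π (i + 1) - π i = π 1 - π 0 := by
    have key : ∀ k : ℕ, π ((k : ZMod L) + 1) - π (k : ZMod L) = π 1 - π 0 := by
      intro k
      induction k with
      | zero => norm_num
      | succ k ih =>
        push_cast
        rw [step2 (k : ZMod L)]
        exact ih
    intro i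
    have : ((i.val : ℕ) : ZMod L) = i := by
      rw [ZMod.natCast_val, ZMod.cast_id]
    rw [← this]
    exact key i.val
  have hd : π 1 - π 0 = 1 ∨ π 1 - π 0 = -1 := by
    rcases hstep 0 with h | h
    · left; rw [show (0 : ZMod L) + 1 = 1 by ring] at h; rw [h]; ring
    · right; rw [show (0 : ZMod L) + 1 = 1 by ring] at h; rw [h]; ring
  have haff : ∀ k : ℕ, π (k : ZMod L) = π 0 + (k : ZMod L) * (π 1 - π 0) := by
    intro k
    induction k with
    | zero => norm_num
    | succ k ih =>
      push_cast
      linear_combination hconst (k : ZMod L) + ih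
  have hgen : ∀ i : ZMod L, π i = π 0 + i * (π 1 - π 0) := by
    intro i
    have hv : ((i.val : ℕ) : ZMod L) = i := by rw [ZMod.natCast_val, ZMod.cast_id]
    rw [← hv]; exact haff i.val
  rcases hd with h | h
  · left; intro i; rw [hgen i, h]; ring
  · right; intro i; rw [hgen i, h]; ring

lemma getElem_congr_idx' {α : Type} (l : List α) {i j : ℕ} (h : i = j)
    (hi : i < l.length) (hj : j < l.length) : l[i]'hi = l[j]'hj := by subst h; rfl


theorem stmt8 (n : ℕ) (hn : 0 < n) (C : SimpleGraph (Option (ZMod (2 * n))))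
    (l : List (Option (ZMod (2 * n)))) (hnd : l.Nodup) (hlen : 3 ≤ l.length)
    (hC : C = cycleGraph l)
    (hinv : C.map (Equiv.optionCongr (Equiv.addRight (n : ZMod (2 * n)))).toEmbedding = C) :
    -- (a) C = (∞, c_1, …, c_m, c_m + n, …, c_1 + n)
    (∃ cs : List (ZMod (2 * n)), C = cycleGraph
      ((none : Option (ZMod (2 * n))) :: (cs.map some ++
        ((cs.map (· + (n : ZMod (2 * n)))).reverse.map some)))) ∨
    -- (b) C = (c_1, …, c_m, c_m + n, …, c_1 + n), ∞ ∉ V(C)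
    (∃ cs : List (ZMod (2 * n)), none ∉ l ∧ C = cycleGraph
      (cs.map some ++ ((cs.map (· + (n : ZMod (2 * n)))).reverse.map some))) ∨
    -- (c) C = (c_1, …, c_m, c_1 + n, …, c_m + n), ∞ ∉ V(C)
    (∃ cs : List (ZMod (2 * n)), none ∉ l ∧ C = cycleGraph
      (cs.map some ++ (cs.map (· + (n : ZMod (2 * n)))).map some)) := by
  haveI : NeZero l.length := ⟨by omega⟩
  haveI : Fact (1 < l.length) := ⟨by omega⟩
  haveI : NeZero (2 * n) := ⟨by omega⟩
  set σ : Option (ZMod (2 * n)) → Option (ZMod (2 * n)) :=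
    Option.map (· + (n : ZMod (2 * n))) with hσdef
  -- n ≠ 0 in ZMod (2n)
  have hnne : (n : ZMod (2 * n)) ≠ 0 := by
    intro h
    rw [ZMod.natCast_eq_zero_iff] at h
    have := Nat.le_of_dvd hn h
    omega
  have h2n : (n : ZMod (2 * n)) + n = 0 := by
    have : ((2 * n : ℕ) : ZMod (2 * n)) = 0 := ZMod.natCast_self _
    push_cast at this
    linear_combination this
  have hσσ : ∀ x, σ (σ x) = x := by
    intro x
    cases x with
    | none => rfl
    | some c => simp [hσdef]; linear_combination h2n
  have hσinj : Function.Injective σ := Function.LeftInverse.injective hσσ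
  have hσfix : ∀ x, σ x = x → x = none := by
    intro x hx
    cases x with
    | none => rfl
    | some c =>
      exfalso
      simp [hσdef] at hx
      exact hnne (by linear_combination hx)
  have hσsome : ∀ c : ZMod (2 * n), σ (some c) = some (c + n) := fun c => rfl
  have hσnone : σ none = none := rfl
  -- σ is an automorphism of C
  have hauto : ∀ u v, C.Adj (σ u) (σ v) ↔ C.Adj u v := by
    intro u v
    have hfeq : ∀ x, (Equiv.optionCongr (Equiv.addRight (n : ZMod (2 * n)))).toEmbedding x
        = σ x := by
      intro x; cases x <;> simp [hσdef, Equiv.optionCongr]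
    conv_lhs => rw [← hinv]
    rw [← hfeq u, ← hfeq v]
    exact SimpleGraph.map_adj_apply
  subst hC
  set g : ZMod l.length → Option (ZMod (2 * n)) := fun i => l[i.val]'(ZMod.val_lt i) with hgdef
  have gnat : ∀ (j : ℕ) (hj : j < l.length), g (↑j) = l[j]'hj := by
    intro j hj
    rw [hgdef]
    exact getElem_congr_idx' l (ZMod.val_natCast_of_lt hj) _ _
  have ginj : Function.Injective g := by
    intro i j hij
    rw [hgdef] at hij
    have := (List.Nodup.getElem_inj_iff hnd).1 hij
    exact ZMod.val_injective _ this
  have hone : (1 : ZMod l.length) ≠ 0 := by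
    intro h
    have : ((1 : ℕ) : ZMod l.length) = 0 := by push_cast; exact h
    rw [ZMod.natCast_eq_zero_iff] at this
    have := Nat.le_of_dvd (by omega) this
    omega
  have hadj_iff : ∀ i j : ZMod l.length,
      (cycleGraph l).Adj (g i) (g j) ↔ (j = i + 1 ∨ i = j + 1) := by
    have hval1 : ∀ i : ZMod l.length, (i + 1).val = (i.val + 1) % l.length := by
      intro i
      rw [ZMod.val_add, ZMod.val_one]
    have fwd : ∀ i j : ZMod l.length, ∀ k, ∀ hk : k < l.length,
        g i = l[k] → g j = l[(k+1) % l.length]'(Nat.mod_lt _ (by omega)) → j = i + 1 := by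
      intro i j k hk h1 h2
      rw [hgdef] at h1 h2
      have hik : i.val = k := (List.Nodup.getElem_inj_iff hnd).1 h1
      have hjk : j.val = (k + 1) % l.length := (List.Nodup.getElem_inj_iff hnd).1 h2
      have : ((j.val : ℕ) : ZMod l.length) = ((i.val + 1 : ℕ) : ZMod l.length) := by
        rw [hjk, hik, ZMod.natCast_mod]
      rw [ZMod.natCast_val, ZMod.cast_id] at this
      push_cast at this
      rw [ZMod.natCast_val, ZMod.cast_id] at this
      exact this
    intro i j
    constructor
    · rw [cycleGraph_adj]
      rintro ⟨hne, ⟨k, hk, h1, h2⟩ | ⟨k, hk, h1, h2⟩⟩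
      · exact Or.inl (fwd i j k hk h1 h2)
      · exact Or.inr (fwd j i k hk h1 h2)
    · intro h
      have mk : ∀ i : ZMod l.length, (cycleGraph l).Adj (g i) (g (i + 1)) := by
        intro i
        rw [cycleGraph_adj]
        constructor
        · intro he
          have := ginj he
          exact hone (by linear_combination -this)
        · left
          refine ⟨i.val, ZMod.val_lt i, rfl, ?_⟩
          rw [hgdef]
          exact getElem_congr_idx' l (hval1 i) _ _
      rcases h with h | h
      · rw [h]; exact mk i
      · rw [h]; exact (mk j).symm
  have hmem_of_adj : ∀ u v, (cycleGraph l).Adj u v → u ∈ l := by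
    intro u v huv
    rw [cycleGraph, SimpleGraph.fromEdgeSet_adj] at huv
    obtain ⟨⟨p, hp, he⟩, _⟩ := huv
    have hmem := List.of_mem_zip (by exact hp : (p.1, p.2) ∈ l.zip (l.rotate 1))
    rw [Sym2.eq_iff] at he
    rcases he with ⟨h1, _⟩ | ⟨h1, _⟩
    · rw [h1]; exact hmem.1
    · rw [h1]; exact (List.mem_rotate).1 hmem.2
  have hπex : ∀ i : ZMod l.length, ∃ j, σ (g i) = g j := by
    intro i
    have hadj : (cycleGraph l).Adj (g i) (g (i + 1)) := (hadj_iff i (i+1)).2 (Or.inl rfl)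
    have : (cycleGraph l).Adj (σ (g i)) (σ (g (i + 1))) := (hauto _ _).2 hadj
    have hmem := hmem_of_adj _ _ this
    rw [List.mem_iff_getElem] at hmem
    obtain ⟨k, hk, hkeq⟩ := hmem
    exact ⟨↑k, by rw [gnat k hk]; exact hkeq.symm⟩
  choose π hπ using hπex
  have πinj : Function.Injective π := by
    intro i j hij
    apply ginj
    apply hσinj
    rw [hπ i, hπ j, hij]
  have πstep : ∀ i, π (i + 1) = π i + 1 ∨ π (i + 1) = π i - 1 := by
    intro i
    have hadj : (cycleGraph l).Adj (g i) (g (i + 1)) := (hadj_iff i (i+1)).2 (Or.inl rfl)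
    have h2 : (cycleGraph l).Adj (g (π i)) (g (π (i + 1))) := by
      rw [← hπ i, ← hπ (i+1)]
      exact (hauto _ _).2 hadj
    rcases (hadj_iff _ _).1 h2 with h | h
    · exact Or.inl h
    · right; rw [h]; ring
  have haffine := affine_of_step hlen π πinj πstep
  have ham : ((π 0).val : ZMod l.length) = π 0 := by
    rw [ZMod.natCast_val, ZMod.cast_id]
  rcases haffine with hrot | hrefl
  · -- rotation: case (c)
    have hσg : ∀ i, σ (g i) = g (π 0 + i) := by
      intro i; rw [hπ i, hrot i]
    have ha0 : π 0 ≠ 0 := by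
      intro h0
      have h1 : g 0 = none := hσfix _ (by rw [hσg 0, h0, zero_add])
      have h2 : g 1 = none := hσfix _ (by rw [hσg 1, h0, zero_add])
      exact hone (ginj (h2.trans h1.symm))
    have hnone : none ∉ l := by
      intro hmem
      rw [List.mem_iff_getElem] at hmem
      obtain ⟨k, hk, hkeq⟩ := hmem
      have h1 : σ (g ↑k) = g ↑k := by rw [gnat k hk, hkeq]; exact hσnone
      rw [hσg] at h1
      have := ginj h1
      exact ha0 (by linear_combination this)
    have h2a : π 0 + π 0 = 0 := by
      have h := hσσ (g 0)
      rw [hσg 0, hσg (π 0 + 0)] at h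
      have := ginj h
      linear_combination this
    have hm0 : 0 < (π 0).val := by
      rcases Nat.eq_zero_or_pos (π 0).val with h | h
      · exfalso; apply ha0; rw [← ham, h]; norm_num
      · exact h
    have hmL : (π 0).val < l.length := ZMod.val_lt _
    have hLm : l.length = (π 0).val + (π 0).val := by
      have hv : ((π 0).val + (π 0).val) % l.length = 0 := by
        have h := congrArg ZMod.val h2a
        rwa [ZMod.val_add, ZMod.val_zero] at h
      obtain ⟨c, hc⟩ := Nat.dvd_of_mod_eq_zero hv
      have hc2 : c < 2 := by nlinarith
      interval_cases c <;> omega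
    set m := (π 0).val with hmdef
    obtain ⟨cs₀, hcs₀⟩ := exists_map_some l hnone
    have hlen₀ : cs₀.length = l.length := by rw [hcs₀, List.length_map]
    have hl_get : ∀ j : ℕ, ∀ hj : j < l.length, l[j]'hj = some (cs₀[j]'(by omega)) := by
      intro j hj
      rw [List.getElem_of_eq hcs₀ hj, List.getElem_map]
    have hshift : ∀ j : ℕ, ∀ hj : j < m,
        l[m + j]'(by omega) = σ (l[j]'(by omega)) := by
      intro j hj
      have h1 := hσg ↑j
      rw [gnat j (by omega)] at h1
      have h2 : π 0 + (↑j : ZMod l.length) = ↑(m + j) := by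
        rw [← ham]; push_cast; ring
      rw [h2, gnat (m+j) (by omega)] at h1
      exact h1.symm
    have hkey : cs₀ = cs₀.take m ++ (cs₀.take m).map (· + (n : ZMod (2*n))) := by
      apply List.ext_getElem
      · rw [List.length_append, List.length_map, List.length_take]; omega
      · intro j h₁ h₂
        rw [List.getElem_append]
        split_ifs with hjm
        · exact List.getElem_take.symm
        · rw [List.length_take] at hjm
          have hjm' : m ≤ j := by omega
          have hjL : j < l.length := by omega
          rw [List.getElem_map, List.getElem_take]
          have hs := hshift (j - m) (by omega)
          rw [getElem_congr_idx' l (show m + (j - m) = j by omega) _ hjL] at hs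
          rw [hl_get j hjL, hl_get (j - m) (by omega), hσsome] at hs
          rw [Option.some.inj hs]
          congr 1
          exact getElem_congr_idx' cs₀ (by rw [List.length_take]; omega) _ _
    refine Or.inr (Or.inr ⟨cs₀.take m, hnone, ?_⟩)
    conv_lhs => rw [hcs₀, hkey]
    rw [List.map_append]
  · -- reflection
    have hσg : ∀ i, σ (g i) = g (π 0 - i) := by
      intro i; rw [hπ i, hrefl i]
    by_cases hmem : none ∈ l
    · -- case (a)
      obtain ⟨k0, hk0, hgk0⟩ := List.mem_iff_getElem.1 hmem
      have hg0 : g ↑k0 = none := by rw [gnat k0 hk0]; exact hgk0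
      have hi0 : π 0 - ↑k0 = ↑k0 := by
        have h1 : σ (g ↑k0) = g ↑k0 := by rw [hg0]; exact hσnone
        rw [hσg] at h1
        exact ginj h1
      have hodd : l.length % 2 = 1 := by
        by_contra hparity
        have he : l.length % 2 = 0 := by omega
        have hLm' : l.length = l.length / 2 + l.length / 2 := by omega
        have hm'z : ((l.length / 2 : ℕ) : ZMod l.length) + ↑(l.length / 2) = 0 := by
          have h3 : ((l.length / 2 + l.length / 2 : ℕ) : ZMod l.length) = 0 := by
            rw [← hLm']; exact ZMod.natCast_self _
          push_cast at h3
          linear_combination h3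
        have hfixi1 : σ (g (↑k0 + ↑(l.length / 2))) = g (↑k0 + ↑(l.length / 2)) := by
          rw [hσg]
          congr 1
          linear_combination hi0 - hm'z
        have h4 := hσfix _ hfixi1
        rw [← hg0] at h4
        have h0 := ginj h4
        have hm0' : ((l.length / 2 : ℕ) : ZMod l.length) = 0 := by linear_combination h0
        rw [ZMod.natCast_eq_zero_iff] at hm0'
        have := Nat.le_of_dvd (by omega) hm0'
        omega
      set m := l.length / 2 with hm
      have hLm : l.length = m + m + 1 := by omega
      have hm1 : 1 ≤ m := by omega
      set l' := l.rotate k0 with hl'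
      have hlen' : l'.length = l.length := List.length_rotate l k0
      have hl'get : ∀ j : ℕ, ∀ hj : j < l.length, l'[j]'(by omega) = g (↑j + ↑k0) := by
        intro j hj
        rw [List.getElem_of_eq hl' (by omega), List.getElem_rotate,
          ← gnat _ (Nat.mod_lt _ (by omega))]
        congr 1
        rw [ZMod.natCast_mod]
        push_cast
        rfl
      have hσl' : ∀ j : ℕ, ∀ hj : j < l.length, ∀ hj0 : 0 < j,
          l'[j]'(by omega) = σ (l'[l.length - j]'(by omega)) := by
        intro j hj hj0
        rw [hl'get j hj, hl'get (l.length - j) (by omega), hσg]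
        congr 1
        have hc : ((l.length - j : ℕ) : ZMod l.length) = -(j : ZMod l.length) := by
          push_cast [Nat.cast_sub (le_of_lt hj)]
          rw [ZMod.natCast_self]
          ring
        rw [hc]
        linear_combination -hi0
      have hl'0 : l'[0]'(by omega) = none := by
        rw [hl'get 0 (by omega)]
        have hz : ((0 : ℕ) : ZMod l.length) + ↑k0 = ↑k0 := by push_cast; ring
        rw [hz]
        exact hg0
      have hnd' : l'.Nodup := List.nodup_rotate.2 hnd
      have hclen : ((l'.drop 1).take m).length = m := by
        rw [List.length_take, List.length_drop]
        omega
      have hcget : ∀ j : ℕ, ∀ hj : j < m,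
          ((l'.drop 1).take m)[j]'(by rw [hclen]; omega) = l'[1 + j]'(by omega) := by
        intro j hj
        rw [List.getElem_take, List.getElem_drop]
      have hnonec : none ∉ (l'.drop 1).take m := by
        intro hmc
        obtain ⟨j, hjlen, hjeq⟩ := List.mem_iff_getElem.1 hmc
        have hj : j < m := by rw [hclen] at hjlen; exact hjlen
        rw [hcget j hj] at hjeq
        have h5 := (List.Nodup.getElem_inj_iff hnd').1 (hjeq.trans hl'0.symm)
        omega
      obtain ⟨cs, hcs⟩ := exists_map_some _ hnonec
      have hcslen : cs.length = m := by
        have h6 := congrArg List.length hcs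
        rw [List.length_map] at h6
        omega
      have hlm2 : (List.map some cs).length = m := by rw [List.length_map, hcslen]
      refine Or.inl ⟨cs, ?_⟩
      rw [← cycleGraph_rotate l k0, ← hl']
      congr 1
      apply List.ext_getElem
      · simp only [List.length_cons, List.length_append, List.length_map,
          List.length_reverse, hcslen]
        omega
      · intro j h₁ h₂
        cases j with
        | zero =>
          rw [List.getElem_cons_zero]
          exact hl'0
        | succ j' =>
          rw [List.getElem_cons_succ, List.getElem_append]
          have hj' : j' < m + m := by omega
          split_ifs with hsp
          · rw [hlm2] at hsp
            rw [List.getElem_map]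
            have h5 : ((l'.drop 1).take m)[j']'(by rw [hclen]; omega)
                = some (cs[j']'(by omega)) := by
              rw [List.getElem_of_eq hcs (by rw [hclen]; omega), List.getElem_map]
            rw [hcget j' hsp] at h5
            exact (getElem_congr_idx' l' (show j' + 1 = 1 + j' by omega) _ (by omega)).trans h5
          · rw [hlm2] at hsp
            have hm_le : m ≤ j' := by omega
            have hR : ((cs.map (· + (n : ZMod (2*n)))).reverse.map some)[j' - (List.map some cs).length]'(by
                  simp only [List.length_map, List.length_reverse, hcslen]; omega)
                = some (cs[2*m-1-j']'(by omega) + ↑n) := by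
              rw [List.getElem_map, List.getElem_reverse, List.getElem_map]
              congr 2
              exact getElem_congr_idx' cs (by simp only [List.length_map, hcslen]; omega) _ _
            have hLft : l'[j'+1]'(by omega) = some (cs[2*m-1-j']'(by omega) + ↑n) := by
              have h7 := hσl' (j'+1) (by omega) (by omega)
              rw [getElem_congr_idx' l' (show l.length - (j'+1) = 1 + (2*m-1-j') by omega)
                _ (by omega)] at h7
              rw [← hcget (2*m-1-j') (by omega)] at h7
              have h9 : ((l'.drop 1).take m)[2*m-1-j']'(by rw [hclen]; omega)
                  = some (cs[2*m-1-j']'(by omega)) := by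
                rw [List.getElem_of_eq hcs (by rw [hclen]; omega), List.getElem_map]
              rw [h9, hσsome] at h7
              exact h7
            exact hLft.trans hR.symm
    · -- case (b)
      have hnofix : ∀ i : ZMod l.length, π 0 ≠ i + i := by
        intro i hcontra
        have h1 : σ (g i) = g i := by
          rw [hσg]
          congr 1
          rw [hcontra]
          ring
        have h2 := hσfix _ h1
        apply hmem
        rw [← h2]
        simp only [hgdef]
        exact List.getElem_mem _
      have heven : l.length % 2 = 0 := by
        by_contra hp
        have hoddL : l.length % 2 = 1 := by omega
        apply hnofix (↑((l.length+1)/2) * π 0)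
        have h3 : ((l.length+1)/2 + (l.length+1)/2 : ℕ) = l.length + 1 := by omega
        have h4 : (((l.length+1) : ℕ) : ZMod l.length) = 1 := by
          push_cast
          rw [ZMod.natCast_self]
          ring
        have h5 : ((((l.length+1)/2 : ℕ)) : ZMod l.length) + ↑((l.length+1)/2) = 1 := by
          rw [← Nat.cast_add, h3, h4]
        linear_combination (-(π 0)) * h5
      set m := l.length / 2 with hm
      have hLm : l.length = m + m := by omega
      have hm2 : 2 ≤ m := by omega
      have havodd : (π 0).val % 2 = 1 := by
        by_contra hp
        obtain ⟨t, ht⟩ : ∃ t, (π 0).val = t + t := ⟨(π 0).val / 2, by omega⟩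
        apply hnofix ↑t
        rw [← ham, ht]
        push_cast
        ring
      set r := ((π 0).val + 1) / 2 with hr
      have hrval : (π 0).val + 1 = r + r := by omega
      set l' := l.rotate r with hl'
      have hlen' : l'.length = l.length := List.length_rotate l r
      have hl'get : ∀ j : ℕ, ∀ hj : j < l.length, l'[j]'(by omega) = g (↑j + ↑r) := by
        intro j hj
        rw [List.getElem_of_eq hl' (by omega), List.getElem_rotate,
          ← gnat _ (Nat.mod_lt _ (by omega))]
        congr 1
        rw [ZMod.natCast_mod]
        push_cast
        rfl
      have h2r : (r : ZMod l.length) + ↑r = π 0 + 1 := by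
        have h6 : ((r + r : ℕ) : ZMod l.length) = ↑((π 0).val + 1 : ℕ) := by rw [← hrval]
        push_cast at h6
        rw [ham] at h6
        linear_combination h6
      have hkey : ∀ j : ℕ, ∀ hj : j < l.length,
          l'[j]'(by omega) = σ (l'[l.length - 1 - j]'(by omega)) := by
        intro j hj
        rw [hl'get j hj, hl'get (l.length - 1 - j) (by omega), hσg]
        congr 1
        have he1 : l.length - 1 - j = l.length - (1 + j) := by omega
        have hc : ((l.length - 1 - j : ℕ) : ZMod l.length) = -1 - ↑j := by
          rw [he1]
          push_cast [Nat.cast_sub (show 1 + j ≤ l.length by omega)]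
          rw [ZMod.natCast_self]
          ring
        rw [hc]
        linear_combination h2r
      have hnonec : none ∉ l'.take m := fun hmc =>
        hmem (List.mem_rotate.1 (List.mem_of_mem_take hmc))
      obtain ⟨cs, hcs⟩ := exists_map_some _ hnonec
      have hcslen : cs.length = m := by
        have h6 := congrArg List.length hcs
        rw [List.length_map, List.length_take] at h6
        omega
      have hlm2 : (List.map some cs).length = m := by rw [List.length_map, hcslen]
      refine Or.inr (Or.inl ⟨cs, hmem, ?_⟩)
      rw [← cycleGraph_rotate l r, ← hl']
      congr 1
      apply List.ext_getElem
      · simp only [List.length_append, List.length_map, List.length_reverse, hcslen]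
        omega
      · intro j h₁ h₂
        rw [List.getElem_append]
        split_ifs with hsp
        · rw [hlm2] at hsp
          rw [List.getElem_map]
          have h5 : (l'.take m)[j]'(by rw [List.length_take]; omega)
              = some (cs[j]'(by omega)) := by
            rw [List.getElem_of_eq hcs (by rw [List.length_take]; omega), List.getElem_map]
          rw [List.getElem_take] at h5
          exact h5
        · rw [hlm2] at hsp
          have hm_le : m ≤ j := by omega
          have hjL : j < l.length := by omega
          have hR : ((cs.map (· + (n : ZMod (2*n)))).reverse.map some)[j - (List.map some cs).length]'(by
                simp only [List.length_map, List.length_reverse, hcslen]; omega)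
              = some (cs[l.length - 1 - j]'(by omega) + ↑n) := by
            rw [List.getElem_map, List.getElem_reverse, List.getElem_map]
            congr 2
            exact getElem_congr_idx' cs (by simp only [List.length_map, hcslen]; omega) _ _
          have hLft : l'[j]'(by omega) = some (cs[l.length - 1 - j]'(by omega) + ↑n) := by
            have h7 := hkey j hjL
            have h9 : (l'.take m)[l.length - 1 - j]'(by rw [List.length_take]; omega)
                = some (cs[l.length - 1 - j]'(by omega)) := by
              rw [List.getElem_of_eq hcs (by rw [List.length_take]; omega), List.getElem_map]
            rw [List.getElem_take] at h9
            rw [h9, hσsome] at h7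
            exact h7
          exact hLft.trans hR.symm
end

section
/- If a cycle C with vertices in Z_{2n} ∪ {∞} satisfies C + n = C and ∞ ∈ V(C), then the length of C is odd. -/
lemma even_card_of_fpf_involution {α : Type*} [DecidableEq α] (t : Finset α)
    (g : α → α) (hmem : ∀ x ∈ t, g x ∈ t) (hinv : ∀ x ∈ t, g (g x) = x)
    (hfpf : ∀ x ∈ t, g x ≠ x) : Even t.card := by
  induction t using Finset.strongInduction with
  | _ t ih =>
    rcases t.eq_empty_or_nonempty with rfl | ⟨x, hx⟩
    · simp
    · have hgx : g x ∈ t := hmem x hx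
      have hne : g x ≠ x := hfpf x hx
      set t' : Finset α := (t.erase x).erase (g x) with ht'
      have hsub : t' ⊆ t := (Finset.erase_subset _ _).trans (Finset.erase_subset _ _)
      have hxt' : x ∉ t' := fun h => (Finset.mem_erase.1 (Finset.mem_erase.1 h).2).1 rfl
      have hss : t' ⊂ t := Finset.ssubset_iff_of_subset hsub |>.2 ⟨x, hx, hxt'⟩
      have hmem' : ∀ y ∈ t', y ∈ t ∧ y ≠ x ∧ y ≠ g x := by
        intro y hy
        have h1 := Finset.mem_erase.1 hy
        have h2 := Finset.mem_erase.1 h1.2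
        exact ⟨h2.2, h2.1, h1.1⟩
      have heven : Even t'.card := by
        refine ih t' hss (fun y hy => ?_) (fun y hy => hinv y (hmem' y hy).1)
          (fun y hy => hfpf y (hmem' y hy).1)
        obtain ⟨hyt, hyx, hygx⟩ := hmem' y hy
        refine Finset.mem_erase.2 ⟨?_, Finset.mem_erase.2 ⟨?_, hmem y hyt⟩⟩
        · intro h; exact hyx (by rw [← hinv y hyt, h, hinv x hx])
        · intro h; exact hygx (by rw [← hinv y hyt, h])
      have hcard : t.card = t'.card + 2 := by
        have h1 : (t.erase x).card + 1 = t.card := Finset.card_erase_add_one hx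
        have h2 : t'.card + 1 = (t.erase x).card :=
          Finset.card_erase_add_one (Finset.mem_erase.2 ⟨hne, hgx⟩)
        omega
      rw [hcard]
      exact heven.add (even_two)

lemma mem_iff_adj {V : Type} [DecidableEq V] (l : List V) (hnd : l.Nodup)
    (hlen : 3 ≤ l.length) (x : V) : x ∈ l ↔ ∃ y, (cycleGraph l).Adj x y := by
  constructor
  · intro hx
    obtain ⟨i, hi, rfl⟩ := List.getElem_of_mem hx
    have hi1 : (i + 1) % l.length < l.length := Nat.mod_lt _ (by omega)
    refine ⟨l[(i + 1) % l.length], ?_⟩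
    have hne : l[i] ≠ l[(i + 1) % l.length] := by
      intro h
      have heq := (List.Nodup.getElem_inj_iff hnd).1 h
      rcases Nat.lt_or_ge (i + 1) l.length with h' | h'
      · rw [Nat.mod_eq_of_lt h'] at heq; omega
      · have hl : i + 1 = l.length := by omega
        rw [hl, Nat.mod_self] at heq; omega
    rw [cycleGraph, SimpleGraph.fromEdgeSet_adj]
    refine ⟨⟨(l[i], (l.rotate 1)[i]'(by simpa using hi)), ?_, ?_⟩, ?_⟩
    · have : (l.zip (l.rotate 1))[i]'(by simp; omega) = (l[i], (l.rotate 1)[i]'(by simpa using hi)) :=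
        List.getElem_zip ..
      rw [← this]; exact List.getElem_mem _
    · simp [List.getElem_rotate]
    · simpa [List.getElem_rotate] using hne
  · rintro ⟨y, hadj⟩
    rw [cycleGraph, SimpleGraph.fromEdgeSet_adj] at hadj
    obtain ⟨⟨p, hp, hpe⟩, hne⟩ := hadj
    have h1 : p.1 ∈ l := (List.of_mem_zip hp).1
    have h2 : p.2 ∈ l := by
      have := (List.of_mem_zip hp).2
      exact (List.mem_rotate).1 this
    rw [Sym2.eq_iff] at hpe
    rcases hpe with ⟨rfl, rfl⟩ | ⟨rfl, rfl⟩ <;> assumption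

theorem stmt9 (n : ℕ) (hn : 0 < n) (C : SimpleGraph (Option (ZMod (2 * n))))
    (l : List (Option (ZMod (2 * n)))) (hnd : l.Nodup) (hlen : 3 ≤ l.length)
    (hC : C = cycleGraph l)
    (hinv : C.map (Equiv.optionCongr (Equiv.addRight (n : ZMod (2 * n)))).toEmbedding = C)
    (hinf : none ∈ l) :
    Odd l.length := by
  classical
  haveI : NeZero (2 * n) := ⟨by omega⟩
  set e := Equiv.optionCongr (Equiv.addRight (n : ZMod (2 * n))) with he
  have hn0 : (n : ZMod (2 * n)) ≠ 0 := by
    intro h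
    rw [ZMod.natCast_eq_zero_iff] at h
    exact absurd (Nat.le_of_dvd hn h) (by omega)
  have hnn : (n : ZMod (2 * n)) + (n : ZMod (2 * n)) = 0 := by
    rw [← Nat.cast_add, ← two_mul, ZMod.natCast_self]
  have hesome : ∀ a : ZMod (2 * n), e (some a) = some (a + n) := by
    intro a; simp [he]
  have henone : e none = none := by simp [he]
  have hinvol : ∀ x, e (e x) = x := by
    intro x
    cases x with
    | none => rw [henone, henone]
    | some a => rw [hesome, hesome, add_assoc, hnn, add_zero]
  have hadj : ∀ x y, C.Adj x y → C.Adj (e x) (e y) := by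
    intro x y h
    rw [← hinv]
    exact (SimpleGraph.map_adj _ _ _ _).2 ⟨x, y, h, rfl, rfl⟩
  have hmeml : ∀ x, x ∈ l → e x ∈ l := by
    intro x hx
    rw [mem_iff_adj l hnd hlen] at hx ⊢
    obtain ⟨y, hy⟩ := hx
    exact ⟨e y, by rw [hC] at hadj; exact hadj x y hy⟩
  set t : Finset (Option (ZMod (2 * n))) := l.toFinset.erase none with ht
  have heven : Even t.card := by
    refine even_card_of_fpf_involution t e ?_ (fun x _ => hinvol x) ?_
    · intro x hx
      obtain ⟨hxn, hxl⟩ := Finset.mem_erase.1 hx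
      refine Finset.mem_erase.2 ⟨?_, List.mem_toFinset.2 (hmeml x (List.mem_toFinset.1 hxl))⟩
      cases x with
      | none => exact absurd rfl hxn
      | some a => rw [hesome]; exact Option.some_ne_none _
    · intro x hx
      obtain ⟨hxn, _⟩ := Finset.mem_erase.1 hx
      cases x with
      | none => exact absurd rfl hxn
      | some a =>
        rw [hesome]
        intro h
        exact hn0 (by simpa using Option.some_injective _ h)
  have hcard : t.card + 1 = l.toFinset.card :=
    Finset.card_erase_add_one (List.mem_toFinset.2 hinf)
  have hlc : l.toFinset.card = l.length := List.toFinset_card_of_nodup hnd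
  obtain ⟨k, hk⟩ := heven
  exact ⟨k, by omega⟩
end

section
/- Let n be even and let F be a 2-regular graph of order 2n+1 on vertex set ({0,1} × Z_n) ∪ {∞} such that: the neighbours of ∞ are (0,x_0) and (1,x_1); F contains the path P with edges {(0,0),(0,n/2)}, {(0,n/2),(1,n/2)}, {(1,n/2),(1,0)} within one of its cycles; and Δ_{ij}(F − P) = Z_n \ {0, n/2} for each (i,j) ∈ {(0,0),(0,1),(1,1)}. Let F* be obtained from F by replacing P with the path P* with edges {(0,0),(1,n/2)}, {(1,n/2),(0,n/2)}, {(0,n/2),(1,0)}. Then {F + g : 1 ≤ g ≤ n/2} ∪ {F* + (n/2 + g) : 1 ≤ g ≤ n/2} is an edge-decomposition of K_{2n+1} into n copies of graphs isomorphic to F. -/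
/-- The translate `F + g` of a graph on `({0,1} × Z_n) ∪ {∞}` (with `∞ = none` fixed). -/
def obTranslate2 {n : ℕ} (F : SimpleGraph (Option (Bool × ZMod n))) (g : ZMod n) :
    SimpleGraph (Option (Bool × ZMod n)) :=
  F.map (Equiv.optionCongr ((Equiv.refl Bool).prodCongr (Equiv.addRight g))).toEmbedding

/-- `n/2` as an element of `Z_n`. -/
def obHalf (n : ℕ) : ZMod n := ((n / 2 : ℕ) : ZMod n)

/-- The edges of the path `P = (0,0), (0,n/2), (1,n/2), (1,0)`. -/
def pathP (n : ℕ) : Set (Sym2 (Option (Bool × ZMod n))) :=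
  { s(some (false, 0), some (false, obHalf n)),
    s(some (false, obHalf n), some (true, obHalf n)),
    s(some (true, obHalf n), some (true, 0)) }

/-- The edges of the switched path `P* = (0,0), (1,n/2), (0,n/2), (1,0)`. -/
def pathPstar (n : ℕ) : Set (Sym2 (Option (Bool × ZMod n))) :=
  { s(some (false, 0), some (true, obHalf n)),
    s(some (true, obHalf n), some (false, obHalf n)),
    s(some (false, obHalf n), some (true, 0)) }

/-- `F*`: the graph obtained from `F` by replacing `P` with `P*`. -/
def Fswitch {n : ℕ} (F : SimpleGraph (Option (Bool × ZMod n))) :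
    SimpleGraph (Option (Bool × ZMod n)) :=
  (F.deleteEdges (pathP n)) ⊔ SimpleGraph.fromEdgeSet (pathPstar n)

/-! ### Auxiliary definitions and lemmas -/

/-- subtraction of `g` on second coordinates -/
def obSub {n : ℕ} (u : Option (Bool × ZMod n)) (g : ZMod n) : Option (Bool × ZMod n) :=
  u.map (fun q => (q.1, q.2 - g))

@[simp] lemma obSub_none {n : ℕ} (g : ZMod n) : obSub (none : Option (Bool × ZMod n)) g = none := rfl

@[simp] lemma obSub_some {n : ℕ} (i : Bool) (x g : ZMod n) :
    obSub (some (i, x)) g = some (i, x - g) := rfl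

lemma obTranslate2_adj {n : ℕ} (F : SimpleGraph (Option (Bool × ZMod n))) (g : ZMod n)
    (u v : Option (Bool × ZMod n)) :
    (obTranslate2 F g).Adj u v ↔ F.Adj (obSub u g) (obSub v g) := by
  constructor
  · rintro ⟨-, a, b, hab, ha, hb⟩
    subst ha; subst hb
    convert hab
    · cases a with
      | none => rfl
      | some q => simp [obSub, Equiv.optionCongr]
    · cases b with
      | none => rfl
      | some q => simp [obSub, Equiv.optionCongr]
  · intro h
    refine ⟨fun huv => h.ne (by rw [huv]), obSub u g, obSub v g, h, ?_, ?_⟩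
    · cases u with
      | none => rfl
      | some q => simp [obSub, Equiv.optionCongr]
    · cases v with
      | none => rfl
      | some q => simp [obSub, Equiv.optionCongr]

lemma obHalf_ne_zero {n : ℕ} (hpos : 0 < n) (hn : Even n) : obHalf n ≠ 0 := by
  obtain ⟨k, hk⟩ := hn
  simp only [obHalf, ne_eq, ZMod.natCast_eq_zero_iff]
  intro h
  have := Nat.le_of_dvd (n := n / 2) (by omega) h
  omega

lemma obHalf_add_self {n : ℕ} (hn : Even n) : obHalf n + obHalf n = 0 := by
  obtain ⟨k, hk⟩ := hn
  have : n / 2 + n / 2 = n := by omega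
  rw [obHalf, ← Nat.cast_add, this, ZMod.natCast_self]

lemma neg_obHalf {n : ℕ} (hn : Even n) : -obHalf n = obHalf n := by
  have := obHalf_add_self (n := n) hn
  linear_combination -this

lemma pathP_none {n : ℕ} (w : Option (Bool × ZMod n)) : s(none, w) ∉ pathP n := by
  simp [pathP, Sym2.eq_iff]

lemma pathP_ff {n : ℕ} (a b : ZMod n) :
    s(some (false, a), some (false, b)) ∈ pathP n ↔
      (a = 0 ∧ b = obHalf n) ∨ (a = obHalf n ∧ b = 0) := by
  simp [pathP, Sym2.eq_iff]

lemma pathP_ft {n : ℕ} (a b : ZMod n) :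
    s(some (false, a), some (true, b)) ∈ pathP n ↔ (a = obHalf n ∧ b = obHalf n) := by
  simp [pathP, Sym2.eq_iff]

lemma pathP_tf {n : ℕ} (a b : ZMod n) :
    s(some (true, a), some (false, b)) ∈ pathP n ↔ (a = obHalf n ∧ b = obHalf n) := by
  simp [pathP, Sym2.eq_iff, and_comm]

lemma pathP_tt {n : ℕ} (a b : ZMod n) :
    s(some (true, a), some (true, b)) ∈ pathP n ↔
      (a = obHalf n ∧ b = 0) ∨ (a = 0 ∧ b = obHalf n) := by
  simp [pathP, Sym2.eq_iff]

lemma pathPstar_none {n : ℕ} (w : Option (Bool × ZMod n)) : s(none, w) ∉ pathPstar n := by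
  simp [pathPstar, Sym2.eq_iff]

lemma pathPstar_ff {n : ℕ} (a b : ZMod n) :
    s(some (false, a), some (false, b)) ∉ pathPstar n := by
  simp [pathPstar, Sym2.eq_iff]

lemma pathPstar_tt {n : ℕ} (a b : ZMod n) :
    s(some (true, a), some (true, b)) ∉ pathPstar n := by
  simp [pathPstar, Sym2.eq_iff]

lemma pathPstar_ft {n : ℕ} (a b : ZMod n) :
    s(some (false, a), some (true, b)) ∈ pathPstar n ↔
      (a = 0 ∧ b = obHalf n) ∨ (a = obHalf n ∧ b = obHalf n) ∨ (a = obHalf n ∧ b = 0) := by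
  simp [pathPstar, Sym2.eq_iff]

lemma pathPstar_tf {n : ℕ} (a b : ZMod n) :
    s(some (true, a), some (false, b)) ∈ pathPstar n ↔
      (b = 0 ∧ a = obHalf n) ∨ (b = obHalf n ∧ a = obHalf n) ∨ (b = obHalf n ∧ a = 0) := by
  simp [pathPstar, Sym2.eq_iff]; tauto

lemma FAdj_iff {n : ℕ} (F : SimpleGraph (Option (Bool × ZMod n)))
    (hP : F.Adj (some (false, 0)) (some (false, obHalf n)) ∧
          F.Adj (some (false, obHalf n)) (some (true, obHalf n)) ∧
          F.Adj (some (true, obHalf n)) (some (true, 0)))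
    (u v : Option (Bool × ZMod n)) :
    F.Adj u v ↔ (F.deleteEdges (pathP n)).Adj u v ∨ s(u, v) ∈ pathP n := by
  by_cases hm : s(u, v) ∈ pathP n
  · simp only [hm, or_true, iff_true]
    have hm' := hm
    simp only [pathP, Set.mem_insert_iff, Set.mem_singleton_iff, Sym2.eq_iff] at hm'
    rcases hm' with (⟨rfl, rfl⟩ | ⟨rfl, rfl⟩) | (⟨rfl, rfl⟩ | ⟨rfl, rfl⟩) | (⟨rfl, rfl⟩ | ⟨rfl, rfl⟩)
    exacts [hP.1, hP.1.symm, hP.2.1, hP.2.1.symm, hP.2.2, hP.2.2.symm]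
  · simp [hm]

lemma FstarAdj {n : ℕ} (F : SimpleGraph (Option (Bool × ZMod n)))
    (u v : Option (Bool × ZMod n)) :
    (Fswitch F).Adj u v ↔
      (F.deleteEdges (pathP n)).Adj u v ∨ (s(u, v) ∈ pathPstar n ∧ u ≠ v) := by
  simp [Fswitch, SimpleGraph.fromEdgeSet_adj]

/-- two adjacent distinct vertices of a vertex of a 2-regular graph are all its neighbours -/
lemma nbhd_two {n : ℕ} (F : SimpleGraph (Option (Bool × ZMod n)))
    (hreg : ∀ v, (F.neighborSet v).ncard = 2)
    (v a b : Option (Bool × ZMod n)) (hab : a ≠ b) (ha : F.Adj v a) (hb : F.Adj v b) :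
    ∀ w, F.Adj v w ↔ w = a ∨ w = b := by
  intro w
  have hsub : {a, b} ⊆ F.neighborSet v := by
    rintro x (rfl | rfl) <;> assumption
  have hcard : (F.neighborSet v).ncard ≤ ({a, b} : Set _).ncard := by
    rw [hreg v, Set.ncard_pair hab]
  have hfin : (F.neighborSet v).Finite := by
    by_contra hinf
    have h2 := hreg v
    rw [Set.Infinite.ncard hinf] at h2
    omega
  have := Set.eq_of_subset_of_ncard_le hsub hcard hfin
  constructor
  · intro hw
    have : w ∈ ({a, b} : Set _) := this ▸ hw
    simpa using this
  · rintro (rfl | rfl) <;> assumption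

section
variable {n : ℕ} (hpos : 0 < n) (hn : Even n)
  (F : SimpleGraph (Option (Bool × ZMod n)))
  (hreg : ∀ v, (F.neighborSet v).ncard = 2)
  (hP : F.Adj (some (false, 0)) (some (false, obHalf n)) ∧
        F.Adj (some (false, obHalf n)) (some (true, obHalf n)) ∧
        F.Adj (some (true, obHalf n)) (some (true, 0)))
include hpos hn hreg hP

lemma adjA_iff : ∀ w, F.Adj (some (false, obHalf n)) w ↔
    w = some (false, 0) ∨ w = some (true, obHalf n) :=
  nbhd_two F hreg _ _ _ (by simp [(obHalf_ne_zero hpos hn).symm]) hP.1.symm hP.2.1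

lemma adjB_iff : ∀ w, F.Adj (some (true, obHalf n)) w ↔
    w = some (false, obHalf n) ∨ w = some (true, 0) :=
  nbhd_two F hreg _ _ _ (by simp) hP.2.1.symm hP.2.2

lemma noGA : ∀ w, ¬ (F.deleteEdges (pathP n)).Adj (some (false, obHalf n)) w := by
  intro w hw
  rw [SimpleGraph.deleteEdges_adj] at hw
  rcases (adjA_iff hpos hn F hreg hP w).1 hw.1 with rfl | rfl
  · exact hw.2 ((pathP_ff _ _).2 (Or.inr ⟨rfl, rfl⟩))
  · exact hw.2 ((pathP_ft _ _).2 ⟨rfl, rfl⟩)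

lemma noGB : ∀ w, ¬ (F.deleteEdges (pathP n)).Adj (some (true, obHalf n)) w := by
  intro w hw
  rw [SimpleGraph.deleteEdges_adj] at hw
  rcases (adjB_iff hpos hn F hreg hP w).1 hw.1 with rfl | rfl
  · exact hw.2 ((pathP_tf _ _).2 ⟨rfl, rfl⟩)
  · exact hw.2 ((pathP_tt _ _).2 (Or.inl ⟨rfl, rfl⟩))

lemma obIso : Nonempty (Fswitch F ≃g F) := by
  set A : Option (Bool × ZMod n) := some (false, obHalf n) with hA
  set B : Option (Bool × ZMod n) := some (true, obHalf n) with hB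
  have h0 : obHalf n ≠ 0 := obHalf_ne_zero hpos hn
  let σ : Option (Bool × ZMod n) ≃ Option (Bool × ZMod n) := Equiv.swap A B
  have sA : σ A = B := Equiv.swap_apply_left A B
  have sB : σ B = A := Equiv.swap_apply_right A B
  have hσeq : ∀ u c, σ u = c ↔ u = σ c := by
    intro u c
    rw [Equiv.apply_eq_iff_eq_symm_apply]
    exact Iff.rfl.trans (by rw [show σ.symm = σ from Equiv.symm_swap A B])
  have sF0 : σ (some (false, (0 : ZMod n))) = some (false, (0 : ZMod n)) :=
    Equiv.swap_apply_of_ne_of_ne (by simp [hA, h0.symm]) (by simp [hB])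
  have sT0 : σ (some (true, (0 : ZMod n))) = some (true, (0 : ZMod n)) :=
    Equiv.swap_apply_of_ne_of_ne (by simp [hA]) (by simp [hB, h0.symm])
  have hswap : ∀ u v, s(σ u, σ v) ∈ pathP n ↔ s(u, v) ∈ pathPstar n := by
    intro u v
    simp only [pathP, pathPstar, Set.mem_insert_iff, Set.mem_singleton_iff, Sym2.eq_iff, hσeq]
    rw [sA, sB, sF0, sT0, ← hA, ← hB]
    try tauto
  have hGinv : ∀ u v, (F.deleteEdges (pathP n)).Adj (σ u) (σ v) ↔
      (F.deleteEdges (pathP n)).Adj u v := by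
    intro u v
    by_cases hu : u = A ∨ u = B
    · constructor <;> intro hadj <;> exfalso
      · rcases hu with rfl | rfl
        · rw [sA] at hadj; exact noGB hpos hn F hreg hP _ hadj
        · rw [sB] at hadj; exact noGA hpos hn F hreg hP _ hadj
      · rcases hu with rfl | rfl
        · exact noGA hpos hn F hreg hP _ hadj
        · exact noGB hpos hn F hreg hP _ hadj
    · by_cases hv : v = A ∨ v = B
      · constructor <;> intro hadj <;> exfalso
        · rcases hv with rfl | rfl
          · rw [sA] at hadj; exact noGB hpos hn F hreg hP _ hadj.symm
          · rw [sB] at hadj; exact noGA hpos hn F hreg hP _ hadj.symm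
        · rcases hv with rfl | rfl
          · exact noGA hpos hn F hreg hP _ hadj.symm
          · exact noGB hpos hn F hreg hP _ hadj.symm
      · push_neg at hu hv
        rw [show σ u = u from Equiv.swap_apply_of_ne_of_ne hu.1 hu.2,
          show σ v = v from Equiv.swap_apply_of_ne_of_ne hv.1 hv.2]
  have hPdiag : ∀ u : Option (Bool × ZMod n), s(u, u) ∉ pathP n := by
    intro u hu
    simp only [pathP, Set.mem_insert_iff, Set.mem_singleton_iff, Sym2.eq_iff] at hu
    rcases hu with (⟨h1, h2⟩ | ⟨h1, h2⟩) | (⟨h1, h2⟩ | ⟨h1, h2⟩) | (⟨h1, h2⟩ | ⟨h1, h2⟩) <;>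
      rw [h1] at h2 <;> simp_all
  refine ⟨⟨σ, ?_⟩⟩
  intro u v
  show F.Adj (σ u) (σ v) ↔ (Fswitch F).Adj u v
  rw [FAdj_iff F hP, FstarAdj F, hGinv, hswap]
  constructor
  · rintro (hG' | hmem)
    · exact Or.inl hG'
    · refine Or.inr ⟨hmem, ?_⟩
      rintro rfl
      exact hPdiag (σ u) ((hswap u u).2 hmem)
  · rintro (hG' | ⟨hmem, hne⟩)
    · exact Or.inl hG'
    · exact Or.inr hmem
end

open Finset in
/-- The key uniqueness: each difference is realized by at most one ordered pair. -/
lemma obUniq {n : ℕ} (hpos : 0 < n) (hn : Even n)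
    (F : SimpleGraph (Option (Bool × ZMod n)))
    (hreg : ∀ v, (F.neighborSet v).ncard = 2)
    (x₀ x₁ : ZMod n)
    (hinf : ∀ v, F.Adj none v ↔ v = some (false, x₀) ∨ v = some (true, x₁))
    (hP : F.Adj (some (false, 0)) (some (false, obHalf n)) ∧
          F.Adj (some (false, obHalf n)) (some (true, obHalf n)) ∧
          F.Adj (some (true, obHalf n)) (some (true, 0)))
    (h00 : {d : ZMod n | ∃ a b : ZMod n,
      (F.deleteEdges (pathP n)).Adj (some (false, a)) (some (false, b)) ∧ a - b = d}
        = {d : ZMod n | d ≠ 0 ∧ d ≠ obHalf n})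
    (h01 : {d : ZMod n | ∃ a b : ZMod n,
      (F.deleteEdges (pathP n)).Adj (some (false, a)) (some (true, b)) ∧ a - b = d}
        = {d : ZMod n | d ≠ 0 ∧ d ≠ obHalf n})
    (h11 : {d : ZMod n | ∃ a b : ZMod n,
      (F.deleteEdges (pathP n)).Adj (some (true, a)) (some (true, b)) ∧ a - b = d}
        = {d : ZMod n | d ≠ 0 ∧ d ≠ obHalf n}) :
    ∀ (i j : Bool) (a b a' b' : ZMod n),
      (F.deleteEdges (pathP n)).Adj (some (i, a)) (some (j, b)) →
      (F.deleteEdges (pathP n)).Adj (some (i, a')) (some (j, b')) →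
      a - b = a' - b' → a = a' ∧ b = b' := by
  haveI : NeZero n := ⟨hpos.ne'⟩
  classical
  obtain ⟨k, hk⟩ := hn
  have hn2 : 2 ≤ n := by omega
  have h0 : obHalf n ≠ 0 := obHalf_ne_zero hpos ⟨k, hk⟩
  have hneg : -obHalf n = obHalf n := neg_obHalf ⟨k, hk⟩
  set G := F.deleteEdges (pathP n) with hG
  -- difference of any G-edge avoids 0 and n/2
  have hdiff : ∀ (i j : Bool) (a b : ZMod n), G.Adj (some (i, a)) (some (j, b)) →
      a - b ≠ 0 ∧ a - b ≠ obHalf n := by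
    intro i j a b hadj
    have mem : ∀ {s t : Set (ZMod n)} (x : ZMod n), s = t → x ∈ s → x ∈ t := by
      rintro s t x rfl hx; exact hx
    cases i <;> cases j
    · exact mem (a - b) h00 ⟨a, b, hadj, rfl⟩
    · exact mem (a - b) h01 ⟨a, b, hadj, rfl⟩
    · -- (true, false)
      have hmm := mem (b - a) h01 ⟨b, a, hadj.symm, rfl⟩
      have hba : b - a = -(a - b) := by ring
      refine ⟨fun hz => hmm.1 ?_, fun hh => hmm.2 ?_⟩
      · rw [hba, hz, neg_zero]
      · rw [hba, hh, hneg]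
    · exact mem (a - b) h11 ⟨a, b, hadj, rfl⟩
  -- existence of a pair for each admissible difference
  have hexist : ∀ (i j : Bool) (d : ZMod n), d ≠ 0 → d ≠ obHalf n →
      ∃ a b : ZMod n, G.Adj (some (i, a)) (some (j, b)) ∧ a - b = d := by
    intro i j d hd0 hdh
    have mem : ∀ {s t : Set (ZMod n)} (x : ZMod n), s = t → x ∈ t → x ∈ s := by
      rintro s t x rfl hx; exact hx
    cases i <;> cases j
    · exact mem d h00 ⟨hd0, hdh⟩
    · exact mem d h01 ⟨hd0, hdh⟩
    · have hd0' : -d ≠ 0 := fun hz => hd0 (neg_eq_zero.mp hz)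
      have hdh' : -d ≠ obHalf n := fun hh => hdh (by rw [← neg_neg d, hh, hneg])
      obtain ⟨a, b, hadj, hab⟩ := mem (-d) h01 ⟨hd0', hdh'⟩
      refine ⟨b, a, hadj.symm, ?_⟩
      have hba : b - a = -(a - b) := by ring
      rw [hba, hab, neg_neg]
    · exact mem d h11 ⟨hd0, hdh⟩
  -- the classifying map
  set Φ : (Option (Bool × ZMod n)) × (Option (Bool × ZMod n)) → (Bool × Bool) × ZMod n :=
    fun p => match p with
      | (some q, some r) => ((q.1, r.1), q.2 - r.2)
      | _ => ((true, true), 0) with hΦ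
  set Dfin : Finset ((Option (Bool × ZMod n)) × (Option (Bool × ZMod n))) :=
    univ.filter fun p => G.Adj p.1 p.2 with hDfin
  set Dpure : Finset ((Option (Bool × ZMod n)) × (Option (Bool × ZMod n))) :=
    Dfin.filter fun p => p.1 ≠ none ∧ p.2 ≠ none with hDpure
  set T' : Finset ((Bool × Bool) × ZMod n) :=
    (univ : Finset (Bool × Bool)) ×ˢ ((univ : Finset (ZMod n)) \ {0, obHalf n}) with hT'
  -- degrees of F are 2
  have hdeg : ∀ v, F.degree v = 2 := by
    intro v
    have : F.degree v = (F.neighborSet v).ncard := by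
      rw [Set.ncard_eq_toFinset_card']; rfl
    rw [this, hreg v]
  -- number of edges of F
  have hcardV : Fintype.card (Option (Bool × ZMod n)) = 2 * n + 1 := by
    simp [ZMod.card n, Nat.mul_comm]
  have hFE : F.edgeFinset.card = 2 * n + 1 := by
    have hs := F.sum_degrees_eq_twice_card_edges
    rw [Finset.sum_congr rfl (fun v _ => hdeg v), Finset.sum_const, smul_eq_mul, card_univ,
      hcardV] at hs
    omega
  -- number of edges of G
  have hGE : G.edgeFinset.card = 2 * n - 2 := by
    have hPF : ({s(some (false, 0), some (false, obHalf n)),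
        s(some (false, obHalf n), some (true, obHalf n)),
        s(some (true, obHalf n), some (true, 0))} : Finset (Sym2 (Option (Bool × ZMod n)))) ⊆
        F.edgeFinset := by
      intro e he
      simp only [Finset.mem_insert, Finset.mem_singleton] at he
      rcases he with rfl | rfl | rfl <;>
        rw [SimpleGraph.mem_edgeFinset, SimpleGraph.mem_edgeSet] <;>
        [exact hP.1; exact hP.2.1; exact hP.2.2]
    have hcard3 : ({s(some (false, 0), some (false, obHalf n)),
        s(some (false, obHalf n), some (true, obHalf n)),
        s(some (true, obHalf n), some (true, 0))} : Finset (Sym2 (Option (Bool × ZMod n)))).card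
        = 3 := by
      rw [Finset.card_insert_of_notMem, Finset.card_insert_of_notMem, Finset.card_singleton]
      · simp [Sym2.eq_iff, h0, h0.symm]
      · simp [Sym2.eq_iff, h0, h0.symm]
    have hEq : G.edgeFinset = F.edgeFinset \
        {s(some (false, 0), some (false, obHalf n)),
         s(some (false, obHalf n), some (true, obHalf n)),
         s(some (true, obHalf n), some (true, 0))} := by
      ext e
      simp only [SimpleGraph.mem_edgeFinset, hG, SimpleGraph.edgeSet_deleteEdges,
        Set.mem_diff, Finset.mem_sdiff, Finset.mem_insert, Finset.mem_singleton, pathP,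
        Set.mem_insert_iff, Set.mem_singleton_iff]
    rw [hEq, Finset.card_sdiff_of_subset hPF, hcard3, hFE]
    omega
  -- counting ordered adjacent pairs
  have hfibcard : ∀ v, (Dfin.filter fun p => p.1 = v).card = G.degree v := by
    intro v
    rw [show G.degree v = (G.neighborFinset v).card from rfl]
    apply Finset.card_bij (fun p _ => p.2)
    · rintro ⟨p1, p2⟩ hp
      simp only [Finset.mem_filter, hDfin, Finset.mem_univ, true_and] at hp
      rw [SimpleGraph.mem_neighborFinset, ← hp.2]
      exact hp.1
    · rintro ⟨p1, p2⟩ hp ⟨q1, q2⟩ hq hpq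
      simp only [Finset.mem_filter, hDfin, Finset.mem_univ, true_and] at hp hq
      simp only [Prod.mk.injEq]
      exact ⟨hp.2.trans hq.2.symm, hpq⟩
    · intro w hw
      rw [SimpleGraph.mem_neighborFinset] at hw
      exact ⟨(v, w), by simp [hDfin, hw], rfl⟩
  have hDfinCard : Dfin.card = 2 * (2 * n - 2) := by
    have hfib : ∀ p ∈ Dfin, (p.1 : Option (Bool × ZMod n)) ∈
        (univ : Finset (Option (Bool × ZMod n))) := fun p _ => mem_univ _
    rw [Finset.card_eq_sum_card_fiberwise hfib,
      Finset.sum_congr rfl fun v _ => hfibcard v, G.sum_degrees_eq_twice_card_edges, hGE]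
  have hGinf : ∀ w, G.Adj none w ↔ w = some (false, x₀) ∨ w = some (true, x₁) := by
    intro w
    rw [hG, SimpleGraph.deleteEdges_adj]
    constructor
    · rintro ⟨hadj, -⟩; exact (hinf w).1 hadj
    · intro hw; exact ⟨(hinf w).2 hw, pathP_none w⟩
  have hDnoneCard : (Dfin.filter fun p => ¬(p.1 ≠ none ∧ p.2 ≠ none)).card = 4 := by
    have heq : (Dfin.filter fun p => ¬(p.1 ≠ none ∧ p.2 ≠ none)) =
        {((none : Option (Bool × ZMod n)), some (false, x₀)), (none, some (true, x₁)),
         (some (false, x₀), none), (some (true, x₁), none)} := by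
      ext ⟨p1, p2⟩
      rcases p1 with _ | q1 <;> rcases p2 with _ | q2 <;>
        simp [hDfin, hGinf, SimpleGraph.adj_comm, Prod.ext_iff] <;> tauto
    rw [heq, Finset.card_insert_of_notMem (by simp), Finset.card_insert_of_notMem (by simp),
      Finset.card_insert_of_notMem (by simp), Finset.card_singleton]
  have hDpureCard : Dpure.card = 4 * n - 8 := by
    have hsplit := Finset.card_filter_add_card_filter_not
      (s := Dfin) (p := fun p => p.1 ≠ none ∧ p.2 ≠ none)
    simp only [← hDpure] at hsplit
    have hneg' : (Dfin.filter fun a => ¬(a.1 ≠ none ∧ a.2 ≠ none)).card = 4 := hDnoneCard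
    omega
  have himage : Dpure.image Φ = T' := by
    apply Finset.Subset.antisymm
    · intro y hy
      obtain ⟨p, hp, rfl⟩ := Finset.mem_image.mp hy
      rcases p with ⟨p1, p2⟩
      simp only [hDpure, hDfin, Finset.mem_filter, Finset.mem_univ, true_and, ne_eq] at hp
      obtain ⟨hadj, h1, h2⟩ := hp
      rcases p1 with _ | ⟨i, a⟩
      · exact absurd rfl h1
      rcases p2 with _ | ⟨j, b⟩
      · exact absurd rfl h2
      have hd := hdiff i j a b hadj
      simp [hT', hΦ, Finset.mem_product, Finset.mem_sdiff, hd.1, hd.2]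
    · intro y hy
      rcases y with ⟨⟨i, j⟩, d⟩
      simp only [hT', Finset.mem_product, Finset.mem_univ, Finset.mem_sdiff, true_and,
        Finset.mem_insert, Finset.mem_singleton, not_or] at hy
      obtain ⟨a, b, hadj, hab⟩ := hexist i j d hy.1 hy.2
      refine Finset.mem_image.mpr ⟨(some (i, a), some (j, b)), ?_, ?_⟩
      · simp [hDpure, hDfin, hadj]
      · simp [hΦ, hab]
  have hT'card : T'.card = 4 * (n - 2) := by
    have hc2 : ({0, obHalf n} : Finset (ZMod n)).card = 2 := by
      rw [Finset.card_insert_of_notMem (by simp [h0.symm]), Finset.card_singleton]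
    have hcs : ((univ : Finset (ZMod n)) \ {0, obHalf n}).card = n - 2 := by
      rw [Finset.card_sdiff_of_subset (fun x _ => mem_univ x), Finset.card_univ, ZMod.card, hc2]
    rw [hT', Finset.card_product, hcs]
    simp
  have hinj : Set.InjOn Φ ↑Dpure := by
    apply Finset.card_image_iff.mp
    rw [himage, hT'card, hDpureCard]
    omega
  intro i j a b a' b' hadj hadj' heq
  have hmem : (some (i, a), some (j, b)) ∈ Dpure := by simp [hDpure, hDfin, hadj]
  have hmem' : (some (i, a'), some (j, b')) ∈ Dpure := by simp [hDpure, hDfin, hadj']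
  have hres := hinj hmem hmem' (by simp [hΦ, heq])
  simp only [Prod.mk.injEq, Option.some.injEq] at hres
  exact ⟨hres.1.2, hres.2.2⟩

/-- the "first half" predicate -/
def obFH {n : ℕ} (g : ZMod n) : Prop := 1 ≤ g.val ∧ g.val ≤ n / 2

lemma obFH_add_half {n : ℕ} (hpos : 0 < n) (hn : Even n) (x : ZMod n) :
    obFH (x + obHalf n) ↔ ¬ obFH x := by
  haveI : NeZero n := ⟨hpos.ne'⟩
  obtain ⟨k, hk⟩ := hn
  have hk1 : 1 ≤ k := by omega
  have hxv : x.val < n := ZMod.val_lt x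
  have hhv : (obHalf n).val = n / 2 := by
    rw [obHalf, ZMod.val_natCast, Nat.mod_eq_of_lt (by omega)]
  have hval : (x + obHalf n).val = (x.val + n / 2) % n := by
    rw [ZMod.val_add, hhv]
  have hmod : (x.val + n / 2) % n =
      if x.val + n / 2 < n then x.val + n / 2 else x.val + n / 2 - n := by
    split
    · exact Nat.mod_eq_of_lt (by assumption)
    · rw [Nat.mod_eq_sub_mod (by omega), Nat.mod_eq_of_lt (by omega)]
  unfold obFH
  rw [hval, hmod]
  split <;> omega

lemma obHalfPair {n : ℕ} (hpos : 0 < n) (hn : Even n) (x : ZMod n) :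
    ∃! g : ZMod n, obFH g ∧ (g = x ∨ g = x + obHalf n) := by
  by_cases hx : obFH x
  · refine ⟨x, ⟨hx, Or.inl rfl⟩, ?_⟩
    rintro g ⟨hg, rfl | rfl⟩
    · rfl
    · exact absurd hx ((obFH_add_half hpos hn x).1 hg)
  · refine ⟨x + obHalf n, ⟨(obFH_add_half hpos hn x).2 hx, Or.inr rfl⟩, ?_⟩
    rintro g ⟨hg, rfl | rfl⟩
    · exact absurd hg hx
    · rfl

lemma obHalfPair' {n : ℕ} (hpos : 0 < n) (hn : Even n) (x : ZMod n) :
    ∃! g : ZMod n, ¬ obFH g ∧ (g = x ∨ g = x + obHalf n) := by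
  by_cases hx : obFH x
  · refine ⟨x + obHalf n, ⟨fun hc => ((obFH_add_half hpos hn x).1 hc) hx, Or.inr rfl⟩, ?_⟩
    rintro g ⟨hg, rfl | rfl⟩
    · exact absurd hx hg
    · rfl
  · refine ⟨x, ⟨hx, Or.inl rfl⟩, ?_⟩
    rintro g ⟨hg, rfl | rfl⟩
    · rfl
    · exact absurd ((obFH_add_half hpos hn x).2 hx) hg


section Core
variable {n : ℕ}

/-- differences of `F - P` edges avoid `0` and `n/2` -/
lemma obDiff (hn : Even n)
    (F : SimpleGraph (Option (Bool × ZMod n)))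
    (h00 : {d : ZMod n | ∃ a b : ZMod n,
      (F.deleteEdges (pathP n)).Adj (some (false, a)) (some (false, b)) ∧ a - b = d}
        = {d : ZMod n | d ≠ 0 ∧ d ≠ obHalf n})
    (h01 : {d : ZMod n | ∃ a b : ZMod n,
      (F.deleteEdges (pathP n)).Adj (some (false, a)) (some (true, b)) ∧ a - b = d}
        = {d : ZMod n | d ≠ 0 ∧ d ≠ obHalf n})
    (h11 : {d : ZMod n | ∃ a b : ZMod n,
      (F.deleteEdges (pathP n)).Adj (some (true, a)) (some (true, b)) ∧ a - b = d}
        = {d : ZMod n | d ≠ 0 ∧ d ≠ obHalf n}) :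
    ∀ (i j : Bool) (a b : ZMod n), (F.deleteEdges (pathP n)).Adj (some (i, a)) (some (j, b)) →
      a - b ≠ 0 ∧ a - b ≠ obHalf n := by
  have hneg : -obHalf n = obHalf n := neg_obHalf hn
  intro i j a b hadj
  have mem : ∀ {s t : Set (ZMod n)} (x : ZMod n), s = t → x ∈ s → x ∈ t := by
    rintro s t x rfl hx; exact hx
  cases i <;> cases j
  · exact mem (a - b) h00 ⟨a, b, hadj, rfl⟩
  · exact mem (a - b) h01 ⟨a, b, hadj, rfl⟩
  · have hmm := mem (b - a) h01 ⟨b, a, hadj.symm, rfl⟩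
    have hba : b - a = -(a - b) := by ring
    refine ⟨fun hz => hmm.1 ?_, fun hh => hmm.2 ?_⟩
    · rw [hba, hz, neg_zero]
    · rw [hba, hh, hneg]
  · exact mem (a - b) h11 ⟨a, b, hadj, rfl⟩

/-- every admissible difference is realized -/
lemma obExist (hn : Even n)
    (F : SimpleGraph (Option (Bool × ZMod n)))
    (h00 : {d : ZMod n | ∃ a b : ZMod n,
      (F.deleteEdges (pathP n)).Adj (some (false, a)) (some (false, b)) ∧ a - b = d}
        = {d : ZMod n | d ≠ 0 ∧ d ≠ obHalf n})
    (h01 : {d : ZMod n | ∃ a b : ZMod n,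
      (F.deleteEdges (pathP n)).Adj (some (false, a)) (some (true, b)) ∧ a - b = d}
        = {d : ZMod n | d ≠ 0 ∧ d ≠ obHalf n})
    (h11 : {d : ZMod n | ∃ a b : ZMod n,
      (F.deleteEdges (pathP n)).Adj (some (true, a)) (some (true, b)) ∧ a - b = d}
        = {d : ZMod n | d ≠ 0 ∧ d ≠ obHalf n}) :
    ∀ (i j : Bool) (d : ZMod n), d ≠ 0 → d ≠ obHalf n →
      ∃ a b : ZMod n, (F.deleteEdges (pathP n)).Adj (some (i, a)) (some (j, b)) ∧ a - b = d := by
  have hneg : -obHalf n = obHalf n := neg_obHalf hn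
  intro i j d hd0 hdh
  have mem : ∀ {s t : Set (ZMod n)} (x : ZMod n), s = t → x ∈ t → x ∈ s := by
    rintro s t x rfl hx; exact hx
  cases i <;> cases j
  · exact mem d h00 ⟨hd0, hdh⟩
  · exact mem d h01 ⟨hd0, hdh⟩
  · have hd0' : -d ≠ 0 := fun hz => hd0 (neg_eq_zero.mp hz)
    have hdh' : -d ≠ obHalf n := fun hh => hdh (by rw [← neg_neg d, hh, hneg])
    obtain ⟨a, b, hadj, hab⟩ := mem (-d) h01 ⟨hd0', hdh'⟩
    refine ⟨b, a, hadj.symm, ?_⟩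
    have hba : b - a = -(a - b) := by ring
    rw [hba, hab, neg_neg]
  · exact mem d h11 ⟨hd0, hdh⟩

/-- the heart of the decomposition: each pair of distinct vertices is covered by exactly one
translation index. -/
lemma obCore (hpos : 0 < n) (hn : Even n)
    (F : SimpleGraph (Option (Bool × ZMod n)))
    (x₀ x₁ : ZMod n)
    (hinf : ∀ v, F.Adj none v ↔ v = some (false, x₀) ∨ v = some (true, x₁))
    (hP : F.Adj (some (false, 0)) (some (false, obHalf n)) ∧
          F.Adj (some (false, obHalf n)) (some (true, obHalf n)) ∧
          F.Adj (some (true, obHalf n)) (some (true, 0)))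
    (hdiff : ∀ (i j : Bool) (a b : ZMod n),
      (F.deleteEdges (pathP n)).Adj (some (i, a)) (some (j, b)) →
        a - b ≠ 0 ∧ a - b ≠ obHalf n)
    (hexist : ∀ (i j : Bool) (d : ZMod n), d ≠ 0 → d ≠ obHalf n →
      ∃ a b : ZMod n, (F.deleteEdges (pathP n)).Adj (some (i, a)) (some (j, b)) ∧ a - b = d)
    (huniq : ∀ (i j : Bool) (a b a' b' : ZMod n),
      (F.deleteEdges (pathP n)).Adj (some (i, a)) (some (j, b)) →
      (F.deleteEdges (pathP n)).Adj (some (i, a')) (some (j, b')) →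
      a - b = a' - b' → a = a' ∧ b = b') :
    ∀ u v : Option (Bool × ZMod n), u ≠ v →
      ∃! g : ZMod n,
        (obFH g ∧ (obTranslate2 F g).Adj u v) ∨
        (¬ obFH g ∧ (obTranslate2 (Fswitch F) g).Adj u v) := by
  haveI : NeZero n := ⟨hpos.ne'⟩
  have h0 : obHalf n ≠ 0 := obHalf_ne_zero hpos hn
  have h2 : obHalf n + obHalf n = 0 := obHalf_add_self hn
  have e3 : ∀ x g c : ZMod n, x - g = c ↔ g = x - c := by
    intro x g c; constructor <;> intro H <;> linear_combination -H
  have hGinfn : ∀ w, (F.deleteEdges (pathP n)).Adj none w ↔ F.Adj none w := by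
    intro w; rw [SimpleGraph.deleteEdges_adj]
    exact ⟨fun hh => hh.1, fun hh => ⟨hh, pathP_none w⟩⟩
  have hFsInf : ∀ w, (Fswitch F).Adj none w ↔
      w = some (false, x₀) ∨ w = some (true, x₁) := by
    intro w; rw [FstarAdj F]
    constructor
    · rintro (hGg | ⟨hmem, -⟩)
      · exact (hinf w).1 ((hGinfn w).1 hGg)
      · exact absurd hmem (pathPstar_none w)
    · intro hw; exact Or.inl ((hGinfn w).2 ((hinf w).2 hw))
  have hinf2 : ∀ w, F.Adj w none ↔ w = some (false, x₀) ∨ w = some (true, x₁) :=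
    fun w => (F.adj_comm w none).trans (hinf w)
  have hFsInf2 : ∀ w, (Fswitch F).Adj w none ↔
      w = some (false, x₀) ∨ w = some (true, x₁) :=
    fun w => ((Fswitch F).adj_comm w none).trans (hFsInf w)
  -- the (0,·)–(1,·) case, for arbitrary x y
  have coreFT : ∀ x y : ZMod n,
      ∃! g : ZMod n,
        (obFH g ∧ (obTranslate2 F g).Adj (some (false, x)) (some (true, y))) ∨
        (¬ obFH g ∧ (obTranslate2 (Fswitch F) g).Adj (some (false, x)) (some (true, y))) := by
    intro x y
    by_cases hd0 : x - y = 0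
    · have hxy : x = y := by linear_combination hd0
      subst hxy
      refine (existsUnique_congr ?_).mpr
        (⟨x + obHalf n, rfl, fun z hz => hz⟩ : ∃! g : ZMod n, g = x + obHalf n)
      intro g
      simp only [obTranslate2_adj, obSub_some]
      rw [FAdj_iff F hP, FstarAdj F, pathP_ft, pathPstar_ft]
      constructor
      · rintro (⟨-, hGg | hmem⟩ | ⟨-, hGg | ⟨hmem, -⟩⟩)
        · exact absurd (by ring : (x - g) - (x - g) = 0) (hdiff _ _ _ _ hGg).1
        · linear_combination -hmem.1 - h2
        · exact absurd (by ring : (x - g) - (x - g) = 0) (hdiff _ _ _ _ hGg).1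
        · rcases hmem with ⟨ha, hb⟩ | ⟨ha, hb⟩ | ⟨ha, hb⟩
          · exact absurd (by linear_combination ha - hb : obHalf n = 0) h0
          · linear_combination -ha - h2
          · linear_combination -ha - h2
      · rintro rfl
        rcases em (obFH (x + obHalf n)) with hf | hf
        · exact Or.inl ⟨hf, Or.inr ⟨by linear_combination -h2, by linear_combination -h2⟩⟩
        · exact Or.inr ⟨hf, Or.inr ⟨Or.inr (Or.inl
            ⟨by linear_combination -h2, by linear_combination -h2⟩), by simp⟩⟩
    · by_cases hdh : x - y = obHalf n
      · have hyx : y = x + obHalf n := by linear_combination -hdh - h2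
        refine (existsUnique_congr ?_).mpr (obHalfPair' hpos hn x)
        intro g
        simp only [obTranslate2_adj, obSub_some]
        rw [FAdj_iff F hP, FstarAdj F, pathP_ft, pathPstar_ft]
        constructor
        · rintro (⟨hf, hGg | hmem⟩ | ⟨hf, hGg | ⟨hmem, -⟩⟩)
          · exact absurd (by linear_combination hdh : (x - g) - (y - g) = obHalf n)
              (hdiff _ _ _ _ hGg).2
          · exact absurd (by linear_combination hmem.1 - hmem.2 : x - y = 0) hd0
          · exact absurd (by linear_combination hdh : (x - g) - (y - g) = obHalf n)
              (hdiff _ _ _ _ hGg).2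
          · refine ⟨hf, ?_⟩
            rcases hmem with ⟨ha, hb⟩ | ⟨ha, hb⟩ | ⟨ha, hb⟩
            · exact Or.inl (by linear_combination -ha)
            · exact absurd (by linear_combination ha - hb : x - y = 0) hd0
            · exact Or.inr (by linear_combination -ha - h2)
        · rintro ⟨hf, rfl | rfl⟩
          · exact Or.inr ⟨hf, Or.inr ⟨Or.inl ⟨by ring, by linear_combination hyx⟩, by simp⟩⟩
          · exact Or.inr ⟨hf, Or.inr ⟨Or.inr (Or.inr
              ⟨by linear_combination -h2, by linear_combination hyx⟩), by simp⟩⟩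
      · obtain ⟨a, b, hadj, hab⟩ := hexist false true (x - y) hd0 hdh
        have hB : ∀ g : ZMod n,
            ((obFH g ∧ (obTranslate2 F g).Adj (some (false, x)) (some (true, y))) ∨
             (¬ obFH g ∧ (obTranslate2 (Fswitch F) g).Adj (some (false, x)) (some (true, y))))
            ↔ (F.deleteEdges (pathP n)).Adj (some (false, x - g)) (some (true, y - g)) := by
          intro g
          simp only [obTranslate2_adj, obSub_some]
          rw [FAdj_iff F hP, FstarAdj F, pathP_ft, pathPstar_ft]
          constructor
          · rintro (⟨-, hGg | hmem⟩ | ⟨-, hGg | ⟨hmem, -⟩⟩)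
            · exact hGg
            · exact absurd (by linear_combination hmem.1 - hmem.2 : x - y = 0) hd0
            · exact hGg
            · exfalso
              rcases hmem with ⟨ha, hb⟩ | ⟨ha, hb⟩ | ⟨ha, hb⟩
              · exact hdh (by linear_combination ha - hb - h2)
              · exact hd0 (by linear_combination ha - hb)
              · exact hdh (by linear_combination ha - hb)
          · intro hGg
            rcases em (obFH g) with hf | hf
            · exact Or.inl ⟨hf, Or.inl hGg⟩
            · exact Or.inr ⟨hf, Or.inl hGg⟩
        have hadj' : (F.deleteEdges (pathP n)).Adj (some (false, x - (x - a)))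
            (some (true, y - (x - a))) := by
          have hx' : x - (x - a) = a := by ring
          have hy' : y - (x - a) = b := by linear_combination hab
          rw [hx', hy']; exact hadj
        refine (existsUnique_congr hB).mpr ⟨x - a, hadj', ?_⟩
        · intro g hg
          have hres := huniq false true (x - g) (y - g) a b hg hadj (by linear_combination -hab)
          linear_combination -hres.1
  intro u v huv
  rcases u with _ | ⟨i, x⟩
  · rcases v with _ | ⟨j, y⟩
    · exact absurd rfl huv
    · cases j
      · refine (existsUnique_congr ?_).mpr
          (⟨y - x₀, rfl, fun z hz => hz⟩ : ∃! g : ZMod n, g = y - x₀)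
        intro g
        simp only [obTranslate2_adj, obSub_none, obSub_some, hFsInf, hinf]
        rcases em (obFH g) with hf | hf <;> simp [hf, e3]
      · refine (existsUnique_congr ?_).mpr
          (⟨y - x₁, rfl, fun z hz => hz⟩ : ∃! g : ZMod n, g = y - x₁)
        intro g
        simp only [obTranslate2_adj, obSub_none, obSub_some, hFsInf, hinf]
        rcases em (obFH g) with hf | hf <;> simp [hf, e3]
  · rcases v with _ | ⟨j, y⟩
    · cases i
      · refine (existsUnique_congr ?_).mpr
          (⟨x - x₀, rfl, fun z hz => hz⟩ : ∃! g : ZMod n, g = x - x₀)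
        intro g
        simp only [obTranslate2_adj, obSub_none, obSub_some, hFsInf2, hinf2]
        rcases em (obFH g) with hf | hf <;> simp [hf, e3]
      · refine (existsUnique_congr ?_).mpr
          (⟨x - x₁, rfl, fun z hz => hz⟩ : ∃! g : ZMod n, g = x - x₁)
        intro g
        simp only [obTranslate2_adj, obSub_none, obSub_some, hFsInf2, hinf2]
        rcases em (obFH g) with hf | hf <;> simp [hf, e3]
    · cases i <;> cases j
      · -- (false, false)
        have hxy : x ≠ y := fun hc => huv (by rw [hc])
        by_cases hd : x - y = obHalf n
        · have hyx : y = x + obHalf n := by linear_combination -hd - h2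
          refine (existsUnique_congr ?_).mpr (obHalfPair hpos hn x)
          intro g
          simp only [obTranslate2_adj, obSub_some]
          rw [FAdj_iff F hP, FstarAdj F, pathP_ff]
          constructor
          · rintro (⟨hf, hGg | hmem⟩ | ⟨hf, hGg | ⟨hmem, -⟩⟩)
            · exact absurd (by linear_combination hd : (x - g) - (y - g) = obHalf n)
                (hdiff _ _ _ _ hGg).2
            · refine ⟨hf, ?_⟩
              rcases hmem with ⟨ha, hb⟩ | ⟨ha, hb⟩
              · exact Or.inl (by linear_combination -ha)
              · exact Or.inr (by linear_combination -ha - h2)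
            · exact absurd (by linear_combination hd : (x - g) - (y - g) = obHalf n)
                (hdiff _ _ _ _ hGg).2
            · exact absurd hmem (pathPstar_ff _ _)
          · rintro ⟨hf, rfl | rfl⟩
            · exact Or.inl ⟨hf, Or.inr (Or.inl ⟨by ring, by linear_combination -hd - h2⟩)⟩
            · exact Or.inl ⟨hf, Or.inr (Or.inr ⟨by linear_combination -h2,
                by linear_combination hyx⟩)⟩
        · have hd0 : x - y ≠ 0 := fun hz => hxy (by linear_combination hz)
          obtain ⟨a, b, hadj, hab⟩ := hexist false false (x - y) hd0 hd
          have hB : ∀ g : ZMod n,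
              ((obFH g ∧ (obTranslate2 F g).Adj (some (false, x)) (some (false, y))) ∨
               (¬ obFH g ∧ (obTranslate2 (Fswitch F) g).Adj (some (false, x)) (some (false, y))))
              ↔ (F.deleteEdges (pathP n)).Adj (some (false, x - g)) (some (false, y - g)) := by
            intro g
            simp only [obTranslate2_adj, obSub_some]
            rw [FAdj_iff F hP, FstarAdj F, pathP_ff]
            constructor
            · rintro (⟨-, hGg | hmem⟩ | ⟨-, hGg | ⟨hmem, -⟩⟩)
              · exact hGg
              · exfalso
                rcases hmem with ⟨ha, hb⟩ | ⟨ha, hb⟩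
                · exact hd (by linear_combination ha - hb - h2)
                · exact hd (by linear_combination ha - hb)
              · exact hGg
              · exact absurd hmem (pathPstar_ff _ _)
            · intro hGg
              rcases em (obFH g) with hf | hf
              · exact Or.inl ⟨hf, Or.inl hGg⟩
              · exact Or.inr ⟨hf, Or.inl hGg⟩
          have hadj' : (F.deleteEdges (pathP n)).Adj (some (false, x - (x - a)))
              (some (false, y - (x - a))) := by
            have hx' : x - (x - a) = a := by ring
            have hy' : y - (x - a) = b := by linear_combination hab
            rw [hx', hy']; exact hadj
          refine (existsUnique_congr hB).mpr ⟨x - a, hadj', ?_⟩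
          · intro g hg
            have hres := huniq false false (x - g) (y - g) a b hg hadj
              (by linear_combination -hab)
            linear_combination -hres.1
      · exact coreFT x y
      · refine (existsUnique_congr ?_).mpr (coreFT y x)
        intro g
        exact or_congr (and_congr_right fun _ => (obTranslate2 F g).adj_comm _ _)
          (and_congr_right fun _ => (obTranslate2 (Fswitch F) g).adj_comm _ _)
      · -- (true, true)
        have hxy : x ≠ y := fun hc => huv (by rw [hc])
        by_cases hd : x - y = obHalf n
        · have hyx : y = x + obHalf n := by linear_combination -hd - h2
          refine (existsUnique_congr ?_).mpr (obHalfPair hpos hn x)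
          intro g
          simp only [obTranslate2_adj, obSub_some]
          rw [FAdj_iff F hP, FstarAdj F, pathP_tt]
          constructor
          · rintro (⟨hf, hGg | hmem⟩ | ⟨hf, hGg | ⟨hmem, -⟩⟩)
            · exact absurd (by linear_combination hd : (x - g) - (y - g) = obHalf n)
                (hdiff _ _ _ _ hGg).2
            · refine ⟨hf, ?_⟩
              rcases hmem with ⟨ha, hb⟩ | ⟨ha, hb⟩
              · exact Or.inr (by linear_combination -ha - h2)
              · exact Or.inl (by linear_combination -ha)
            · exact absurd (by linear_combination hd : (x - g) - (y - g) = obHalf n)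
                (hdiff _ _ _ _ hGg).2
            · exact absurd hmem (pathPstar_tt _ _)
          · rintro ⟨hf, rfl | rfl⟩
            · exact Or.inl ⟨hf, Or.inr (Or.inr ⟨by ring, by linear_combination -hd - h2⟩)⟩
            · exact Or.inl ⟨hf, Or.inr (Or.inl ⟨by linear_combination -h2,
                by linear_combination hyx⟩)⟩
        · have hd0 : x - y ≠ 0 := fun hz => hxy (by linear_combination hz)
          obtain ⟨a, b, hadj, hab⟩ := hexist true true (x - y) hd0 hd
          have hB : ∀ g : ZMod n,
              ((obFH g ∧ (obTranslate2 F g).Adj (some (true, x)) (some (true, y))) ∨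
               (¬ obFH g ∧ (obTranslate2 (Fswitch F) g).Adj (some (true, x)) (some (true, y))))
              ↔ (F.deleteEdges (pathP n)).Adj (some (true, x - g)) (some (true, y - g)) := by
            intro g
            simp only [obTranslate2_adj, obSub_some]
            rw [FAdj_iff F hP, FstarAdj F, pathP_tt]
            constructor
            · rintro (⟨-, hGg | hmem⟩ | ⟨-, hGg | ⟨hmem, -⟩⟩)
              · exact hGg
              · exfalso
                rcases hmem with ⟨ha, hb⟩ | ⟨ha, hb⟩
                · exact hd (by linear_combination ha - hb)
                · exact hd (by linear_combination ha - hb - h2)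
              · exact hGg
              · exact absurd hmem (pathPstar_tt _ _)
            · intro hGg
              rcases em (obFH g) with hf | hf
              · exact Or.inl ⟨hf, Or.inl hGg⟩
              · exact Or.inr ⟨hf, Or.inl hGg⟩
          have hadj' : (F.deleteEdges (pathP n)).Adj (some (true, x - (x - a)))
              (some (true, y - (x - a))) := by
            have hx' : x - (x - a) = a := by ring
            have hy' : y - (x - a) = b := by linear_combination hab
            rw [hx', hy']; exact hadj
          refine (existsUnique_congr hB).mpr ⟨x - a, hadj', ?_⟩
          · intro g hg
            have hres := huniq true true (x - g) (y - g) a b hg hadj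
              (by linear_combination -hab)
            linear_combination -hres.1

end Core

theorem stmt12 (n : ℕ) (hn : Even n) (hpos : 0 < n)
    (F : SimpleGraph (Option (Bool × ZMod n)))
    (hreg : ∀ v, (F.neighborSet v).ncard = 2)
    (x₀ x₁ : ZMod n)
    (hinf : ∀ v, F.Adj none v ↔ v = some (false, x₀) ∨ v = some (true, x₁))
    -- `F` contains the path `P` (within one of its cycles)
    (hP : F.Adj (some (false, 0)) (some (false, obHalf n)) ∧
          F.Adj (some (false, obHalf n)) (some (true, obHalf n)) ∧
          F.Adj (some (true, obHalf n)) (some (true, 0)))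
    -- `Δ_{ij}(F − P) = Z_n \ {0, n/2}` for each (i,j) ∈ {(0,0),(0,1),(1,1)}
    (h00 : {d : ZMod n | ∃ a b : ZMod n,
      (F.deleteEdges (pathP n)).Adj (some (false, a)) (some (false, b)) ∧ a - b = d}
        = {d : ZMod n | d ≠ 0 ∧ d ≠ obHalf n})
    (h01 : {d : ZMod n | ∃ a b : ZMod n,
      (F.deleteEdges (pathP n)).Adj (some (false, a)) (some (true, b)) ∧ a - b = d}
        = {d : ZMod n | d ≠ 0 ∧ d ≠ obHalf n})
    (h11 : {d : ZMod n | ∃ a b : ZMod n,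
      (F.deleteEdges (pathP n)).Adj (some (true, a)) (some (true, b)) ∧ a - b = d}
        = {d : ZMod n | d ≠ 0 ∧ d ≠ obHalf n}) :
    -- `F*` is isomorphic to `F`, and
    Nonempty (Fswitch F ≃g F) ∧
    -- `{F + g : 1 ≤ g ≤ n/2} ∪ {F* + (n/2 + g) : 1 ≤ g ≤ n/2}` decomposes `K_{2n+1}`:
    -- every edge lies in exactly one member of the family
    (∀ u v : Option (Bool × ZMod n), u ≠ v →
      ∃! p : ℕ × Bool, (1 ≤ p.1 ∧ p.1 ≤ n / 2) ∧
        (cond p.2 (obTranslate2 F (p.1 : ZMod n))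
          (obTranslate2 (Fswitch F) ((n / 2 + p.1 : ℕ) : ZMod n))).Adj u v) := by
  haveI : NeZero n := ⟨hpos.ne'⟩
  refine ⟨obIso hpos hn F hreg hP, ?_⟩
  obtain ⟨k, hk⟩ := id hn
  have hk2 : n / 2 = k := by omega
  intro u v huv
  obtain ⟨g₀, hg₀, hg₀u⟩ :=
    obCore hpos hn F x₀ x₁ hinf hP (obDiff hn F h00 h01 h11) (obExist hn F h00 h01 h11)
      (obUniq hpos hn F hreg x₀ x₁ hinf hP h00 h01 h11) u v huv
  -- `val` computations
  have hvs : ∀ q : ℕ, 1 ≤ q → q ≤ n / 2 → ((q : ℕ) : ZMod n).val = q := by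
    intro q h1 h2
    rw [ZMod.val_natCast, Nat.mod_eq_of_lt (by omega)]
  have hvb : ∀ q : ℕ, 1 ≤ q → q ≤ n / 2 →
      ((n / 2 + q : ℕ) : ZMod n).val = if n / 2 + q < n then n / 2 + q else 0 := by
    intro q h1 h2
    rw [ZMod.val_natCast]
    split
    · exact Nat.mod_eq_of_lt (by assumption)
    · have hq : n / 2 + q = n := by omega
      rw [hq, Nat.mod_self]
  have hFH_true : ∀ q : ℕ, 1 ≤ q → q ≤ n / 2 → obFH ((q : ℕ) : ZMod n) := by
    intro q h1 h2
    unfold obFH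
    rw [hvs q h1 h2]
    exact ⟨h1, h2⟩
  have hFH_false : ∀ q : ℕ, 1 ≤ q → q ≤ n / 2 → ¬ obFH ((n / 2 + q : ℕ) : ZMod n) := by
    intro q h1 h2 hc
    unfold obFH at hc
    rw [hvb q h1 h2] at hc
    split at hc <;> omega
  -- from an index satisfying the adjacency we recover the translation element
  have key : ∀ (q : ℕ) (b : Bool), 1 ≤ q → q ≤ n / 2 →
      (cond b (obTranslate2 F ((q : ℕ) : ZMod n))
        (obTranslate2 (Fswitch F) ((n / 2 + q : ℕ) : ZMod n))).Adj u v →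
      (cond b (((q : ℕ) : ZMod n)) (((n / 2 + q : ℕ) : ZMod n))) = g₀ := by
    intro q b h1 h2 hadj
    cases b
    · exact hg₀u _ (Or.inr ⟨hFH_false q h1 h2, hadj⟩)
    · exact hg₀u _ (Or.inl ⟨hFH_true q h1 h2, hadj⟩)
  -- the translation elements determine the index
  have inj : ∀ (q : ℕ) (b : Bool) (q' : ℕ) (b' : Bool),
      1 ≤ q → q ≤ n / 2 → 1 ≤ q' → q' ≤ n / 2 →
      (cond b (((q : ℕ) : ZMod n)) (((n / 2 + q : ℕ) : ZMod n))) =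
        (cond b' (((q' : ℕ) : ZMod n)) (((n / 2 + q' : ℕ) : ZMod n))) →
      ((q, b) : ℕ × Bool) = (q', b') := by
    intro q b q' b' h1 h2 h1' h2' heq
    have hv := congrArg ZMod.val heq
    cases b <;> cases b' <;> simp only [cond] at hv ⊢
    · rw [hvb q h1 h2, hvb q' h1' h2'] at hv
      have hqq : q = q' := by split at hv <;> split at hv <;> omega
      rw [hqq]
    · rw [hvb q h1 h2, hvs q' h1' h2'] at hv
      exfalso
      split at hv <;> omega
    · rw [hvs q h1 h2, hvb q' h1' h2'] at hv
      exfalso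
      split at hv <;> omega
    · rw [hvs q h1 h2, hvs q' h1' h2'] at hv
      rw [hv]
  rcases hg₀ with ⟨hfh, hadj⟩ | ⟨hfh, hadj⟩
  · -- `g₀` in the first half : use the translate of `F`
    have hfh' : 1 ≤ g₀.val ∧ g₀.val ≤ n / 2 := hfh
    have hcast : ((g₀.val : ℕ) : ZMod n) = g₀ := ZMod.natCast_rightInverse g₀
    refine ⟨(g₀.val, true), ⟨⟨hfh'.1, hfh'.2⟩, ?_⟩, ?_⟩
    · show (obTranslate2 F ((g₀.val : ℕ) : ZMod n)).Adj u v
      rw [hcast]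
      exact hadj
    · rintro ⟨q, b⟩ ⟨⟨hq1, hq2⟩, hadj'⟩
      exact inj q b g₀.val true hq1 hq2 hfh'.1 hfh'.2 ((key q b hq1 hq2 hadj').trans hcast.symm)
  · -- `g₀` in the second half : use the translate of `F*`
    have hfh' : ¬(1 ≤ g₀.val ∧ g₀.val ≤ n / 2) := hfh
    have hlt : g₀.val < n := ZMod.val_lt g₀
    by_cases hz : g₀.val = 0
    · have hg₀0 : g₀ = 0 := (ZMod.val_eq_zero g₀).mp hz
      have hcast : ((n / 2 + n / 2 : ℕ) : ZMod n) = g₀ := by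
        rw [show n / 2 + n / 2 = n from by omega, ZMod.natCast_self, hg₀0]
      refine ⟨(n / 2, false), ⟨⟨by omega, le_refl _⟩, ?_⟩, ?_⟩
      · show (obTranslate2 (Fswitch F) ((n / 2 + n / 2 : ℕ) : ZMod n)).Adj u v
        rw [hcast]
        exact hadj
      · rintro ⟨q, b⟩ ⟨⟨hq1, hq2⟩, hadj'⟩
        exact inj q b (n / 2) false hq1 hq2 (by omega) (le_refl _)
          ((key q b hq1 hq2 hadj').trans hcast.symm)
    · have hgt : n / 2 < g₀.val := by omega
      have hcast : ((n / 2 + (g₀.val - n / 2) : ℕ) : ZMod n) = g₀ := by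
        rw [show n / 2 + (g₀.val - n / 2) = g₀.val from by omega]
        exact ZMod.natCast_rightInverse g₀
      refine ⟨(g₀.val - n / 2, false), ⟨⟨by omega, by omega⟩, ?_⟩, ?_⟩
      · show (obTranslate2 (Fswitch F) ((n / 2 + (g₀.val - n / 2) : ℕ) : ZMod n)).Adj u v
        rw [hcast]
        exact hadj
      · rintro ⟨q, b⟩ ⟨⟨hq1, hq2⟩, hadj'⟩
        exact inj q b (g₀.val - n / 2) false hq1 hq2 (by omega) (by omega)
          ((key q b hq1 hq2 hadj').trans hcast.symm)
end

section
/- Let n be even and for 1 ≤ a ≤ n/2 consider the translates P + a and P + (n/2 + a) of the path P on vertex set {0,1} × Z_n with edges {(0,0),(0,n/2)}, {(0,n/2),(1,n/2)}, {(1,n/2),(1,0)}, together with translates of the switched path P* with edges {(0,0),(1,n/2)}, {(1,n/2),(0,n/2)}, {(0,n/2),(1,0)} in the same pattern. Then every edge of the form {(i,a),(j,a+n/2)} of the complete graph on {0,1} × Z_n is contained in P + a or P* + (n/2 + a) for some 1 ≤ a ≤ n/2. -/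
/-- Translation by `g` on `{0,1} × Z_n`. -/
def shiftPair {n : ℕ} (g : ZMod n) : (Bool × ZMod n) ≃ (Bool × ZMod n) :=
  (Equiv.refl Bool).prodCongr (Equiv.addRight g)

/-- The path `P` with edges {(0,0),(0,n/2)}, {(0,n/2),(1,n/2)}, {(1,n/2),(1,0)}. -/
def pathPgraph (n : ℕ) : SimpleGraph (Bool × ZMod n) :=
  SimpleGraph.fromEdgeSet
    { s(((false : Bool), (0 : ZMod n)), (false, obHalf n)),
      s((false, obHalf n), (true, obHalf n)),
      s((true, obHalf n), ((true : Bool), (0 : ZMod n))) }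

/-- The switched path `P*` with edges {(0,0),(1,n/2)}, {(1,n/2),(0,n/2)}, {(0,n/2),(1,0)}. -/
def pathPstarGraph (n : ℕ) : SimpleGraph (Bool × ZMod n) :=
  SimpleGraph.fromEdgeSet
    { s(((false : Bool), (0 : ZMod n)), (true, obHalf n)),
      s((true, obHalf n), (false, obHalf n)),
      s((false, obHalf n), ((true : Bool), (0 : ZMod n))) }

lemma aux_hhh (n : ℕ) (hn : Even n) : obHalf n + obHalf n = 0 := by
  obtain ⟨k, hk⟩ := hn
  rw [obHalf, ← Nat.cast_add]
  have : n / 2 + n / 2 = n := by omega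
  rw [this, ZMod.natCast_self]

lemma aux_hne (n : ℕ) (hn : Even n) (hpos : 0 < n) : obHalf n ≠ 0 := by
  obtain ⟨k, hk⟩ := hn
  haveI : NeZero n := ⟨hpos.ne'⟩
  rw [obHalf, Ne, ZMod.natCast_eq_zero_iff]
  intro h
  have := Nat.le_of_dvd (by omega) h
  omega

lemma aux_exists_b (n : ℕ) (hn : Even n) (hpos : 0 < n) (a : ZMod n) :
    ∃ b : ℕ, 1 ≤ b ∧ b ≤ n / 2 ∧ ((b : ZMod n) = a ∨ (b : ZMod n) = a + obHalf n) := by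
  obtain ⟨k, hk⟩ := hn
  haveI : NeZero n := ⟨hpos.ne'⟩
  have hvlt : a.val < n := ZMod.val_lt a
  by_cases hv : a.val = 0
  · refine ⟨n / 2, by omega, le_refl _, Or.inr ?_⟩
    have : a = 0 := by rwa [← ZMod.val_eq_zero]
    rw [this, zero_add, obHalf]
  · by_cases hle : a.val ≤ n / 2
    · refine ⟨a.val, by omega, hle, Or.inl ?_⟩
      simp [ZMod.natCast_val, ZMod.cast_id]
    · refine ⟨a.val - n / 2, by omega, by omega, Or.inr ?_⟩
      have key : ((a.val - n / 2 : ℕ) : ZMod n) + obHalf n + obHalf n = a + obHalf n := by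
        rw [obHalf, ← Nat.cast_add, ← Nat.cast_add]
        have : a.val - n / 2 + n / 2 + n / 2 = a.val + n / 2 := by omega
        rw [this, Nat.cast_add]
        simp [ZMod.natCast_val, ZMod.cast_id, obHalf]
      calc ((a.val - n / 2 : ℕ) : ZMod n)
          = ((a.val - n / 2 : ℕ) : ZMod n) + (obHalf n + obHalf n) := by
            rw [aux_hhh n ⟨k, hk⟩, add_zero]
        _ = a + obHalf n := by rw [← add_assoc, key]

lemma aux_shift_apply {n : ℕ} (g x : ZMod n) (i : Bool) :
    (shiftPair g).toEmbedding (i, x) = (i, x + g) := rfl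

lemma aux_madj {n : ℕ} {G : SimpleGraph (Bool × ZMod n)} {g : ZMod n}
    {x y u v : Bool × ZMod n} (h : G.Adj x y)
    (hx : (shiftPair g).toEmbedding x = u) (hy : (shiftPair g).toEmbedding y = v) :
    (G.map (shiftPair g).toEmbedding).Adj u v := (SimpleGraph.map_adj _ _ _ _).2 ⟨x, y, h, hx, hy⟩

lemma aux_adjP1 (n : ℕ) (hn : Even n) (hpos : 0 < n) :
    (pathPgraph n).Adj (false, 0) (false, obHalf n) := by
  rw [pathPgraph, SimpleGraph.fromEdgeSet_adj]
  exact ⟨by simp, fun h => aux_hne n hn hpos (congrArg Prod.snd h).symm⟩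

lemma aux_adjP3 (n : ℕ) (hn : Even n) (hpos : 0 < n) :
    (pathPgraph n).Adj (true, obHalf n) (true, 0) := by
  rw [pathPgraph, SimpleGraph.fromEdgeSet_adj]
  exact ⟨by simp, fun h => aux_hne n hn hpos (congrArg Prod.snd h)⟩

lemma aux_adjS1 (n : ℕ) :
    (pathPstarGraph n).Adj (false, 0) (true, obHalf n) := by
  rw [pathPstarGraph, SimpleGraph.fromEdgeSet_adj]
  exact ⟨by simp, by simp⟩

lemma aux_adjS3 (n : ℕ) :
    (pathPstarGraph n).Adj (false, obHalf n) (true, 0) := by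
  rw [pathPstarGraph, SimpleGraph.fromEdgeSet_adj]
  exact ⟨by simp, by simp⟩

theorem stmt13 (n : ℕ) (hn : Even n) (hpos : 0 < n) :
    ∀ (i j : Bool) (a : ZMod n), (i, a) ≠ (j, a + obHalf n) →
      ∃ b : ℕ, 1 ≤ b ∧ b ≤ n / 2 ∧
        (((pathPgraph n).map (shiftPair (b : ZMod n)).toEmbedding).Adj
            (i, a) (j, a + obHalf n) ∨
         ((pathPstarGraph n).map (shiftPair ((n / 2 + b : ℕ) : ZMod n)).toEmbedding).Adj
            (i, a) (j, a + obHalf n)) := by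
  intro i j a _
  obtain ⟨b, hb1, hb2, hc⟩ := aux_exists_b n hn hpos a
  have h2 := aux_hhh n hn
  have hcast : ((n / 2 + b : ℕ) : ZMod n) = obHalf n + (b : ZMod n) := by
    push_cast [obHalf]; ring
  refine ⟨b, hb1, hb2, ?_⟩
  cases i <;> cases j <;> rcases hc with hc | hc
  · -- false false, b = a : P edge 1
    exact Or.inl (aux_madj (aux_adjP1 n hn hpos)
      (by rw [aux_shift_apply, hc, zero_add])
      (by rw [aux_shift_apply, hc]; exact congrArg _ (add_comm _ _)))
  · -- false false, b = a + h : P edge 1 reversed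
    refine Or.inl (aux_madj (aux_adjP1 n hn hpos).symm
      (by rw [aux_shift_apply, hc]; exact congrArg _ (by linear_combination h2)) ?_)
    rw [aux_shift_apply, hc, zero_add]
  · -- false true, b = a : P* edge 3
    refine Or.inr (aux_madj (aux_adjS3 n)
      (by rw [aux_shift_apply, hcast, hc]; exact congrArg _ (by linear_combination h2)) ?_)
    rw [aux_shift_apply, hcast, hc, zero_add]
    exact congrArg _ (add_comm _ _)
  · -- false true, b = a + h : P* edge 1
    refine Or.inr (aux_madj (aux_adjS1 n)
      (by rw [aux_shift_apply, hcast, hc]; exact congrArg _ (by linear_combination h2)) ?_)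
    rw [aux_shift_apply, hcast, hc]
    exact congrArg _ (by linear_combination h2)
  · -- true false, b = a : P* edge 1 reversed
    refine Or.inr (aux_madj (aux_adjS1 n).symm
      (by rw [aux_shift_apply, hcast, hc]; exact congrArg _ (by linear_combination h2)) ?_)
    rw [aux_shift_apply, hcast, hc, zero_add]
    exact congrArg _ (add_comm _ _)
  · -- true false, b = a + h : P* edge 3 reversed
    refine Or.inr (aux_madj (aux_adjS3 n).symm
      (by rw [aux_shift_apply, hcast, hc]; exact congrArg _ (by linear_combination h2)) ?_)
    rw [aux_shift_apply, hcast, hc]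
    exact congrArg _ (by linear_combination h2)
  · -- true true, b = a : P edge 3 reversed
    refine Or.inl (aux_madj (aux_adjP3 n hn hpos).symm
      (by rw [aux_shift_apply, hc, zero_add]) ?_)
    rw [aux_shift_apply, hc]
    exact congrArg _ (add_comm _ _)
  · -- true true, b = a + h : P edge 3
    refine Or.inl (aux_madj (aux_adjP3 n hn hpos)
      (by rw [aux_shift_apply, hc]; exact congrArg _ (by linear_combination h2)) ?_)
    rw [aux_shift_apply, hc, zero_add]
end
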